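/- (Corollary 1.) If (f*,g*) is a min-max strategy for the team in the simplified game G_s (i.e., it achieves min over G_s-strategies of max_{gᵃ} J), then (f*,g*) is a min-max strategy for the team in the original game G; furthermore the min-max values of G and G_s are identical: S^u(G)=S^u(G_s). -/

import Mathlib

open Finset
open scoped Classical BigOperators

namespace TA

/-- The primitive model of the team-vs-adversary control system (Section II of the paper):
finite horizon `T`, finite global/local state spaces, finite action spaces, independent
initial states, controlled Markovian dynamics given by transition kernels, an erasure
parameter `pe`, an observation kernel `obs` for the adversary's observation `Y_t`,
a stage cost `cost` and a communication cost `commCost`. -/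
structure Model where
  T : ℕ
  hT : 0 < T
  X0 : Type
  X1 : Type
  X2 : Type
  U1 : Type
  U2 : Type
  Ua : Type
  Y : Type
  [fX0 : Fintype X0]
  [fX1 : Fintype X1]
  [fX2 : Fintype X2]
  [fU1 : Fintype U1]
  [fU2 : Fintype U2]
  [fUa : Fintype Ua]
  [fY : Fintype Y]
  [nX0 : Nonempty X0]
  [nX1 : Nonempty X1]
  [nX2 : Nonempty X2]
  [nU1 : Nonempty U1]
  [nU2 : Nonempty U2]
  [nUa : Nonempty Ua]
  [nY : Nonempty Y]
  init0 : X0 → ℝ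
  init1 : X1 → ℝ
  init2 : X2 → ℝ
  trans0 : X0 → Ua → X0 → ℝ
  trans1 : X0 → X1 → U1 → X1 → ℝ
  trans2 : X0 → X2 → U2 → X2 → ℝ
  pe : X0 → ℝ
  obs : Option (X1 × X2) → Bool × Bool → X0 → Y → ℝ
  cost : ℕ → X0 → X1 × X2 → U1 × U2 → Ua → ℝ
  commCost : X0 → X1 × X2 → ℝ
  init0_nonneg : ∀ x, 0 ≤ init0 x
  init1_nonneg : ∀ x, 0 ≤ init1 x
  init2_nonneg : ∀ x, 0 ≤ init2 x
  init0_sum : ∑ x, init0 x = 1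
  init1_sum : ∑ x, init1 x = 1
  init2_sum : ∑ x, init2 x = 1
  trans0_nonneg : ∀ x u x', 0 ≤ trans0 x u x'
  trans1_nonneg : ∀ x0 x u x', 0 ≤ trans1 x0 x u x'
  trans2_nonneg : ∀ x0 x u x', 0 ≤ trans2 x0 x u x'
  trans0_sum : ∀ x u, ∑ x', trans0 x u x' = 1
  trans1_sum : ∀ x0 x u, ∑ x', trans1 x0 x u x' = 1
  trans2_sum : ∀ x0 x u, ∑ x', trans2 x0 x u x' = 1
  pe_nonneg : ∀ x, 0 ≤ pe x
  pe_le_one : ∀ x, pe x ≤ 1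
  obs_nonneg : ∀ z m x y, 0 ≤ obs z m x y
  obs_sum : ∀ z m x, ∑ y, obs z m x y = 1

attribute [instance] Model.fX0 Model.fX1 Model.fX2 Model.fU1 Model.fU2 Model.fUa Model.fY
attribute [instance] Model.nX0 Model.nX1 Model.nX2 Model.nU1 Model.nU2 Model.nUa Model.nY

/-- A full system trajectory over the horizon: global states, local states, communication
decisions, messages over the erasure channel, adversary observations, and all actions. -/
abbrev Traj (M : Model) :=
  (Fin M.T → M.X0) × (Fin M.T → M.X1) × (Fin M.T → M.X2) ×
  (Fin M.T → Bool) × (Fin M.T → Bool) × (Fin M.T → Option (M.X1 × M.X2)) ×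
  (Fin M.T → M.Y) × (Fin M.T → M.U1) × (Fin M.T → M.U2) × (Fin M.T → M.Ua)

def idx (M : Model) (t : ℕ) : Fin M.T := if h : t < M.T then ⟨t, h⟩ else ⟨0, M.hT⟩

variable {M : Model}

def X0v (ω : Traj M) (t : ℕ) : M.X0 := ω.1 (idx M t)
def X1v (ω : Traj M) (t : ℕ) : M.X1 := ω.2.1 (idx M t)
def X2v (ω : Traj M) (t : ℕ) : M.X2 := ω.2.2.1 (idx M t)
def M1v (ω : Traj M) (t : ℕ) : Bool := ω.2.2.2.1 (idx M t)
def M2v (ω : Traj M) (t : ℕ) : Bool := ω.2.2.2.2.1 (idx M t)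
def Zv (ω : Traj M) (t : ℕ) : Option (M.X1 × M.X2) := ω.2.2.2.2.2.1 (idx M t)
def Yv (ω : Traj M) (t : ℕ) : M.Y := ω.2.2.2.2.2.2.1 (idx M t)
def U1v (ω : Traj M) (t : ℕ) : M.U1 := ω.2.2.2.2.2.2.2.1 (idx M t)
def U2v (ω : Traj M) (t : ℕ) : M.U2 := ω.2.2.2.2.2.2.2.2.1 (idx M t)
def UAv (ω : Traj M) (t : ℕ) : M.Ua := ω.2.2.2.2.2.2.2.2.2 (idx M t)
def Mv (ω : Traj M) (t : ℕ) : Bool × Bool := (M1v ω t, M2v ω t)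

/-- The list of values `f 0, f 1, …, f (t-1)` (a "prefix" of a stochastic process). -/
def pre {α : Type _} (t : ℕ) (f : ℕ → α) : List α := (List.range t).map f

/-- Realizations of agent 1's information `I¹_t` (resp. `I¹_{t⁺}`):
`(X⁰_{1:t}, X¹_{1:t}, U¹_{1:t-1}, M_{1:t-1}, Z^er_{1:t-1}, Uᵃ_{1:t-1}, Y_{1:t-1})`. -/
abbrev Hist1 (M : Model) :=
  List M.X0 × List M.X1 × List M.U1 × List (Bool × Bool) ×
  List (Option (M.X1 × M.X2)) × List M.Ua × List M.Y

/-- Realizations of agent 2's information `I²_t` (resp. `I²_{t⁺}`). -/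
abbrev Hist2 (M : Model) :=
  List M.X0 × List M.X2 × List M.U2 × List (Bool × Bool) ×
  List (Option (M.X1 × M.X2)) × List M.Ua × List M.Y

/-- Realizations of the team's common information `C^team_t = I¹_t ∩ I²_t`. -/
abbrev HistC (M : Model) :=
  List M.X0 × List (Bool × Bool) × List (Option (M.X1 × M.X2)) × List M.Ua × List M.Y

def info1 (t : ℕ) (ω : Traj M) : Hist1 M :=
  (pre (t+1) (X0v ω), pre (t+1) (X1v ω), pre t (U1v ω), pre t (Mv ω),
   pre t (Zv ω), pre t (UAv ω), pre t (Yv ω))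

def info1p (t : ℕ) (ω : Traj M) : Hist1 M :=
  (pre (t+1) (X0v ω), pre (t+1) (X1v ω), pre t (U1v ω), pre (t+1) (Mv ω),
   pre (t+1) (Zv ω), pre t (UAv ω), pre (t+1) (Yv ω))

def info2 (t : ℕ) (ω : Traj M) : Hist2 M :=
  (pre (t+1) (X0v ω), pre (t+1) (X2v ω), pre t (U2v ω), pre t (Mv ω),
   pre t (Zv ω), pre t (UAv ω), pre t (Yv ω))

def info2p (t : ℕ) (ω : Traj M) : Hist2 M :=
  (pre (t+1) (X0v ω), pre (t+1) (X2v ω), pre t (U2v ω), pre (t+1) (Mv ω),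
   pre (t+1) (Zv ω), pre t (UAv ω), pre (t+1) (Yv ω))

/-- The team's common information `C^team_t` before communication at time `t`. -/
def teamCom (t : ℕ) (ω : Traj M) : HistC M :=
  (pre (t+1) (X0v ω), pre t (Mv ω), pre t (Zv ω), pre t (UAv ω), pre t (Yv ω))

/-- The team's common information `C^team_{t⁺}` after communication at time `t`. -/
def teamComP (t : ℕ) (ω : Traj M) : HistC M :=
  (pre (t+1) (X0v ω), pre (t+1) (Mv ω), pre (t+1) (Zv ω), pre t (UAv ω), pre (t+1) (Yv ω))

/-- A behavioral communication/control strategy pair `(f,g) = (f¹,f²,g¹,g²)` for the team: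
`fⁱ_t` selects a distribution on `{0,1}` for `Mⁱ_t` given `Iⁱ_t`; `gⁱ_t` selects a
distribution on `𝒰ⁱ` for `Uⁱ_t` given `Iⁱ_{t⁺}`. -/
structure TeamStrategy (M : Model) where
  f1 : ℕ → Hist1 M → Bool → ℝ
  f2 : ℕ → Hist2 M → Bool → ℝ
  g1 : ℕ → Hist1 M → M.U1 → ℝ
  g2 : ℕ → Hist2 M → M.U2 → ℝ
  f1_nonneg : ∀ t h m, 0 ≤ f1 t h m
  f2_nonneg : ∀ t h m, 0 ≤ f2 t h m
  g1_nonneg : ∀ t h u, 0 ≤ g1 t h u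
  g2_nonneg : ∀ t h u, 0 ≤ g2 t h u
  f1_sum : ∀ t h, ∑ m, f1 t h m = 1
  f2_sum : ∀ t h, ∑ m, f2 t h m = 1
  g1_sum : ∀ t h, ∑ u, g1 t h u = 1
  g2_sum : ∀ t h, ∑ u, g2 t h u = 1

/-- A behavioral strategy for the adversary: `gᵃ_t` selects a distribution on `𝒰ᵃ`
given the adversary's information `Iᵃ_{t⁺}`, whose realizations live in `A`. -/
structure AdvStrategy (M : Model) (A : Type _) where
  ga : ℕ → A → M.Ua → ℝ
  ga_nonneg : ∀ t a u, 0 ≤ ga t a u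
  ga_sum : ∀ t a, ∑ u, ga t a u = 1

/-- The kernel of the erasure channel: if `M^or_t = 0`, no message; if `M^or_t = 1`, the
joint local state is delivered w.p. `1 - pe(x⁰)` and erased w.p. `pe(x⁰)`. -/
noncomputable def zKer (M : Model) (x0 : M.X0) (m : Bool × Bool) (x : M.X1 × M.X2)
    (z : Option (M.X1 × M.X2)) : ℝ :=
  if m = (false, false) then (if z = none then 1 else 0)
  else
    match z with
    | none => M.pe x0
    | some x' => if x' = x then 1 - M.pe x0 else 0

/-- The probability of a full trajectory under the team strategy `σ`, the adversary
strategy `γ`, where `iap t ω` is the realization of the adversary's information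
`Iᵃ_{t⁺}` along `ω` (this parametrizes the adversary's information structure). -/
noncomputable def prob (σ : TeamStrategy M) {A : Type _} (γ : AdvStrategy M A)
    (iap : ℕ → Traj M → A) (ω : Traj M) : ℝ :=
  M.init0 (X0v ω 0) * M.init1 (X1v ω 0) * M.init2 (X2v ω 0) *
  (∏ t ∈ Finset.range M.T,
    (σ.f1 t (info1 t ω) (M1v ω t) * σ.f2 t (info2 t ω) (M2v ω t) *
     zKer M (X0v ω t) (Mv ω t) (X1v ω t, X2v ω t) (Zv ω t) *
     M.obs (Zv ω t) (Mv ω t) (X0v ω t) (Yv ω t) *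
     σ.g1 t (info1p t ω) (U1v ω t) * σ.g2 t (info2p t ω) (U2v ω t) *
     γ.ga t (iap t ω) (UAv ω t))) *
  (∏ t ∈ Finset.range (M.T - 1),
    (M.trans0 (X0v ω t) (UAv ω t) (X0v ω (t+1)) *
     M.trans1 (X0v ω t) (X1v ω t) (U1v ω t) (X1v ω (t+1)) *
     M.trans2 (X0v ω t) (X2v ω t) (U2v ω t) (X2v ω (t+1))))

/-- Probability of an event (a set of trajectories). -/
noncomputable def pr (σ : TeamStrategy M) {A : Type _} (γ : AdvStrategy M A)
    (iap : ℕ → Traj M → A) (E : Traj M → Prop) : ℝ :=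
  ∑ ω : Traj M, if E ω then prob σ γ iap ω else 0

/-- Conditional probability `P(F | E)`. -/
noncomputable def cpr (σ : TeamStrategy M) {A : Type _} (γ : AdvStrategy M A)
    (iap : ℕ → Traj M → A) (E F : Traj M → Prop) : ℝ :=
  pr σ γ iap (fun ω => F ω ∧ E ω) / pr σ γ iap E

/-- Total cost `Σ_t c_t(X⁰_t,X_t,U_t,Uᵃ_t) + ρ(X⁰_t,X_t) 1{M^or_t = 1}` along a trajectory. -/
noncomputable def totalCost (ω : Traj M) : ℝ :=
  ∑ t ∈ Finset.range M.T,
    (M.cost t (X0v ω t) (X1v ω t, X2v ω t) (U1v ω t, U2v ω t) (UAv ω t) +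
     (if (M1v ω t || M2v ω t) then M.commCost (X0v ω t) (X1v ω t, X2v ω t) else 0))

/-- Expected total cost `J((f,g),gᵃ)`. -/
noncomputable def J (σ : TeamStrategy M) {A : Type _} (γ : AdvStrategy M A)
    (iap : ℕ → Traj M → A) : ℝ :=
  ∑ ω : Traj M, prob σ γ iap ω * totalCost ω

end TA
namespace TA

/-- An abstract information structure for the adversary satisfying the structural parts of
Assumption 1: the common information `C_t = Iᵃ_t` (resp. `C_{t⁺} = Iᵃ_{t⁺}`) and the team's
common private information `D_t = P¹_t ∩ P²_t` (resp. `D_{t⁺}`) are deterministic functions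
of the trajectory; together, `(C_t, D_t)` carries exactly the team's common information
`C^team_t = I¹_t ∩ I²_t` (nestedness: `C_t ⊆ I¹_t ∩ I²_t` and `C_t ∪ D_t = C^team_t`);
and the adversary's information grows with time (monotonicity:
`Iᵃ_t ⊆ Iᵃ_{t⁺} ⊆ Iᵃ_{t+1}`, expressed as: finer information determines coarser one). -/
structure InfoStructure (M : Model) where
  C : Type
  D : Type
  infoC : ℕ → Traj M → C
  infoCp : ℕ → Traj M → C
  infoD : ℕ → Traj M → D
  infoDp : ℕ → Traj M → D
  cd_team : ∀ (t : ℕ) (ω ω' : Traj M),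
    (infoC t ω = infoC t ω' ∧ infoD t ω = infoD t ω') ↔ teamCom t ω = teamCom t ω'
  cdp_team : ∀ (t : ℕ) (ω ω' : Traj M),
    (infoCp t ω = infoCp t ω' ∧ infoDp t ω = infoDp t ω') ↔ teamComP t ω = teamComP t ω'
  mono1 : ∀ (t : ℕ) (ω ω' : Traj M), infoCp t ω = infoCp t ω' → infoC t ω = infoC t ω'
  mono2 : ∀ (t : ℕ) (ω ω' : Traj M), infoC (t+1) ω = infoC (t+1) ω' → infoCp t ω = infoCp t ω'

end TA

namespace TA

/-- A team strategy is *simplified* (game `G_s`) if each agent's communication decision at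
time `t` depends on its information only through `(Xⁱ_t, C_t, D_t)` and its control action
at time `t⁺` depends only on `(Xⁱ_t, C_{t⁺}, D_{t⁺})`; i.e., the past local states and
actions `Xⁱ_{1:t-1}, Uⁱ_{1:t-1}` are ignored. -/
def Simplified {M : Model} (IS : InfoStructure M) (σ : TeamStrategy M) : Prop :=
  (∀ (t : ℕ) (ω ω' : Traj M), X1v ω t = X1v ω' t → IS.infoC t ω = IS.infoC t ω' →
      IS.infoD t ω = IS.infoD t ω' → σ.f1 t (info1 t ω) = σ.f1 t (info1 t ω')) ∧
  (∀ (t : ℕ) (ω ω' : Traj M), X2v ω t = X2v ω' t → IS.infoC t ω = IS.infoC t ω' →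
      IS.infoD t ω = IS.infoD t ω' → σ.f2 t (info2 t ω) = σ.f2 t (info2 t ω')) ∧
  (∀ (t : ℕ) (ω ω' : Traj M), X1v ω t = X1v ω' t → IS.infoCp t ω = IS.infoCp t ω' →
      IS.infoDp t ω = IS.infoDp t ω' → σ.g1 t (info1p t ω) = σ.g1 t (info1p t ω')) ∧
  (∀ (t : ℕ) (ω ω' : Traj M), X2v ω t = X2v ω' t → IS.infoCp t ω = IS.infoCp t ω' →
      IS.infoDp t ω = IS.infoDp t ω' → σ.g2 t (info2p t ω) = σ.g2 t (info2p t ω'))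

/-- The min-max (upper) value `S^u(G)` of the original game `G`. -/
noncomputable def SuG (M : Model) (IS : InfoStructure M) : ℝ :=
  ⨅ σ : TeamStrategy M, ⨆ γ : AdvStrategy M IS.C, J σ γ IS.infoCp

/-- The min-max (upper) value `S^u(G_s)` of the simplified game `G_s`: same dynamics and
cost as `G`, but the team is restricted to simplified strategies. -/
noncomputable def SuGs (M : Model) (IS : InfoStructure M) : ℝ :=
  ⨅ σ : {σ : TeamStrategy M // Simplified IS σ}, ⨆ γ : AdvStrategy M IS.C, J σ.1 γ IS.infoCp

end TA

namespace TA


/-- Classical indicator. -/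
noncomputable def ind (p : Prop) : ℝ := if p then 1 else 0

lemma ind_of (p : Prop) (h : p) : ind p = 1 := by simp [ind, h]
lemma ind_of_not (p : Prop) (h : ¬ p) : ind p = 0 := by simp [ind, h]
lemma ind_nonneg (p : Prop) : 0 ≤ ind p := by unfold ind; split <;> norm_num
lemma ind_le_one (p : Prop) : ind p ≤ 1 := by unfold ind; split <;> norm_num
lemma ind_congr {p q : Prop} (h : p ↔ q) : ind p = ind q := by unfold ind; simp [h]
lemma ind_and (p q : Prop) : ind (p ∧ q) = ind p * ind q := by
  unfold ind
  by_cases hp : p <;> by_cases hq : q <;> simp [hp, hq]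

lemma sum_ind_eq {α : Type} [Fintype α] (a : α) (F : α → ℝ) :
    ∑ v : α, ind (a = v) * F v = F a := by
  rw [Finset.sum_eq_single a]
  · simp [ind_of]
  · intro b _ hb
    rw [ind_of_not _ (fun h => hb h.symm), zero_mul]
  · intro h; exact absurd (Finset.mem_univ a) h

lemma sum_ind_eq' {α : Type} [Fintype α] (a : α) (F : α → ℝ) :
    ∑ v : α, ind (v = a) * F v = F a := by
  rw [← sum_ind_eq a F]
  exact Finset.sum_congr rfl fun v _ => by rw [ind_congr (eq_comm)]

lemma sum_ind_one {α : Type} [Fintype α] (a : α) : ∑ v : α, ind (v = a) = 1 := by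
  have := sum_ind_eq' a (fun _ => (1:ℝ))
  simpa using this

section Helpers
variable {ι α β : Type} [Fintype ι] [DecidableEq ι] [Fintype α] [Fintype β]

lemma sum_fiber_split (G : (ι → α) → ℝ) (j : ι) :
    ∑ f : ι → α, G f = ∑ v : α, ∑ f : ι → α, ind (f j = v) * G f := by
  rw [Finset.sum_comm]
  refine Finset.sum_congr rfl fun f _ => ?_
  exact (sum_ind_eq (f j) (fun _ => G f)).symm

lemma fiber_trans (G : (ι → α) → ℝ) (j : ι) (a b : α)
    (hab : ∀ f, f j = a → G (Function.update f j b) = G f) :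
    (∑ f : ι → α, ind (f j = a) * G f) = ∑ f : ι → α, ind (f j = b) * G f := by
  have h1 : ∀ (c : α) (H : (ι → α) → ℝ),
      (∑ f : ι → α, ind (f j = c) * H f) = ∑ f ∈ Finset.univ.filter (fun f : ι → α => f j = c), H f := by
    intro c H
    rw [Finset.sum_filter]
    refine Finset.sum_congr rfl fun f _ => ?_
    by_cases h : f j = c
    · rw [if_pos h, ind_of _ h, one_mul]
    · rw [if_neg h, ind_of_not _ h, zero_mul]
  rw [h1, h1]
  refine Finset.sum_nbij' (fun f => Function.update f j b) (fun f => Function.update f j a)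
    ?_ ?_ ?_ ?_ ?_
  · intro f hf; simp
  · intro f hf; simp
  · intro f hf
    simp only [Finset.mem_filter, Finset.mem_univ, true_and] at hf
    simp [Function.update_idem, ← hf, Function.update_eq_self]
  · intro f hf
    simp only [Finset.mem_filter, Finset.mem_univ, true_and] at hf
    simp [Function.update_idem, ← hf, Function.update_eq_self]
  · intro f hf
    simp only [Finset.mem_filter, Finset.mem_univ, true_and] at hf
    exact (hab f hf).symm

lemma sum_fiber_inv (G : (ι → α) → ℝ) (j : ι)
    (hG : ∀ f v, G (Function.update f j v) = G f) (a b : α) :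
    (∑ f : ι → α, ind (f j = a) * G f) = ∑ f : ι → α, ind (f j = b) * G f :=
  fiber_trans G j a b (fun f _ => hG f b)

lemma sum_update (F : (ι → α) → ℝ) (j : ι) :
    ∑ v : α, ∑ f : ι → α, F (Function.update f j v)
      = (Fintype.card α : ℝ) * ∑ f : ι → α, F f := by
  have key : ∀ v : α, ∑ f : ι → α, F (Function.update f j v)
      = (Fintype.card α : ℝ) * ∑ f : ι → α, ind (f j = v) * F f := by
    intro v
    rw [sum_fiber_split (fun f => F (Function.update f j v)) j]
    have h2 : ∀ w : α, (∑ f : ι → α, ind (f j = w) * F (Function.update f j v))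
        = ∑ f : ι → α, ind (f j = v) * F f := by
      intro w
      rw [fiber_trans (fun f => F (Function.update f j v)) j w v
        (fun f _ => by simp [Function.update_idem])]
      refine Finset.sum_congr rfl fun f _ => ?_
      by_cases h : f j = v
      · rw [ind_of _ h]
        have : Function.update f j v = f := by rw [← h]; exact Function.update_eq_self j f
        rw [this]
      · rw [ind_of_not _ h]; ring
    rw [Finset.sum_congr rfl fun w _ => h2 w]
    simp [Finset.sum_const, Finset.card_univ, mul_comm]
  rw [Finset.sum_congr rfl fun v _ => key v, ← Finset.mul_sum, ← sum_fiber_split]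

lemma sum_peel [Nonempty α] (q g : (ι → α) → ℝ) (j : ι)
    (hq : ∀ f v, q (Function.update f j v) = q f)
    (hg : ∀ f, ∑ v : α, g (Function.update f j v) = 1) :
    ∑ f : ι → α, q f * g f = (Fintype.card α : ℝ)⁻¹ * ∑ f : ι → α, q f := by
  have hcard : (0:ℝ) < (Fintype.card α : ℝ) := by
    have : 0 < Fintype.card α := Fintype.card_pos
    exact_mod_cast this
  have h1 : (Fintype.card α : ℝ) * ∑ f : ι → α, q f * g f = ∑ f : ι → α, q f := by
    rw [← sum_update (fun f => q f * g f) j, Finset.sum_comm]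
    refine Finset.sum_congr rfl fun f _ => ?_
    have h3 : ∀ v, q (Function.update f j v) * g (Function.update f j v)
        = q f * g (Function.update f j v) := fun v => by rw [hq]
    rw [Finset.sum_congr rfl fun v _ => h3 v, ← Finset.mul_sum, hg, mul_one]
  field_simp
  linarith [h1]

lemma pin_fst_split (G : (ι → α × β) → ℝ) (j : ι) (x : α) :
    (∑ f : ι → α × β, ind ((f j).1 = x) * G f)
      = ∑ v : α × β, ind (v.1 = x) * ∑ f : ι → α × β, ind (f j = v) * G f := by
  have h : ∀ v : α × β, ind (v.1 = x) * ∑ f : ι → α × β, ind (f j = v) * G f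
      = ∑ f : ι → α × β, ind (v = f j) * (ind ((f j).1 = x) * G f) := by
    intro v
    rw [Finset.mul_sum]
    refine Finset.sum_congr rfl fun f _ => ?_
    by_cases h1 : v = f j
    · subst h1
      rw [ind_of (f j = f j) rfl]
      ring
    · rw [ind_of_not (f j = v) (fun h => h1 h.symm), ind_of_not (v = f j) h1]
      ring
  rw [Finset.sum_congr rfl fun v _ => h v, Finset.sum_comm]
  refine Finset.sum_congr rfl fun f _ => ?_
  exact (sum_ind_eq' (f j) (fun _ => ind ((f j).1 = x) * G f)).symm

lemma card_filter_fst (x : α) :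
    (∑ v : α × β, ind (v.1 = x)) = (Fintype.card β : ℝ) := by
  rw [Fintype.sum_prod_type]
  have h0 : ∀ a : α, (∑ _b : β, ind (a = x)) = ind (a = x) * (Fintype.card β : ℝ) := by
    intro a
    rw [Finset.sum_const, Finset.card_univ, nsmul_eq_mul, mul_comm]
  rw [Finset.sum_congr rfl fun a _ => h0 a, ← Finset.sum_mul, sum_ind_one, one_mul]

lemma sum_pin_fst [Nonempty α] [Nonempty β] (G : (ι → α × β) → ℝ) (j : ι)
    (hG : ∀ f v, G (Function.update f j v) = G f) (x : α) :
    (∑ f : ι → α × β, ind ((f j).1 = x) * G f)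
      = (Fintype.card α : ℝ)⁻¹ * ∑ f : ι → α × β, G f := by
  classical
  obtain ⟨v₀⟩ : Nonempty (α × β) := inferInstance
  have hWv : ∀ v : α × β, (∑ f : ι → α × β, ind (f j = v) * G f)
      = ∑ f : ι → α × β, ind (f j = v₀) * G f := fun v => sum_fiber_inv G j hG v v₀
  set W : ℝ := ∑ f : ι → α × β, ind (f j = v₀) * G f with hW
  have hL : (∑ f : ι → α × β, ind ((f j).1 = x) * G f) = (Fintype.card β : ℝ) * W := by
    rw [pin_fst_split, Finset.sum_congr rfl fun v _ => by rw [hWv v], ← Finset.sum_mul,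
      card_filter_fst]
  have hR : (∑ f : ι → α × β, G f) = ((Fintype.card α : ℝ) * (Fintype.card β : ℝ)) * W := by
    rw [sum_fiber_split G j, Finset.sum_congr rfl fun v _ => hWv v, Finset.sum_const,
      Finset.card_univ, nsmul_eq_mul, Fintype.card_prod]
    push_cast
    ring
  rw [hL, hR]
  have hcard : ((Fintype.card α : ℝ)) ≠ 0 := by
    have : 0 < Fintype.card α := Fintype.card_pos
    positivity
  field_simp

lemma sum_pin_snd [Nonempty β] (G : (ι → α × β) → ℝ) (j : ι)
    (hG : ∀ f b, G (Function.update f j ((f j).1, b)) = G f) (x : α) (u : β) :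
    (∑ f : ι → α × β, ind (f j = (x, u)) * G f)
      = (Fintype.card β : ℝ)⁻¹ * ∑ f : ι → α × β, ind ((f j).1 = x) * G f := by
  classical
  have key : ∀ u' : β, (∑ f : ι → α × β, ind (f j = (x, u')) * G f)
      = ∑ f : ι → α × β, ind (f j = (x, u)) * G f := by
    intro u'
    refine fiber_trans G j (x, u') (x, u) ?_
    intro f hf
    have h1 : (f j).1 = x := by rw [hf]
    rw [← h1]
    exact hG f u
  have hsplit : (∑ f : ι → α × β, ind ((f j).1 = x) * G f)
      = (Fintype.card β : ℝ) * ∑ f : ι → α × β, ind (f j = (x, u)) * G f := by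
    rw [pin_fst_split G j x]
    have h2 : ∀ v : α × β, ind (v.1 = x) * (∑ f : ι → α × β, ind (f j = v) * G f)
        = ind (v.1 = x) * ∑ f : ι → α × β, ind (f j = (x,u)) * G f := by
      intro v
      by_cases h : v.1 = x
      · have hv : v = (x, v.2) := by rw [← h]
        rw [hv]
        rw [key v.2]
      · rw [ind_of_not _ h]; ring
    rw [Finset.sum_congr rfl fun v _ => h2 v, ← Finset.sum_mul, card_filter_fst]
  rw [hsplit]
  have hcard : ((Fintype.card β : ℝ)) ≠ 0 := by
    have : 0 < Fintype.card β := Fintype.card_pos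
    positivity
  field_simp

end Helpers

end TA

namespace TA

section PreLemmas
variable {α : Type}

lemma pre_length (n : ℕ) (f : ℕ → α) : (pre n f).length = n := by
  simp [pre]

lemma pre_succ (n : ℕ) (f : ℕ → α) : pre (n+1) f = pre n f ++ [f n] := by
  simp [pre, List.range_succ]

lemma pre_eq_iff {n : ℕ} {f g : ℕ → α} : pre n f = pre n g ↔ ∀ s < n, f s = g s := by
  constructor
  · intro h s hs
    have h1 : (pre n f)[s]? = (pre n g)[s]? := by rw [h]
    simp [pre, List.getElem?_map, List.getElem?_range, hs] at h1
    exact h1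
  · intro h
    apply List.ext_getElem
    · simp [pre]
    · intro i h1 h2
      simp only [pre, List.getElem_map, List.getElem_range]
      exact h i (by simpa [pre] using h1)

lemma pre_getD (f : ℕ → α) (n k : ℕ) (h : k < n) (d : α) : (pre n f).getD k d = f k := by
  rw [List.getD_eq_getElem?_getD]
  simp [pre, List.getElem?_map, List.getElem?_range, h]

end PreLemmas
end TA


namespace TA

section Coord
variable {M : Model}

/-- Agent 1's private coordinate process. -/
abbrev Om1 (M : Model) := Fin M.T → M.X1 × M.U1
/-- Agent 2's private coordinate process. -/
abbrev Om2 (M : Model) := Fin M.T → M.X2 × M.U2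

/-- All coordinates except agent 1's private ones. -/
abbrev Rest1 (M : Model) :=
  (Fin M.T → M.X0) × (Fin M.T → M.X2) × (Fin M.T → Bool) × (Fin M.T → Bool) ×
  (Fin M.T → Option (M.X1 × M.X2)) × (Fin M.T → M.Y) × (Fin M.T → M.U2) × (Fin M.T → M.Ua)

/-- All coordinates except agent 2's private ones. -/
abbrev Rest2 (M : Model) :=
  (Fin M.T → M.X0) × (Fin M.T → M.X1) × (Fin M.T → Bool) × (Fin M.T → Bool) ×
  (Fin M.T → Option (M.X1 × M.X2)) × (Fin M.T → M.Y) × (Fin M.T → M.U1) × (Fin M.T → M.Ua)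

def asm1 (p : Om1 M) (ρ : Rest1 M) : Traj M :=
  (ρ.1, fun i => (p i).1, ρ.2.1, ρ.2.2.1, ρ.2.2.2.1, ρ.2.2.2.2.1, ρ.2.2.2.2.2.1,
   fun i => (p i).2, ρ.2.2.2.2.2.2.1, ρ.2.2.2.2.2.2.2)

def asm2 (p : Om2 M) (ρ : Rest2 M) : Traj M :=
  (ρ.1, ρ.2.1, fun i => (p i).1, ρ.2.2.1, ρ.2.2.2.1, ρ.2.2.2.2.1, ρ.2.2.2.2.2.1,
   ρ.2.2.2.2.2.2.1, fun i => (p i).2, ρ.2.2.2.2.2.2.2)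

def rest1Of (ω : Traj M) : Rest1 M :=
  (ω.1, ω.2.2.1, ω.2.2.2.1, ω.2.2.2.2.1, ω.2.2.2.2.2.1, ω.2.2.2.2.2.2.1,
   ω.2.2.2.2.2.2.2.2.1, ω.2.2.2.2.2.2.2.2.2)

def rest2Of (ω : Traj M) : Rest2 M :=
  (ω.1, ω.2.1, ω.2.2.2.1, ω.2.2.2.2.1, ω.2.2.2.2.2.1, ω.2.2.2.2.2.2.1,
   ω.2.2.2.2.2.2.2.1, ω.2.2.2.2.2.2.2.2.2)

def om1Of (ω : Traj M) : Om1 M := fun i => (ω.2.1 i, ω.2.2.2.2.2.2.2.1 i)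
def om2Of (ω : Traj M) : Om2 M := fun i => (ω.2.2.1 i, ω.2.2.2.2.2.2.2.2.1 i)

def subst1 (ω : Traj M) (p : Om1 M) : Traj M := asm1 p (rest1Of ω)
def subst2 (ω : Traj M) (p : Om2 M) : Traj M := asm2 p (rest2Of ω)

-- definitional sanity checks
example (ω : Traj M) (p : Om1 M) (t : ℕ) : X0v (subst1 ω p) t = X0v ω t := rfl
example (ω : Traj M) (p : Om1 M) (t : ℕ) : teamCom t (subst1 ω p) = teamCom t ω := rfl
example (ω : Traj M) (p : Om1 M) (t : ℕ) : teamComP t (subst1 ω p) = teamComP t ω := rfl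
example (ω : Traj M) (p : Om1 M) (t : ℕ) : X1v (subst1 ω p) t = (p (idx M t)).1 := rfl
example (ω : Traj M) (p : Om1 M) (t : ℕ) : U1v (subst1 ω p) t = (p (idx M t)).2 := rfl
example (p q : Om1 M) (ρ : Rest1 M) (t : ℕ) : teamCom t (asm1 p ρ) = teamCom t (asm1 q ρ) := rfl
example (p q : Om1 M) (ρ : Rest1 M) (t : ℕ) : teamComP t (asm1 p ρ) = teamComP t (asm1 q ρ) := rfl
example (p q : Om1 M) (ρ : Rest1 M) (t : ℕ) : info2 t (asm1 p ρ) = info2 t (asm1 q ρ) := rfl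
example (p q : Om1 M) (ρ : Rest1 M) (t : ℕ) : info2p t (asm1 p ρ) = info2p t (asm1 q ρ) := rfl
example (p : Om1 M) (ρ : Rest1 M) : subst1 (asm1 p ρ) p = asm1 p ρ := rfl
example (ω : Traj M) (p : Om1 M) (q : Om1 M) : subst1 (subst1 ω q) p = subst1 ω p := rfl
example (p q : Om2 M) (ρ : Rest2 M) (t : ℕ) : teamCom t (asm2 p ρ) = teamCom t (asm2 q ρ) := rfl
example (p q : Om2 M) (ρ : Rest2 M) (t : ℕ) : info1 t (asm2 p ρ) = info1 t (asm2 q ρ) := rfl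
example (ω : Traj M) (p : Om2 M) (t : ℕ) : X2v (subst2 ω p) t = (p (idx M t)).1 := rfl
example (ω : Traj M) (p : Om2 M) (t : ℕ) : U2v (subst2 ω p) t = (p (idx M t)).2 := rfl

lemma sum_traj1 (F : Traj M → ℝ) :
    ∑ ω : Traj M, F ω = ∑ ρ : Rest1 M, ∑ p : Om1 M, F (asm1 p ρ) := by
  have hbij : Function.Bijective (fun v : Rest1 M × Om1 M => asm1 v.2 v.1) := by
    constructor
    · intro a b h
      have h1 : (rest1Of (asm1 a.2 a.1), om1Of (asm1 a.2 a.1))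
          = (rest1Of (asm1 b.2 b.1), om1Of (asm1 b.2 b.1)) := by
        simp only at h; rw [h]
      have ha : (rest1Of (asm1 a.2 a.1), om1Of (asm1 a.2 a.1)) = (a.1, a.2) := rfl
      have hb : (rest1Of (asm1 b.2 b.1), om1Of (asm1 b.2 b.1)) = (b.1, b.2) := rfl
      rw [ha, hb] at h1
      exact Prod.ext (congrArg Prod.fst h1) (congrArg Prod.snd h1)
    · intro ω
      exact ⟨(rest1Of ω, om1Of ω), rfl⟩
  have h := Fintype.sum_bijective _ hbij (fun v : Rest1 M × Om1 M => F (asm1 v.2 v.1)) F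
    (fun v => rfl)
  rw [← h, Fintype.sum_prod_type]

lemma sum_traj2 (F : Traj M → ℝ) :
    ∑ ω : Traj M, F ω = ∑ ρ : Rest2 M, ∑ p : Om2 M, F (asm2 p ρ) := by
  have hbij : Function.Bijective (fun v : Rest2 M × Om2 M => asm2 v.2 v.1) := by
    constructor
    · intro a b h
      have h1 : (rest2Of (asm2 a.2 a.1), om2Of (asm2 a.2 a.1))
          = (rest2Of (asm2 b.2 b.1), om2Of (asm2 b.2 b.1)) := by
        simp only at h; rw [h]
      have ha : (rest2Of (asm2 a.2 a.1), om2Of (asm2 a.2 a.1)) = (a.1, a.2) := rfl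
      have hb : (rest2Of (asm2 b.2 b.1), om2Of (asm2 b.2 b.1)) = (b.1, b.2) := rfl
      rw [ha, hb] at h1
      exact Prod.ext (congrArg Prod.fst h1) (congrArg Prod.snd h1)
    · intro ω
      exact ⟨(rest2Of ω, om2Of ω), rfl⟩
  have h := Fintype.sum_bijective _ hbij (fun v : Rest2 M × Om2 M => F (asm2 v.2 v.1)) F
    (fun v => rfl)
  rw [← h, Fintype.sum_prod_type]

/-- A whole time-slice of the system. -/
abbrev Sl (M : Model) :=
  M.X0 × M.X1 × M.X2 × Bool × Bool × Option (M.X1 × M.X2) × M.Y × M.U1 × M.U2 × M.Ua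

def ofSl (F : Fin M.T → Sl M) : Traj M :=
  (fun i => (F i).1, fun i => (F i).2.1, fun i => (F i).2.2.1, fun i => (F i).2.2.2.1,
   fun i => (F i).2.2.2.2.1, fun i => (F i).2.2.2.2.2.1, fun i => (F i).2.2.2.2.2.2.1,
   fun i => (F i).2.2.2.2.2.2.2.1, fun i => (F i).2.2.2.2.2.2.2.2.1,
   fun i => (F i).2.2.2.2.2.2.2.2.2)

def toSl (ω : Traj M) : Fin M.T → Sl M := fun i =>
  (ω.1 i, ω.2.1 i, ω.2.2.1 i, ω.2.2.2.1 i, ω.2.2.2.2.1 i, ω.2.2.2.2.2.1 i,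
   ω.2.2.2.2.2.2.1 i, ω.2.2.2.2.2.2.2.1 i, ω.2.2.2.2.2.2.2.2.1 i, ω.2.2.2.2.2.2.2.2.2 i)

example (F : Fin M.T → Sl M) : toSl (ofSl F) = F := funext fun i => rfl
example (ω : Traj M) : ofSl (toSl ω) = ω := rfl

lemma sum_traj_sl (F : Traj M → ℝ) :
    ∑ ω : Traj M, F ω = ∑ G : Fin M.T → Sl M, F (ofSl G) := by
  have hbij : Function.Bijective (ofSl : (Fin M.T → Sl M) → Traj M) := by
    constructor
    · intro a b h
      have : toSl (ofSl a) = toSl (ofSl b) := by rw [h]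
      exact this
    · intro ω; exact ⟨toSl ω, rfl⟩
  exact (Fintype.sum_bijective _ hbij (fun G => F (ofSl G)) F (fun v => rfl)).symm

end Coord
end TA


namespace TA
noncomputable section Factors
variable {M : Model}

def zeta1 (M : Model) (z : Option (M.X1 × M.X2)) (m : Bool × Bool) (x : M.X1) : ℝ :=
  if m = (false, false) then 1 else
    match z with
    | none => 1
    | some w => ind (w.1 = x)

def zeta2 (M : Model) (z : Option (M.X1 × M.X2)) (m : Bool × Bool) (x : M.X2) : ℝ :=
  if m = (false, false) then 1 else
    match z with
    | none => 1
    | some w => ind (w.2 = x)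

def chiF (M : Model) (x0 : M.X0) (m : Bool × Bool) (z : Option (M.X1 × M.X2)) : ℝ :=
  if m = (false, false) then ind (z = none) else
    match z with
    | none => M.pe x0
    | some _ => 1 - M.pe x0

lemma zeta1_nonneg (z : Option (M.X1 × M.X2)) (m : Bool × Bool) (x : M.X1) :
    0 ≤ zeta1 M z m x := by
  unfold zeta1
  by_cases hm : m = (false, false)
  · rw [if_pos hm]; norm_num
  · rw [if_neg hm]
    cases z with
    | none => norm_num
    | some w => exact ind_nonneg _

lemma zeta1_le_one (z : Option (M.X1 × M.X2)) (m : Bool × Bool) (x : M.X1) :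
    zeta1 M z m x ≤ 1 := by
  unfold zeta1
  by_cases hm : m = (false, false)
  · rw [if_pos hm]
  · rw [if_neg hm]
    cases z with
    | none => norm_num
    | some w => exact ind_le_one _

lemma zeta2_nonneg (z : Option (M.X1 × M.X2)) (m : Bool × Bool) (x : M.X2) :
    0 ≤ zeta2 M z m x := by
  unfold zeta2
  by_cases hm : m = (false, false)
  · rw [if_pos hm]; norm_num
  · rw [if_neg hm]
    cases z with
    | none => norm_num
    | some w => exact ind_nonneg _

lemma zeta2_le_one (z : Option (M.X1 × M.X2)) (m : Bool × Bool) (x : M.X2) :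
    zeta2 M z m x ≤ 1 := by
  unfold zeta2
  by_cases hm : m = (false, false)
  · rw [if_pos hm]
  · rw [if_neg hm]
    cases z with
    | none => norm_num
    | some w => exact ind_le_one _

lemma chiF_nonneg (x0 : M.X0) (m : Bool × Bool) (z : Option (M.X1 × M.X2)) :
    0 ≤ chiF M x0 m z := by
  unfold chiF
  by_cases hm : m = (false, false)
  · rw [if_pos hm]; exact ind_nonneg _
  · rw [if_neg hm]
    cases z with
    | none => exact M.pe_nonneg x0
    | some w =>
      show (0:ℝ) ≤ 1 - M.pe x0
      linarith [M.pe_le_one x0]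

lemma chiF_le_one (x0 : M.X0) (m : Bool × Bool) (z : Option (M.X1 × M.X2)) :
    chiF M x0 m z ≤ 1 := by
  unfold chiF
  by_cases hm : m = (false, false)
  · rw [if_pos hm]; exact ind_le_one _
  · rw [if_neg hm]
    cases z with
    | none => exact M.pe_le_one x0
    | some w =>
      show (1:ℝ) - M.pe x0 ≤ 1
      linarith [M.pe_nonneg x0]

lemma zKer_split (x0 : M.X0) (m : Bool × Bool) (x : M.X1 × M.X2) (z : Option (M.X1 × M.X2)) :
    zKer M x0 m x z = chiF M x0 m z * zeta1 M z m x.1 * zeta2 M z m x.2 := by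
  unfold zKer chiF zeta1 zeta2
  by_cases hm : m = (false, false)
  · simp only [hm, if_true]
    cases z with
    | none => simp [ind]
    | some w => simp [ind]
  · simp only [if_neg hm]
    cases z with
    | none =>
      show M.pe x0 = M.pe x0 * 1 * 1
      ring
    | some w =>
      show (if w = x then 1 - M.pe x0 else 0) = (1 - M.pe x0) * ind (w.1 = x.1) * ind (w.2 = x.2)
      by_cases h : w = x
      · subst h
        rw [if_pos rfl, ind_of _ rfl, ind_of _ rfl]
        ring
      · rw [if_neg h]
        by_cases h1 : w.1 = x.1
        · have h2 : ¬ (w.2 = x.2) := fun h2 => h (Prod.ext h1 h2)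
          rw [ind_of_not _ h2]
          ring
        · rw [ind_of_not _ h1]
          ring

lemma zKer_sum (x0 : M.X0) (m : Bool × Bool) (x : M.X1 × M.X2) :
    ∑ z : Option (M.X1 × M.X2), zKer M x0 m x z = 1 := by
  rw [Fintype.sum_option]
  unfold zKer
  by_cases hm : m = (false, false)
  · simp only [hm, if_true]
    have h1 : ∀ w : M.X1 × M.X2,
        (if (some w : Option (M.X1 × M.X2)) = none then (1:ℝ) else 0) = 0 := by
      intro w; simp
    rw [Finset.sum_congr rfl fun w _ => h1 w]
    simp
  · simp only [if_neg hm]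
    have h2 : ∀ w : M.X1 × M.X2,
        (match (some w : Option (M.X1 × M.X2)) with
          | none => M.pe x0
          | some x' => if x' = x then 1 - M.pe x0 else 0)
        = if w = x then 1 - M.pe x0 else 0 := fun w => rfl
    rw [Finset.sum_congr rfl fun w _ => h2 w, Finset.sum_ite_eq' Finset.univ x]
    show M.pe x0 + (if x ∈ Finset.univ then 1 - M.pe x0 else 0) = 1
    simp

lemma zKer_le_one (x0 : M.X0) (m : Bool × Bool) (x : M.X1 × M.X2) (z : Option (M.X1 × M.X2)) :
    zKer M x0 m x z ≤ 1 := by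
  rw [zKer_split]
  have h1 := chiF_nonneg (M := M) x0 m z
  have h2 := chiF_le_one (M := M) x0 m z
  have h3 := zeta1_nonneg (M := M) z m x.1
  have h4 := zeta1_le_one (M := M) z m x.1
  have h5 := zeta2_nonneg (M := M) z m x.2
  have h6 := zeta2_le_one (M := M) z m x.2
  exact mul_le_one₀ (mul_le_one₀ h2 h3 h4) h5 h6

lemma zKer_nonneg' (x0 : M.X0) (m : Bool × Bool) (x : M.X1 × M.X2) (z : Option (M.X1 × M.X2)) :
    0 ≤ zKer M x0 m x z := by
  rw [zKer_split]
  exact mul_nonneg (mul_nonneg (chiF_nonneg _ _ _) (zeta1_nonneg _ _ _)) (zeta2_nonneg _ _ _)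

end Factors
end TA


namespace TA
noncomputable section Core
variable {M : Model}

lemma idx_val (s : ℕ) (h : s < M.T) : (idx M s : ℕ) = s := by simp [idx, h]

lemma idx_ne (s t : ℕ) (hs : s < M.T) (ht : t < M.T) (h : s ≠ t) : idx M s ≠ idx M t := by
  intro he
  apply h
  have := congrArg (Fin.val) he
  rwa [idx_val s hs, idx_val t ht] at this

-- strategy bounds
lemma f1_nonneg (σ : TeamStrategy M) (t h m) : 0 ≤ σ.f1 t h m := σ.f1_nonneg t h m
lemma f1_le_one (σ : TeamStrategy M) (t h m) : σ.f1 t h m ≤ 1 := by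
  have := σ.f1_sum t h
  calc σ.f1 t h m ≤ ∑ m', σ.f1 t h m' :=
        Finset.single_le_sum (fun m' _ => σ.f1_nonneg t h m') (Finset.mem_univ m)
    _ = 1 := this
lemma f2_le_one (σ : TeamStrategy M) (t h m) : σ.f2 t h m ≤ 1 := by
  have := σ.f2_sum t h
  calc σ.f2 t h m ≤ ∑ m', σ.f2 t h m' :=
        Finset.single_le_sum (fun m' _ => σ.f2_nonneg t h m') (Finset.mem_univ m)
    _ = 1 := this
lemma g1_le_one (σ : TeamStrategy M) (t h u) : σ.g1 t h u ≤ 1 := by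
  have := σ.g1_sum t h
  calc σ.g1 t h u ≤ ∑ u', σ.g1 t h u' :=
        Finset.single_le_sum (fun u' _ => σ.g1_nonneg t h u') (Finset.mem_univ u)
    _ = 1 := this
lemma g2_le_one (σ : TeamStrategy M) (t h u) : σ.g2 t h u ≤ 1 := by
  have := σ.g2_sum t h
  calc σ.g2 t h u ≤ ∑ u', σ.g2 t h u' :=
        Finset.single_le_sum (fun u' _ => σ.g2_nonneg t h u') (Finset.mem_univ u)
    _ = 1 := this
lemma ga_le_one {A : Type _} (γ : AdvStrategy M A) (t a u) : γ.ga t a u ≤ 1 := by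
  have := γ.ga_sum t a
  calc γ.ga t a u ≤ ∑ u', γ.ga t a u' :=
        Finset.single_le_sum (fun u' _ => γ.ga_nonneg t a u') (Finset.mem_univ u)
    _ = 1 := this
lemma init0_le_one (x : M.X0) : M.init0 x ≤ 1 := by
  have := M.init0_sum
  calc M.init0 x ≤ ∑ x', M.init0 x' :=
        Finset.single_le_sum (fun x' _ => M.init0_nonneg x') (Finset.mem_univ x)
    _ = 1 := this
lemma init1_le_one (x : M.X1) : M.init1 x ≤ 1 := by
  have := M.init1_sum
  calc M.init1 x ≤ ∑ x', M.init1 x' :=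
        Finset.single_le_sum (fun x' _ => M.init1_nonneg x') (Finset.mem_univ x)
    _ = 1 := this
lemma init2_le_one (x : M.X2) : M.init2 x ≤ 1 := by
  have := M.init2_sum
  calc M.init2 x ≤ ∑ x', M.init2 x' :=
        Finset.single_le_sum (fun x' _ => M.init2_nonneg x') (Finset.mem_univ x)
    _ = 1 := this
lemma trans0_le_one (x u x') : M.trans0 x u x' ≤ 1 := by
  have := M.trans0_sum x u
  calc M.trans0 x u x' ≤ ∑ y, M.trans0 x u y :=
        Finset.single_le_sum (fun y _ => M.trans0_nonneg x u y) (Finset.mem_univ x')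
    _ = 1 := this
lemma trans1_le_one (x0 x u x') : M.trans1 x0 x u x' ≤ 1 := by
  have := M.trans1_sum x0 x u
  calc M.trans1 x0 x u x' ≤ ∑ y, M.trans1 x0 x u y :=
        Finset.single_le_sum (fun y _ => M.trans1_nonneg x0 x u y) (Finset.mem_univ x')
    _ = 1 := this
lemma trans2_le_one (x0 x u x') : M.trans2 x0 x u x' ≤ 1 := by
  have := M.trans2_sum x0 x u
  calc M.trans2 x0 x u x' ≤ ∑ y, M.trans2 x0 x u y :=
        Finset.single_le_sum (fun y _ => M.trans2_nonneg x0 x u y) (Finset.mem_univ x')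
    _ = 1 := this
lemma obs_le_one (z m x y) : M.obs z m x y ≤ 1 := by
  have := M.obs_sum z m x
  calc M.obs z m x y ≤ ∑ y', M.obs z m x y' :=
        Finset.single_le_sum (fun y' _ => M.obs_nonneg z m x y') (Finset.mem_univ y)
    _ = 1 := this

variable (IS : InfoStructure M)

def stepF1 (σ : TeamStrategy M) (t : ℕ) (ω : Traj M) : ℝ :=
  σ.f1 t (info1 t ω) (M1v ω t) * zeta1 M (Zv ω t) (Mv ω t) (X1v ω t) *
    σ.g1 t (info1p t ω) (U1v ω t)

def stepF2 (σ : TeamStrategy M) (t : ℕ) (ω : Traj M) : ℝ :=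
  σ.f2 t (info2 t ω) (M2v ω t) * zeta2 M (Zv ω t) (Mv ω t) (X2v ω t) *
    σ.g2 t (info2p t ω) (U2v ω t)

def stepC (γ : AdvStrategy M IS.C) (t : ℕ) (ω : Traj M) : ℝ :=
  chiF M (X0v ω t) (Mv ω t) (Zv ω t) * M.obs (Zv ω t) (Mv ω t) (X0v ω t) (Yv ω t) *
    γ.ga t (IS.infoCp t ω) (UAv ω t)

def tr0 (t : ℕ) (ω : Traj M) : ℝ := M.trans0 (X0v ω t) (UAv ω t) (X0v ω (t+1))
def tr1 (t : ℕ) (ω : Traj M) : ℝ := M.trans1 (X0v ω t) (X1v ω t) (U1v ω t) (X1v ω (t+1))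
def tr2 (t : ℕ) (ω : Traj M) : ℝ := M.trans2 (X0v ω t) (X2v ω t) (U2v ω t) (X2v ω (t+1))

def probT (σ : TeamStrategy M) (γ : AdvStrategy M IS.C) (t : ℕ) (ω : Traj M) : ℝ :=
  M.init0 (X0v ω 0) * M.init1 (X1v ω 0) * M.init2 (X2v ω 0) *
  (∏ s ∈ Finset.range (t+1), stepF1 σ s ω * stepF2 σ s ω * stepC IS γ s ω) *
  (∏ s ∈ Finset.range t, tr0 s ω * tr1 s ω * tr2 s ω)

lemma prob_eq_probT (σ : TeamStrategy M) (γ : AdvStrategy M IS.C) (ω : Traj M) :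
    prob σ γ IS.infoCp ω = probT IS σ γ (M.T - 1) ω := by
  unfold prob probT
  have hT : M.T - 1 + 1 = M.T := Nat.succ_pred_eq_of_pos M.hT
  rw [hT]
  have h1 : ∀ s ∈ Finset.range M.T,
      σ.f1 s (info1 s ω) (M1v ω s) * σ.f2 s (info2 s ω) (M2v ω s) *
        zKer M (X0v ω s) (Mv ω s) (X1v ω s, X2v ω s) (Zv ω s) *
        M.obs (Zv ω s) (Mv ω s) (X0v ω s) (Yv ω s) *
        σ.g1 s (info1p s ω) (U1v ω s) * σ.g2 s (info2p s ω) (U2v ω s) *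
        γ.ga s (IS.infoCp s ω) (UAv ω s)
      = stepF1 σ s ω * stepF2 σ s ω * stepC IS γ s ω := by
    intro s _
    unfold stepF1 stepF2 stepC
    rw [zKer_split]
    ring
  rw [Finset.prod_congr rfl h1]
  have h2 : ∀ s ∈ Finset.range (M.T - 1),
      M.trans0 (X0v ω s) (UAv ω s) (X0v ω (s+1)) *
        M.trans1 (X0v ω s) (X1v ω s) (U1v ω s) (X1v ω (s+1)) *
        M.trans2 (X0v ω s) (X2v ω s) (U2v ω s) (X2v ω (s+1))
      = tr0 s ω * tr1 s ω * tr2 s ω := by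
    intro s _
    unfold tr0 tr1 tr2
    rfl
  rw [Finset.prod_congr rfl h2]

def theta (t : ℕ) (ω : Traj M) : ℝ :=
  M.cost t (X0v ω t) (X1v ω t, X2v ω t) (U1v ω t, U2v ω t) (UAv ω t) +
    ind ((M1v ω t || M2v ω t) = true) * M.commCost (X0v ω t) (X1v ω t, X2v ω t)

lemma totalCost_eq (ω : Traj M) : totalCost ω = ∑ t ∈ Finset.range M.T, theta t ω := by
  unfold totalCost theta
  refine Finset.sum_congr rfl fun t _ => ?_
  congr 1
  by_cases h : (M1v ω t || M2v ω t) = true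
  · rw [if_pos h, ind_of _ h, one_mul]
  · rw [if_neg h, ind_of_not _ h, zero_mul]

end Core
end TA


namespace TA
noncomputable section Congr
variable {M : Model}

lemma teamCom_congr {ω ω' : Traj M} {t : ℕ}
    (h0 : ∀ s < t+1, X0v ω s = X0v ω' s) (hm : ∀ s < t, Mv ω s = Mv ω' s)
    (hz : ∀ s < t, Zv ω s = Zv ω' s) (ha : ∀ s < t, UAv ω s = UAv ω' s)
    (hy : ∀ s < t, Yv ω s = Yv ω' s) : teamCom t ω = teamCom t ω' := by
  unfold teamCom
  rw [pre_eq_iff.mpr h0, pre_eq_iff.mpr hm, pre_eq_iff.mpr hz, pre_eq_iff.mpr ha,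
    pre_eq_iff.mpr hy]

lemma teamComP_congr {ω ω' : Traj M} {t : ℕ}
    (h0 : ∀ s < t+1, X0v ω s = X0v ω' s) (hm : ∀ s < t+1, Mv ω s = Mv ω' s)
    (hz : ∀ s < t+1, Zv ω s = Zv ω' s) (ha : ∀ s < t, UAv ω s = UAv ω' s)
    (hy : ∀ s < t+1, Yv ω s = Yv ω' s) : teamComP t ω = teamComP t ω' := by
  unfold teamComP
  rw [pre_eq_iff.mpr h0, pre_eq_iff.mpr hm, pre_eq_iff.mpr hz, pre_eq_iff.mpr ha,
    pre_eq_iff.mpr hy]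

lemma info1_congr {ω ω' : Traj M} {t : ℕ}
    (h0 : ∀ s < t+1, X0v ω s = X0v ω' s) (h1 : ∀ s < t+1, X1v ω s = X1v ω' s)
    (hu : ∀ s < t, U1v ω s = U1v ω' s) (hm : ∀ s < t, Mv ω s = Mv ω' s)
    (hz : ∀ s < t, Zv ω s = Zv ω' s) (ha : ∀ s < t, UAv ω s = UAv ω' s)
    (hy : ∀ s < t, Yv ω s = Yv ω' s) : info1 t ω = info1 t ω' := by
  unfold info1
  rw [pre_eq_iff.mpr h0, pre_eq_iff.mpr h1, pre_eq_iff.mpr hu, pre_eq_iff.mpr hm,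
    pre_eq_iff.mpr hz, pre_eq_iff.mpr ha, pre_eq_iff.mpr hy]

lemma info1p_congr {ω ω' : Traj M} {t : ℕ}
    (h0 : ∀ s < t+1, X0v ω s = X0v ω' s) (h1 : ∀ s < t+1, X1v ω s = X1v ω' s)
    (hu : ∀ s < t, U1v ω s = U1v ω' s) (hm : ∀ s < t+1, Mv ω s = Mv ω' s)
    (hz : ∀ s < t+1, Zv ω s = Zv ω' s) (ha : ∀ s < t, UAv ω s = UAv ω' s)
    (hy : ∀ s < t+1, Yv ω s = Yv ω' s) : info1p t ω = info1p t ω' := by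
  unfold info1p
  rw [pre_eq_iff.mpr h0, pre_eq_iff.mpr h1, pre_eq_iff.mpr hu, pre_eq_iff.mpr hm,
    pre_eq_iff.mpr hz, pre_eq_iff.mpr ha, pre_eq_iff.mpr hy]

lemma info2_congr {ω ω' : Traj M} {t : ℕ}
    (h0 : ∀ s < t+1, X0v ω s = X0v ω' s) (h1 : ∀ s < t+1, X2v ω s = X2v ω' s)
    (hu : ∀ s < t, U2v ω s = U2v ω' s) (hm : ∀ s < t, Mv ω s = Mv ω' s)
    (hz : ∀ s < t, Zv ω s = Zv ω' s) (ha : ∀ s < t, UAv ω s = UAv ω' s)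
    (hy : ∀ s < t, Yv ω s = Yv ω' s) : info2 t ω = info2 t ω' := by
  unfold info2
  rw [pre_eq_iff.mpr h0, pre_eq_iff.mpr h1, pre_eq_iff.mpr hu, pre_eq_iff.mpr hm,
    pre_eq_iff.mpr hz, pre_eq_iff.mpr ha, pre_eq_iff.mpr hy]

lemma info2p_congr {ω ω' : Traj M} {t : ℕ}
    (h0 : ∀ s < t+1, X0v ω s = X0v ω' s) (h1 : ∀ s < t+1, X2v ω s = X2v ω' s)
    (hu : ∀ s < t, U2v ω s = U2v ω' s) (hm : ∀ s < t+1, Mv ω s = Mv ω' s)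
    (hz : ∀ s < t+1, Zv ω s = Zv ω' s) (ha : ∀ s < t, UAv ω s = UAv ω' s)
    (hy : ∀ s < t+1, Yv ω s = Yv ω' s) : info2p t ω = info2p t ω' := by
  unfold info2p
  rw [pre_eq_iff.mpr h0, pre_eq_iff.mpr h1, pre_eq_iff.mpr hu, pre_eq_iff.mpr hm,
    pre_eq_iff.mpr hz, pre_eq_iff.mpr ha, pre_eq_iff.mpr hy]

-- extraction from teamCom / teamComP equalities
lemma teamCom_x0 {ω ω' : Traj M} {t : ℕ} (h : teamCom t ω = teamCom t ω') :
    ∀ s < t+1, X0v ω s = X0v ω' s :=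
  pre_eq_iff.mp (congrArg (fun v : HistC M => v.1) h)
lemma teamCom_m {ω ω' : Traj M} {t : ℕ} (h : teamCom t ω = teamCom t ω') :
    ∀ s < t, Mv ω s = Mv ω' s :=
  pre_eq_iff.mp (congrArg (fun v : HistC M => v.2.1) h)
lemma teamCom_z {ω ω' : Traj M} {t : ℕ} (h : teamCom t ω = teamCom t ω') :
    ∀ s < t, Zv ω s = Zv ω' s :=
  pre_eq_iff.mp (congrArg (fun v : HistC M => v.2.2.1) h)
lemma teamCom_ua {ω ω' : Traj M} {t : ℕ} (h : teamCom t ω = teamCom t ω') :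
    ∀ s < t, UAv ω s = UAv ω' s :=
  pre_eq_iff.mp (congrArg (fun v : HistC M => v.2.2.2.1) h)
lemma teamCom_y {ω ω' : Traj M} {t : ℕ} (h : teamCom t ω = teamCom t ω') :
    ∀ s < t, Yv ω s = Yv ω' s :=
  pre_eq_iff.mp (congrArg (fun v : HistC M => v.2.2.2.2) h)

lemma teamComP_x0 {ω ω' : Traj M} {t : ℕ} (h : teamComP t ω = teamComP t ω') :
    ∀ s < t+1, X0v ω s = X0v ω' s :=
  pre_eq_iff.mp (congrArg (fun v : HistC M => v.1) h)
lemma teamComP_m {ω ω' : Traj M} {t : ℕ} (h : teamComP t ω = teamComP t ω') :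
    ∀ s < t+1, Mv ω s = Mv ω' s :=
  pre_eq_iff.mp (congrArg (fun v : HistC M => v.2.1) h)
lemma teamComP_z {ω ω' : Traj M} {t : ℕ} (h : teamComP t ω = teamComP t ω') :
    ∀ s < t+1, Zv ω s = Zv ω' s :=
  pre_eq_iff.mp (congrArg (fun v : HistC M => v.2.2.1) h)
lemma teamComP_ua {ω ω' : Traj M} {t : ℕ} (h : teamComP t ω = teamComP t ω') :
    ∀ s < t, UAv ω s = UAv ω' s :=
  pre_eq_iff.mp (congrArg (fun v : HistC M => v.2.2.2.1) h)
lemma teamComP_y {ω ω' : Traj M} {t : ℕ} (h : teamComP t ω = teamComP t ω') :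
    ∀ s < t+1, Yv ω s = Yv ω' s :=
  pre_eq_iff.mp (congrArg (fun v : HistC M => v.2.2.2.2) h)

lemma M1v_of_Mv {ω ω' : Traj M} {s : ℕ} (h : Mv ω s = Mv ω' s) : M1v ω s = M1v ω' s :=
  congrArg Prod.fst h
lemma M2v_of_Mv {ω ω' : Traj M} {s : ℕ} (h : Mv ω s = Mv ω' s) : M2v ω s = M2v ω' s :=
  congrArg Prod.snd h

end Congr
end TA


namespace TA
noncomputable section Agent1
variable {M : Model} (IS : InfoStructure M)

def A1W (σ : TeamStrategy M) (t : ℕ) (ω : Traj M) : ℝ :=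
  M.init1 (X1v ω 0) * (∏ s ∈ Finset.range t, stepF1 σ s ω) * ∏ s ∈ Finset.range t, tr1 s ω

def A1pW (σ : TeamStrategy M) (t : ℕ) (ω : Traj M) : ℝ :=
  A1W σ t ω * σ.f1 t (info1 t ω) (M1v ω t) * zeta1 M (Zv ω t) (Mv ω t) (X1v ω t)

def B1W (σ : TeamStrategy M) (t : ℕ) (ω : Traj M) : ℝ :=
  A1pW σ t ω * σ.g1 t (info1p t ω) (U1v ω t)

lemma B1W_eq (σ : TeamStrategy M) (t : ℕ) (ω : Traj M) :
    B1W σ t ω = A1W σ t ω * stepF1 σ t ω := by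
  unfold B1W A1pW stepF1
  ring

lemma A1W_succ (σ : TeamStrategy M) (t : ℕ) (ω : Traj M) :
    A1W σ (t+1) ω = B1W σ t ω * tr1 t ω := by
  rw [B1W_eq]
  unfold A1W
  rw [Finset.prod_range_succ, Finset.prod_range_succ]
  ring

def R1W (σ : TeamStrategy M) (γ : AdvStrategy M IS.C) (t : ℕ) (ω : Traj M) : ℝ :=
  M.init0 (X0v ω 0) * M.init2 (X2v ω 0) *
  (∏ s ∈ Finset.range (t+1), stepF2 σ s ω * stepC IS γ s ω) *
  ∏ s ∈ Finset.range t, tr0 s ω * tr2 s ω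

lemma probT_factor1 (σ : TeamStrategy M) (γ : AdvStrategy M IS.C) (t : ℕ) (ω : Traj M) :
    probT IS σ γ t ω = B1W σ t ω * R1W IS σ γ t ω := by
  unfold probT R1W
  rw [B1W_eq]
  unfold A1W
  have e1 : (∏ s ∈ Finset.range (t+1), stepF1 σ s ω * stepF2 σ s ω * stepC IS γ s ω)
      = (∏ s ∈ Finset.range (t+1), stepF1 σ s ω) *
        ∏ s ∈ Finset.range (t+1), stepF2 σ s ω * stepC IS γ s ω := by
    rw [← Finset.prod_mul_distrib]
    exact Finset.prod_congr rfl fun s _ => by ring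
  have e2 : (∏ s ∈ Finset.range t, tr0 s ω * tr1 s ω * tr2 s ω)
      = (∏ s ∈ Finset.range t, tr1 s ω) * ∏ s ∈ Finset.range t, tr0 s ω * tr2 s ω := by
    rw [← Finset.prod_mul_distrib]
    exact Finset.prod_congr rfl fun s _ => by ring
  rw [e1, e2, Finset.prod_range_succ (fun s => stepF1 σ s ω) t]
  ring

lemma infoCp_asm1 (p q : Om1 M) (ρ : Rest1 M) (s : ℕ) :
    IS.infoCp s (asm1 p ρ) = IS.infoCp s (asm1 q ρ) :=
  ((IS.cdp_team s (asm1 p ρ) (asm1 q ρ)).mpr rfl).1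

lemma stepC_asm1 (γ : AdvStrategy M IS.C) (p q : Om1 M) (ρ : Rest1 M) (s : ℕ) :
    stepC IS γ s (asm1 p ρ) = stepC IS γ s (asm1 q ρ) := by
  unfold stepC
  rw [infoCp_asm1 IS p q ρ s]
  rfl

lemma R1W_asm1 (σ : TeamStrategy M) (γ : AdvStrategy M IS.C) (t : ℕ)
    (p q : Om1 M) (ρ : Rest1 M) :
    R1W IS σ γ t (asm1 p ρ) = R1W IS σ γ t (asm1 q ρ) := by
  unfold R1W
  have h : ∀ s ∈ Finset.range (t+1),
      stepF2 σ s (asm1 p ρ) * stepC IS γ s (asm1 p ρ)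
        = stepF2 σ s (asm1 q ρ) * stepC IS γ s (asm1 q ρ) := fun s _ => by
    rw [stepC_asm1 IS γ p q ρ s]
    rfl
  rw [Finset.prod_congr rfl h]
  rfl

lemma theta_congr {ω ω' : Traj M} (t : ℕ)
    (h0 : X0v ω t = X0v ω' t) (h1 : X1v ω t = X1v ω' t) (h2 : X2v ω t = X2v ω' t)
    (hu1 : U1v ω t = U1v ω' t) (hu2 : U2v ω t = U2v ω' t)
    (hm1 : M1v ω t = M1v ω' t) (hm2 : M2v ω t = M2v ω' t)
    (ha : UAv ω t = UAv ω' t) : theta t ω = theta t ω' := by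
  unfold theta
  rw [h0, h1, h2, hu1, hu2, hm1, hm2, ha]

-- determination lemmas for agent 1 weights
lemma info1_det {ω ω' : Traj M} {t : ℕ} (h : teamCom t ω = teamCom t ω')
    (hx : ∀ s < t+1, X1v ω s = X1v ω' s) (hu : ∀ s < t, U1v ω s = U1v ω' s) :
    info1 t ω = info1 t ω' :=
  info1_congr (teamCom_x0 h) hx hu (teamCom_m h)
    (teamCom_z h) (teamCom_ua h) (teamCom_y h)

lemma info1p_det {ω ω' : Traj M} {t : ℕ} (h : teamComP t ω = teamComP t ω')
    (hx : ∀ s < t+1, X1v ω s = X1v ω' s) (hu : ∀ s < t, U1v ω s = U1v ω' s) :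
    info1p t ω = info1p t ω' :=
  info1p_congr (teamComP_x0 h) hx hu (teamComP_m h)
    (teamComP_z h) (teamComP_ua h) (teamComP_y h)

lemma A1W_det (σ : TeamStrategy M) {ω ω' : Traj M} {t : ℕ}
    (h : teamCom t ω = teamCom t ω')
    (hx : ∀ s < t+1, X1v ω s = X1v ω' s) (hu : ∀ s < t, U1v ω s = U1v ω' s) :
    A1W σ t ω = A1W σ t ω' := by
  unfold A1W
  rw [hx 0 (by omega)]
  have hs1 : ∀ s ∈ Finset.range t, stepF1 σ s ω = stepF1 σ s ω' := by
    intro s hs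
    rw [Finset.mem_range] at hs
    unfold stepF1
    have hteam : teamCom s ω = teamCom s ω' :=
      teamCom_congr (fun s' hs' => teamCom_x0 h s' (by omega))
        (fun s' hs' => teamCom_m h s' (by omega)) (fun s' hs' => teamCom_z h s' (by omega))
        (fun s' hs' => teamCom_ua h s' (by omega)) (fun s' hs' => teamCom_y h s' (by omega))
    have hinfo : info1 s ω = info1 s ω' :=
      info1_det hteam (fun s' hs' => hx s' (by omega)) (fun s' hs' => hu s' (by omega))
    have hinfop : info1p s ω = info1p s ω' :=
      info1p_congr (fun s' hs' => teamCom_x0 h s' (by omega)) (fun s' hs' => hx s' (by omega))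
        (fun s' hs' => hu s' (by omega)) (fun s' hs' => teamCom_m h s' (by omega))
        (fun s' hs' => teamCom_z h s' (by omega)) (fun s' hs' => teamCom_ua h s' (by omega))
        (fun s' hs' => teamCom_y h s' (by omega))
    rw [hinfo, hinfop, hx s (by omega), hu s (by omega), M1v_of_Mv (teamCom_m h s hs),
      teamCom_m h s hs, teamCom_z h s hs]
  have hs2 : ∀ s ∈ Finset.range t, tr1 s ω = tr1 s ω' := by
    intro s hs
    rw [Finset.mem_range] at hs
    unfold tr1
    rw [teamCom_x0 h s (by omega), hx s (by omega), hu s (by omega), hx (s+1) (by omega)]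
  rw [Finset.prod_congr rfl hs1, Finset.prod_congr rfl hs2]

lemma teamCom_of_teamComP {ω ω' : Traj M} {t : ℕ} (h : teamComP t ω = teamComP t ω') :
    teamCom t ω = teamCom t ω' :=
  teamCom_congr (teamComP_x0 h) (fun s hs => teamComP_m h s (by omega))
    (fun s hs => teamComP_z h s (by omega)) (teamComP_ua h)
    (fun s hs => teamComP_y h s (by omega))

lemma A1pW_det (σ : TeamStrategy M) {ω ω' : Traj M} {t : ℕ}
    (h : teamComP t ω = teamComP t ω')
    (hx : ∀ s < t+1, X1v ω s = X1v ω' s) (hu : ∀ s < t, U1v ω s = U1v ω' s) :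
    A1pW σ t ω = A1pW σ t ω' := by
  unfold A1pW
  have hm : Mv ω t = Mv ω' t := teamComP_m h t (by omega)
  rw [A1W_det σ (teamCom_of_teamComP h) hx hu, info1_det (teamCom_of_teamComP h) hx hu,
    M1v_of_Mv hm, hm, teamComP_z h t (by omega), hx t (by omega)]

lemma B1W_det (σ : TeamStrategy M) {ω ω' : Traj M} {t : ℕ}
    (h : teamComP t ω = teamComP t ω')
    (hx : ∀ s < t+1, X1v ω s = X1v ω' s) (hu : ∀ s < t+1, U1v ω s = U1v ω' s) :
    B1W σ t ω = B1W σ t ω' := by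
  unfold B1W
  rw [A1pW_det σ h hx (fun s hs => hu s (by omega)),
    info1p_det h hx (fun s hs => hu s (by omega)), hu t (by omega)]

-- nonnegativity
lemma stepF1_nonneg (σ : TeamStrategy M) (t : ℕ) (ω : Traj M) : 0 ≤ stepF1 σ t ω :=
  mul_nonneg (mul_nonneg (σ.f1_nonneg _ _ _) (zeta1_nonneg _ _ _)) (σ.g1_nonneg _ _ _)

lemma A1W_nonneg (σ : TeamStrategy M) (t : ℕ) (ω : Traj M) : 0 ≤ A1W σ t ω :=
  mul_nonneg (mul_nonneg (M.init1_nonneg _)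
    (Finset.prod_nonneg fun s _ => stepF1_nonneg σ s ω))
    (Finset.prod_nonneg fun s _ => M.trans1_nonneg _ _ _ _)

lemma A1pW_nonneg (σ : TeamStrategy M) (t : ℕ) (ω : Traj M) : 0 ≤ A1pW σ t ω :=
  mul_nonneg (mul_nonneg (A1W_nonneg σ t ω) (σ.f1_nonneg _ _ _)) (zeta1_nonneg _ _ _)

lemma B1W_nonneg (σ : TeamStrategy M) (t : ℕ) (ω : Traj M) : 0 ≤ B1W σ t ω :=
  mul_nonneg (A1pW_nonneg σ t ω) (σ.g1_nonneg _ _ _)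

end Agent1
end TA


namespace TA
noncomputable section Collapse
variable {M : Model}

lemma ind_mul_congr {P : Prop} {c c' : ℝ} (h : P → c = c') : ind P * c = ind P * c' := by
  by_cases hP : P
  · rw [h hP]
  · rw [ind_of_not _ hP, zero_mul, zero_mul]

/-- Multiplicity of a common-statistic class. -/
def N1 {β : Type} (κ : ℕ → Traj M → β) (t : ℕ) (ω₀ : Traj M) : ℝ :=
  ∑ ρ : Rest1 M, ind (κ t (asm1 (om1Of ω₀) ρ) = κ t ω₀)

lemma N1_pos {β : Type} (κ : ℕ → Traj M → β) (t : ℕ) (ω₀ : Traj M) :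
    0 < N1 κ t ω₀ := by
  unfold N1
  have h1 : ind (κ t (asm1 (om1Of ω₀) (rest1Of ω₀)) = κ t ω₀) = 1 := ind_of _ rfl
  have h2 : (1:ℝ) ≤ ∑ ρ : Rest1 M, ind (κ t (asm1 (om1Of ω₀) ρ) = κ t ω₀) := by
    rw [← h1]
    exact Finset.single_le_sum
      (f := fun ρ : Rest1 M => ind (κ t (asm1 (om1Of ω₀) ρ) = κ t ω₀))
      (fun ρ _ => ind_nonneg _) (Finset.mem_univ (rest1Of ω₀))
  linarith

lemma collapse1 {β : Type} (κ : ℕ → Traj M → β)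
    (hκ : ∀ (t : ℕ) (p q : Om1 M) (ρ : Rest1 M), κ t (asm1 p ρ) = κ t (asm1 q ρ))
    (t : ℕ) (ω₀ : Traj M) (x : M.X1) (G : Traj M → ℝ)
    (hG : ∀ ω ω', κ t ω = κ t ω' → (∀ s, X1v ω s = X1v ω' s) →
      (∀ s, U1v ω s = U1v ω' s) → G ω = G ω') :
    (∑ ω : Traj M, ind (κ t ω = κ t ω₀ ∧ X1v ω t = x) * G ω)
      = N1 κ t ω₀ * ∑ p : Om1 M, ind ((p (idx M t)).1 = x) * G (subst1 ω₀ p) := by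
  rw [sum_traj1 (fun ω => ind (κ t ω = κ t ω₀ ∧ X1v ω t = x) * G ω)]
  have key : ∀ (ρ : Rest1 M) (p : Om1 M),
      ind (κ t (asm1 p ρ) = κ t ω₀ ∧ X1v (asm1 p ρ) t = x) * G (asm1 p ρ)
        = ind (κ t (asm1 (om1Of ω₀) ρ) = κ t ω₀) *
          (ind ((p (idx M t)).1 = x) * G (subst1 ω₀ p)) := by
    intro ρ p
    have hsub : κ t (subst1 ω₀ p) = κ t ω₀ := hκ t p (om1Of ω₀) (rest1Of ω₀)
    have egt : ind (κ t (asm1 p ρ) = κ t ω₀ ∧ X1v (asm1 p ρ) t = x) * G (asm1 p ρ)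
        = ind (κ t (asm1 p ρ) = κ t ω₀ ∧ X1v (asm1 p ρ) t = x) * G (subst1 ω₀ p) :=
      ind_mul_congr (fun h => hG _ _ (h.1.trans hsub.symm) (fun _ => rfl) (fun _ => rfl))
    rw [egt, ind_and]
    have e1 : ind (κ t (asm1 p ρ) = κ t ω₀) = ind (κ t (asm1 (om1Of ω₀) ρ) = κ t ω₀) :=
      ind_congr (by rw [hκ t p (om1Of ω₀) ρ])
    have e2 : ind (X1v (asm1 p ρ) t = x) = ind ((p (idx M t)).1 = x) := rfl
    rw [e1, e2, mul_assoc]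
  rw [Finset.sum_congr rfl fun ρ _ => Finset.sum_congr rfl fun p _ => key ρ p]
  have e3 : ∀ ρ : Rest1 M,
      (∑ p : Om1 M, ind (κ t (asm1 (om1Of ω₀) ρ) = κ t ω₀) *
        (ind ((p (idx M t)).1 = x) * G (subst1 ω₀ p)))
      = ind (κ t (asm1 (om1Of ω₀) ρ) = κ t ω₀) *
        ∑ p : Om1 M, ind ((p (idx M t)).1 = x) * G (subst1 ω₀ p) :=
    fun ρ => (Finset.mul_sum _ _ _).symm
  rw [Finset.sum_congr rfl fun ρ _ => e3 ρ, ← Finset.sum_mul]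
  rfl

end Collapse
end TA


namespace TA
noncomputable section Construct1
variable {M : Model}

def x1of (M : Model) (t : ℕ) (h : Hist1 M) : M.X1 := h.2.1.getD t (Classical.arbitrary M.X1)
def ccOf1 (h : Hist1 M) : HistC M :=
  (h.1, h.2.2.2.1, h.2.2.2.2.1, h.2.2.2.2.2.1, h.2.2.2.2.2.2)

lemma x1of_info1 (t : ℕ) (ω : Traj M) : x1of M t (info1 t ω) = X1v ω t := by
  unfold x1of info1
  exact pre_getD (X1v ω) (t+1) t (by omega) _

lemma x1of_info1p (t : ℕ) (ω : Traj M) : x1of M t (info1p t ω) = X1v ω t := by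
  unfold x1of info1p
  exact pre_getD (X1v ω) (t+1) t (by omega) _

lemma ccOf1_info1 (t : ℕ) (ω : Traj M) : ccOf1 (info1 t ω) = teamCom t ω := rfl
lemma ccOf1_info1p (t : ℕ) (ω : Traj M) : ccOf1 (info1p t ω) = teamComP t ω := rfl

def den1 (σ : TeamStrategy M) (t : ℕ) (x : M.X1) (cc : HistC M) : ℝ :=
  ∑ ω : Traj M, ind (teamCom t ω = cc ∧ X1v ω t = x) * A1W σ t ω
def num1 (σ : TeamStrategy M) (t : ℕ) (x : M.X1) (cc : HistC M) (m : Bool) : ℝ :=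
  ∑ ω : Traj M, ind (teamCom t ω = cc ∧ X1v ω t = x) * (A1W σ t ω * σ.f1 t (info1 t ω) m)
def F1c (σ : TeamStrategy M) (t : ℕ) (x : M.X1) (cc : HistC M) (m : Bool) : ℝ :=
  if den1 σ t x cc = 0 then (2:ℝ)⁻¹ else num1 σ t x cc m / den1 σ t x cc

def den1p (σ : TeamStrategy M) (t : ℕ) (x : M.X1) (cc : HistC M) : ℝ :=
  ∑ ω : Traj M, ind (teamComP t ω = cc ∧ X1v ω t = x) * A1pW σ t ω
def num1p (σ : TeamStrategy M) (t : ℕ) (x : M.X1) (cc : HistC M) (u : M.U1) : ℝ :=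
  ∑ ω : Traj M, ind (teamComP t ω = cc ∧ X1v ω t = x) * (A1pW σ t ω * σ.g1 t (info1p t ω) u)
def G1c (σ : TeamStrategy M) (t : ℕ) (x : M.X1) (cc : HistC M) (u : M.U1) : ℝ :=
  if den1p σ t x cc = 0 then (Fintype.card M.U1 : ℝ)⁻¹ else num1p σ t x cc u / den1p σ t x cc

def f1pol (σ : TeamStrategy M) : ℕ → Hist1 M → Bool → ℝ :=
  fun t h m => F1c σ t (x1of M t h) (ccOf1 h) m
def g1pol (σ : TeamStrategy M) : ℕ → Hist1 M → M.U1 → ℝ :=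
  fun t h u => G1c σ t (x1of M t h) (ccOf1 h) u

lemma den1_nonneg (σ : TeamStrategy M) (t x cc) : 0 ≤ den1 σ t x cc :=
  Finset.sum_nonneg fun ω _ => mul_nonneg (ind_nonneg _) (A1W_nonneg σ t ω)
lemma num1_nonneg (σ : TeamStrategy M) (t x cc m) : 0 ≤ num1 σ t x cc m :=
  Finset.sum_nonneg fun ω _ => mul_nonneg (ind_nonneg _)
    (mul_nonneg (A1W_nonneg σ t ω) (σ.f1_nonneg _ _ _))
lemma den1p_nonneg (σ : TeamStrategy M) (t x cc) : 0 ≤ den1p σ t x cc :=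
  Finset.sum_nonneg fun ω _ => mul_nonneg (ind_nonneg _) (A1pW_nonneg σ t ω)
lemma num1p_nonneg (σ : TeamStrategy M) (t x cc u) : 0 ≤ num1p σ t x cc u :=
  Finset.sum_nonneg fun ω _ => mul_nonneg (ind_nonneg _)
    (mul_nonneg (A1pW_nonneg σ t ω) (σ.g1_nonneg _ _ _))

lemma F1c_nonneg (σ : TeamStrategy M) (t x cc m) : 0 ≤ F1c σ t x cc m := by
  unfold F1c
  split
  · norm_num
  · exact div_nonneg (num1_nonneg σ t x cc m) (den1_nonneg σ t x cc)

lemma G1c_nonneg (σ : TeamStrategy M) (t x cc u) : 0 ≤ G1c σ t x cc u := by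
  unfold G1c
  split
  · positivity
  · exact div_nonneg (num1p_nonneg σ t x cc u) (den1p_nonneg σ t x cc)

lemma num1_total (σ : TeamStrategy M) (t x cc) : ∑ m, num1 σ t x cc m = den1 σ t x cc := by
  unfold num1 den1
  rw [Finset.sum_comm]
  refine Finset.sum_congr rfl fun ω _ => ?_
  have h : ∀ m : Bool, ind (teamCom t ω = cc ∧ X1v ω t = x) * (A1W σ t ω * σ.f1 t (info1 t ω) m)
      = ind (teamCom t ω = cc ∧ X1v ω t = x) * A1W σ t ω * σ.f1 t (info1 t ω) m := by
    intro m; ring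
  rw [Finset.sum_congr rfl fun m _ => h m, ← Finset.mul_sum, σ.f1_sum, mul_one]

lemma num1p_total (σ : TeamStrategy M) (t x cc) : ∑ u, num1p σ t x cc u = den1p σ t x cc := by
  unfold num1p den1p
  rw [Finset.sum_comm]
  refine Finset.sum_congr rfl fun ω _ => ?_
  have h : ∀ u, ind (teamComP t ω = cc ∧ X1v ω t = x) * (A1pW σ t ω * σ.g1 t (info1p t ω) u)
      = ind (teamComP t ω = cc ∧ X1v ω t = x) * A1pW σ t ω * σ.g1 t (info1p t ω) u := by
    intro u; ring
  rw [Finset.sum_congr rfl fun u _ => h u, ← Finset.mul_sum, σ.g1_sum, mul_one]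

lemma F1c_sum (σ : TeamStrategy M) (t x cc) : ∑ m, F1c σ t x cc m = 1 := by
  unfold F1c
  by_cases h : den1 σ t x cc = 0
  · simp [h]
  · simp only [h, if_false]
    rw [← Finset.sum_div, num1_total, div_self h]

lemma G1c_sum (σ : TeamStrategy M) (t x cc) : ∑ u, G1c σ t x cc u = 1 := by
  unfold G1c
  by_cases h : den1p σ t x cc = 0
  · simp only [h, if_true, Finset.sum_const, Finset.card_univ, nsmul_eq_mul]
    have : (0:ℝ) < (Fintype.card M.U1 : ℝ) := by
      have : 0 < Fintype.card M.U1 := Fintype.card_pos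
      exact_mod_cast this
    field_simp
  · simp only [h, if_false]
    rw [← Finset.sum_div, num1p_total, div_self h]

-- marginals for agent 1 with truncated weights, common trajectory fixed
def Sx (σ : TeamStrategy M) (t : ℕ) (ω : Traj M) (x : M.X1) : ℝ :=
  ∑ p : Om1 M, ind ((p (idx M t)).1 = x) * A1W σ t (subst1 ω p)
def Sxm (σ : TeamStrategy M) (t : ℕ) (ω : Traj M) (x : M.X1) (m : Bool) : ℝ :=
  ∑ p : Om1 M, ind ((p (idx M t)).1 = x) *
    (A1W σ t (subst1 ω p) * σ.f1 t (info1 t (subst1 ω p)) m)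
def Sxp (σ : TeamStrategy M) (t : ℕ) (ω : Traj M) (x : M.X1) : ℝ :=
  ∑ p : Om1 M, ind ((p (idx M t)).1 = x) * A1pW σ t (subst1 ω p)
def Sxg (σ : TeamStrategy M) (t : ℕ) (ω : Traj M) (x : M.X1) (u : M.U1) : ℝ :=
  ∑ p : Om1 M, ind ((p (idx M t)).1 = x) *
    (A1pW σ t (subst1 ω p) * σ.g1 t (info1p t (subst1 ω p)) u)
def Sxu (σ : TeamStrategy M) (t : ℕ) (ω : Traj M) (x : M.X1) (u : M.U1) : ℝ :=
  ∑ p : Om1 M, ind (p (idx M t) = (x, u)) * B1W σ t (subst1 ω p)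

lemma den1_eq (σ : TeamStrategy M) (t : ℕ) (ω : Traj M) (x : M.X1) :
    den1 σ t x (teamCom t ω) = N1 teamCom t ω * Sx σ t ω x :=
  collapse1 teamCom (fun _ _ _ _ => rfl) t ω x (A1W σ t)
    (fun ω₁ ω₂ h hx hu => A1W_det σ h (fun s _ => hx s) (fun s _ => hu s))

lemma num1_eq (σ : TeamStrategy M) (t : ℕ) (ω : Traj M) (x : M.X1) (m : Bool) :
    num1 σ t x (teamCom t ω) m = N1 teamCom t ω * Sxm σ t ω x m :=
  collapse1 teamCom (fun _ _ _ _ => rfl) t ω x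
    (fun ω' => A1W σ t ω' * σ.f1 t (info1 t ω') m)
    (fun ω₁ ω₂ h hx hu => by
      rw [A1W_det σ h (fun s _ => hx s) (fun s _ => hu s),
        info1_det h (fun s _ => hx s) (fun s _ => hu s)])

lemma den1p_eq (σ : TeamStrategy M) (t : ℕ) (ω : Traj M) (x : M.X1) :
    den1p σ t x (teamComP t ω) = N1 teamComP t ω * Sxp σ t ω x :=
  collapse1 teamComP (fun _ _ _ _ => rfl) t ω x (A1pW σ t)
    (fun ω₁ ω₂ h hx hu => A1pW_det σ h (fun s _ => hx s) (fun s _ => hu s))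

lemma num1p_eq (σ : TeamStrategy M) (t : ℕ) (ω : Traj M) (x : M.X1) (u : M.U1) :
    num1p σ t x (teamComP t ω) u = N1 teamComP t ω * Sxg σ t ω x u :=
  collapse1 teamComP (fun _ _ _ _ => rfl) t ω x
    (fun ω' => A1pW σ t ω' * σ.g1 t (info1p t ω') u)
    (fun ω₁ ω₂ h hx hu => by
      rw [A1pW_det σ h (fun s _ => hx s) (fun s _ => hu s),
        info1p_det h (fun s _ => hx s) (fun s _ => hu s)])

lemma Sx_nonneg (σ : TeamStrategy M) (t ω x) : 0 ≤ Sx σ t ω x :=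
  Finset.sum_nonneg fun p _ => mul_nonneg (ind_nonneg _) (A1W_nonneg σ t _)
lemma Sxm_nonneg (σ : TeamStrategy M) (t ω x m) : 0 ≤ Sxm σ t ω x m :=
  Finset.sum_nonneg fun p _ => mul_nonneg (ind_nonneg _)
    (mul_nonneg (A1W_nonneg σ t _) (σ.f1_nonneg _ _ _))
lemma Sxp_nonneg (σ : TeamStrategy M) (t ω x) : 0 ≤ Sxp σ t ω x :=
  Finset.sum_nonneg fun p _ => mul_nonneg (ind_nonneg _) (A1pW_nonneg σ t _)
lemma Sxg_nonneg (σ : TeamStrategy M) (t ω x u) : 0 ≤ Sxg σ t ω x u :=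
  Finset.sum_nonneg fun p _ => mul_nonneg (ind_nonneg _)
    (mul_nonneg (A1pW_nonneg σ t _) (σ.g1_nonneg _ _ _))

lemma Sxm_le_Sx (σ : TeamStrategy M) (t ω x m) : Sxm σ t ω x m ≤ Sx σ t ω x := by
  refine Finset.sum_le_sum fun p _ => ?_
  refine mul_le_mul_of_nonneg_left ?_ (ind_nonneg _)
  calc A1W σ t (subst1 ω p) * σ.f1 t (info1 t (subst1 ω p)) m
      ≤ A1W σ t (subst1 ω p) * 1 :=
        mul_le_mul_of_nonneg_left (f1_le_one σ _ _ _) (A1W_nonneg σ t _)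
    _ = A1W σ t (subst1 ω p) := mul_one _

lemma Sxg_le_Sxp (σ : TeamStrategy M) (t ω x u) : Sxg σ t ω x u ≤ Sxp σ t ω x := by
  refine Finset.sum_le_sum fun p _ => ?_
  refine mul_le_mul_of_nonneg_left ?_ (ind_nonneg _)
  calc A1pW σ t (subst1 ω p) * σ.g1 t (info1p t (subst1 ω p)) u
      ≤ A1pW σ t (subst1 ω p) * 1 :=
        mul_le_mul_of_nonneg_left (g1_le_one σ _ _ _) (A1pW_nonneg σ t _)
    _ = A1pW σ t (subst1 ω p) := mul_one _

lemma Sxm_bridge (σ : TeamStrategy M) (t : ℕ) (ω : Traj M) (x : M.X1) (m : Bool) :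
    Sxm σ t ω x m = Sx σ t ω x * F1c σ t x (teamCom t ω) m := by
  have hN : 0 < N1 teamCom t ω := N1_pos teamCom t ω
  have hN' : N1 teamCom t ω ≠ 0 := ne_of_gt hN
  unfold F1c
  by_cases h : den1 σ t x (teamCom t ω) = 0
  · rw [if_pos h]
    have hSx : Sx σ t ω x = 0 := by
      have h2 : N1 teamCom t ω * Sx σ t ω x = 0 := by rw [← den1_eq]; exact h
      rcases mul_eq_zero.mp h2 with h3 | h3
      · exact absurd h3 hN'
      · exact h3
    have hSxm : Sxm σ t ω x m = 0 :=
      le_antisymm (by rw [← hSx]; exact Sxm_le_Sx σ t ω x m) (Sxm_nonneg σ t ω x m)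
    rw [hSx, hSxm, zero_mul]
  · rw [if_neg h]
    have e1 : num1 σ t x (teamCom t ω) m = N1 teamCom t ω * Sxm σ t ω x m := num1_eq σ t ω x m
    have e2 : den1 σ t x (teamCom t ω) = N1 teamCom t ω * Sx σ t ω x := den1_eq σ t ω x
    have hSx : Sx σ t ω x ≠ 0 := by
      intro h0
      apply h
      rw [e2, h0, mul_zero]
    rw [e1, e2]
    field_simp

lemma Sxg_bridge (σ : TeamStrategy M) (t : ℕ) (ω : Traj M) (x : M.X1) (u : M.U1) :
    Sxg σ t ω x u = Sxp σ t ω x * G1c σ t x (teamComP t ω) u := by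
  have hN : 0 < N1 teamComP t ω := N1_pos teamComP t ω
  have hN' : N1 teamComP t ω ≠ 0 := ne_of_gt hN
  unfold G1c
  by_cases h : den1p σ t x (teamComP t ω) = 0
  · rw [if_pos h]
    have hSx : Sxp σ t ω x = 0 := by
      have h2 : N1 teamComP t ω * Sxp σ t ω x = 0 := by rw [← den1p_eq]; exact h
      rcases mul_eq_zero.mp h2 with h3 | h3
      · exact absurd h3 hN'
      · exact h3
    have hSxg : Sxg σ t ω x u = 0 :=
      le_antisymm (by rw [← hSx]; exact Sxg_le_Sxp σ t ω x u) (Sxg_nonneg σ t ω x u)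
    rw [hSx, hSxg, zero_mul]
  · rw [if_neg h]
    have e1 : num1p σ t x (teamComP t ω) u = N1 teamComP t ω * Sxg σ t ω x u := num1p_eq σ t ω x u
    have e2 : den1p σ t x (teamComP t ω) = N1 teamComP t ω * Sxp σ t ω x := den1p_eq σ t ω x
    have hSx : Sxp σ t ω x ≠ 0 := by
      intro h0
      apply h
      rw [e2, h0, mul_zero]
    rw [e1, e2]
    field_simp

end Construct1
end TA


namespace TA
noncomputable section Match1
variable {M : Model}

lemma Sxm_bridge' (τ σ : TeamStrategy M) (hf : τ.f1 = f1pol σ) (t : ℕ) (ω : Traj M)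
    (x : M.X1) (m : Bool) :
    Sxm τ t ω x m = Sx τ t ω x * F1c σ t x (teamCom t ω) m := by
  unfold Sxm Sx
  rw [Finset.sum_mul]
  refine Finset.sum_congr rfl fun p _ => ?_
  have e : τ.f1 t (info1 t (subst1 ω p)) m
      = F1c σ t ((p (idx M t)).1) (teamCom t ω) m := by
    rw [hf]
    unfold f1pol
    rw [x1of_info1, ccOf1_info1]
    rfl
  rw [e]
  by_cases hp : (p (idx M t)).1 = x
  · rw [hp]; ring
  · rw [ind_of_not _ hp]; ring

lemma Sxg_bridge' (τ σ : TeamStrategy M) (hg : τ.g1 = g1pol σ) (t : ℕ) (ω : Traj M)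
    (x : M.X1) (u : M.U1) :
    Sxg τ t ω x u = Sxp τ t ω x * G1c σ t x (teamComP t ω) u := by
  unfold Sxg Sxp
  rw [Finset.sum_mul]
  refine Finset.sum_congr rfl fun p _ => ?_
  have e : τ.g1 t (info1p t (subst1 ω p)) u
      = G1c σ t ((p (idx M t)).1) (teamComP t ω) u := by
    rw [hg]
    unfold g1pol
    rw [x1of_info1p, ccOf1_info1p]
    rfl
  rw [e]
  by_cases hp : (p (idx M t)).1 = x
  · rw [hp]; ring
  · rw [ind_of_not _ hp]; ring

lemma Sxp_eq (σ : TeamStrategy M) (t : ℕ) (ω : Traj M) (x : M.X1) :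
    Sxp σ t ω x = Sxm σ t ω x (M1v ω t) * zeta1 M (Zv ω t) (Mv ω t) x := by
  unfold Sxp Sxm
  rw [Finset.sum_mul]
  refine Finset.sum_congr rfl fun p _ => ?_
  unfold A1pW
  rw [show M1v (subst1 ω p) t = M1v ω t from rfl, show Zv (subst1 ω p) t = Zv ω t from rfl,
    show Mv (subst1 ω p) t = Mv ω t from rfl]
  by_cases hp : (p (idx M t)).1 = x
  · rw [show X1v (subst1 ω p) t = (p (idx M t)).1 from rfl, hp]
    ring
  · rw [ind_of_not _ hp]
    ring

lemma Sxu_eq (σ : TeamStrategy M) (t : ℕ) (ht : t < M.T) (ω : Traj M) (x : M.X1) (u : M.U1) :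
    Sxu σ t ω x u = (Fintype.card M.U1 : ℝ)⁻¹ * Sxg σ t ω x u := by
  unfold Sxu
  have e : ∀ p : Om1 M, ind (p (idx M t) = (x,u)) * B1W σ t (subst1 ω p)
      = ind (p (idx M t) = (x,u)) *
        (A1pW σ t (subst1 ω p) * σ.g1 t (info1p t (subst1 ω p)) u) := by
    intro p
    refine ind_mul_congr fun hp => ?_
    unfold B1W
    rw [show U1v (subst1 ω p) t = (p (idx M t)).2 from rfl, hp]
  rw [Finset.sum_congr rfl fun p _ => e p]
  have hG : ∀ (p : Om1 M) (b : M.U1),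
      (fun p => A1pW σ t (subst1 ω p) * σ.g1 t (info1p t (subst1 ω p)) u)
        (Function.update p (idx M t) ((p (idx M t)).1, b))
      = A1pW σ t (subst1 ω p) * σ.g1 t (info1p t (subst1 ω p)) u := by
    intro p b
    dsimp only
    set p' := Function.update p (idx M t) ((p (idx M t)).1, b) with hp'
    have hx : ∀ s < t+1, X1v (subst1 ω p') s = X1v (subst1 ω p) s := by
      intro s hs
      show (p' (idx M s)).1 = (p (idx M s)).1
      by_cases h : idx M s = idx M t
      · rw [h, hp', Function.update_self]
      · rw [hp', Function.update_of_ne h]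
    have hu : ∀ s < t, U1v (subst1 ω p') s = U1v (subst1 ω p) s := by
      intro s hs
      show (p' (idx M s)).2 = (p (idx M s)).2
      have h : idx M s ≠ idx M t := idx_ne s t (by omega) ht (by omega)
      rw [hp', Function.update_of_ne h]
    have hcp : teamComP t (subst1 ω p') = teamComP t (subst1 ω p) := rfl
    rw [A1pW_det σ hcp hx hu, info1p_det hcp hx hu]
  exact sum_pin_snd (fun p => A1pW σ t (subst1 ω p) * σ.g1 t (info1p t (subst1 ω p)) u)
    (idx M t) hG x u

lemma A1W_zero (σ : TeamStrategy M) (ω : Traj M) : A1W σ 0 ω = M.init1 (X1v ω 0) := by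
  unfold A1W
  simp

lemma Sx_succ (σ : TeamStrategy M) (t : ℕ) (ht : t + 1 < M.T) (ω : Traj M) (x' : M.X1) :
    Sx σ (t+1) ω x' = ∑ v : M.X1 × M.U1,
      M.trans1 (X0v ω t) v.1 v.2 x' * ((Fintype.card M.X1 : ℝ)⁻¹ * Sxu σ t ω v.1 v.2) := by
  unfold Sx
  rw [sum_fiber_split
    (fun p : Om1 M => ind ((p (idx M (t+1))).1 = x') * A1W σ (t+1) (subst1 ω p)) (idx M t)]
  refine Finset.sum_congr rfl fun v _ => ?_
  have key : ∀ p : Om1 M,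
      ind (p (idx M t) = v) * (ind ((p (idx M (t+1))).1 = x') * A1W σ (t+1) (subst1 ω p))
      = M.trans1 (X0v ω t) v.1 v.2 x' *
        (ind ((p (idx M (t+1))).1 = x') * (ind (p (idx M t) = v) * B1W σ t (subst1 ω p))) := by
    intro p
    by_cases h1 : p (idx M t) = v
    · by_cases h2 : (p (idx M (t+1))).1 = x'
      · rw [ind_of _ h1, ind_of _ h2, A1W_succ]
        have e : tr1 t (subst1 ω p) = M.trans1 (X0v ω t) v.1 v.2 x' := by
          show M.trans1 (X0v (subst1 ω p) t) (X1v (subst1 ω p) t) (U1v (subst1 ω p) t)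
            (X1v (subst1 ω p) (t+1)) = _
          rw [show X1v (subst1 ω p) t = (p (idx M t)).1 from rfl,
            show U1v (subst1 ω p) t = (p (idx M t)).2 from rfl,
            show X1v (subst1 ω p) (t+1) = (p (idx M (t+1))).1 from rfl, h1, h2]
          rfl
        rw [e]
        ring
      · rw [ind_of_not _ h2]; ring
    · rw [ind_of_not _ h1]; ring
  rw [Finset.sum_congr rfl fun p _ => key p, ← Finset.mul_sum]
  congr 1
  have hne : idx M t ≠ idx M (t+1) := idx_ne t (t+1) (by omega) ht (by omega)
  have hG : ∀ (p : Om1 M) (w : M.X1 × M.U1),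
      (fun p => ind (p (idx M t) = v) * B1W σ t (subst1 ω p))
        (Function.update p (idx M (t+1)) w)
      = ind (p (idx M t) = v) * B1W σ t (subst1 ω p) := by
    intro p w
    dsimp only
    rw [Function.update_of_ne hne]
    congr 1
    set p' := Function.update p (idx M (t+1)) w with hp'
    have hx : ∀ s < t+1, X1v (subst1 ω p') s = X1v (subst1 ω p) s := by
      intro s hs
      show (p' (idx M s)).1 = (p (idx M s)).1
      have h : idx M s ≠ idx M (t+1) := idx_ne s (t+1) (by omega) ht (by omega)
      rw [hp', Function.update_of_ne h]
    have hu : ∀ s < t+1, U1v (subst1 ω p') s = U1v (subst1 ω p) s := by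
      intro s hs
      show (p' (idx M s)).2 = (p (idx M s)).2
      have h : idx M s ≠ idx M (t+1) := idx_ne s (t+1) (by omega) ht (by omega)
      rw [hp', Function.update_of_ne h]
    exact B1W_det σ rfl hx hu
  have hpin := sum_pin_fst (fun p : Om1 M => ind (p (idx M t) = v) * B1W σ t (subst1 ω p))
    (idx M (t+1)) hG x'
  rw [hpin]
  rfl

lemma Sxu_match_of_Sx (σ τ : TeamStrategy M) (hf : τ.f1 = f1pol σ) (hg : τ.g1 = g1pol σ)
    (t : ℕ) (ht : t < M.T) (hSx : ∀ ω x, Sx τ t ω x = Sx σ t ω x) :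
    ∀ ω x u, Sxu τ t ω x u = Sxu σ t ω x u := by
  have hSxm : ∀ ω x m, Sxm τ t ω x m = Sxm σ t ω x m := fun ω x m => by
    rw [Sxm_bridge' τ σ hf t ω x m, Sxm_bridge σ t ω x m, hSx]
  have hSxp : ∀ ω x, Sxp τ t ω x = Sxp σ t ω x := fun ω x => by
    rw [Sxp_eq, Sxp_eq, hSxm]
  have hSxg : ∀ ω x u, Sxg τ t ω x u = Sxg σ t ω x u := fun ω x u => by
    rw [Sxg_bridge' τ σ hg t ω x u, Sxg_bridge σ t ω x u, hSxp]
  intro ω x u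
  rw [Sxu_eq τ t ht, Sxu_eq σ t ht, hSxg]

lemma Sx_match (σ τ : TeamStrategy M) (hf : τ.f1 = f1pol σ) (hg : τ.g1 = g1pol σ) :
    ∀ t, t < M.T → ∀ ω x, Sx τ t ω x = Sx σ t ω x := by
  intro t
  induction t with
  | zero =>
    intro _ ω x
    unfold Sx
    exact Finset.sum_congr rfl fun p _ => by rw [A1W_zero, A1W_zero]
  | succ t ih =>
    intro ht ω x'
    have ht' : t < M.T := by omega
    have hSxu := Sxu_match_of_Sx σ τ hf hg t ht' (ih ht')
    rw [Sx_succ τ t ht, Sx_succ σ t ht]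
    exact Finset.sum_congr rfl fun v _ => by rw [hSxu]

lemma Sxu_match (σ τ : TeamStrategy M) (hf : τ.f1 = f1pol σ) (hg : τ.g1 = g1pol σ)
    (t : ℕ) (ht : t < M.T) : ∀ ω x u, Sxu τ t ω x u = Sxu σ t ω x u :=
  Sxu_match_of_Sx σ τ hf hg t ht (Sx_match σ τ hf hg t ht)

end Match1
end TA


namespace TA
noncomputable section Agent2
variable {M : Model} (IS : InfoStructure M)


def A2W (σ : TeamStrategy M) (t : ℕ) (ω : Traj M) : ℝ :=
  M.init2 (X2v ω 0) * (∏ s ∈ Finset.range t, stepF2 σ s ω) * ∏ s ∈ Finset.range t, tr2 s ω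

def A2pW (σ : TeamStrategy M) (t : ℕ) (ω : Traj M) : ℝ :=
  A2W σ t ω * σ.f2 t (info2 t ω) (M2v ω t) * zeta2 M (Zv ω t) (Mv ω t) (X2v ω t)

def B2W (σ : TeamStrategy M) (t : ℕ) (ω : Traj M) : ℝ :=
  A2pW σ t ω * σ.g2 t (info2p t ω) (U2v ω t)

lemma B2W_eq (σ : TeamStrategy M) (t : ℕ) (ω : Traj M) :
    B2W σ t ω = A2W σ t ω * stepF2 σ t ω := by
  unfold B2W A2pW stepF2
  ring

lemma A2W_succ (σ : TeamStrategy M) (t : ℕ) (ω : Traj M) :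
    A2W σ (t+1) ω = B2W σ t ω * tr2 t ω := by
  rw [B2W_eq]
  unfold A2W
  rw [Finset.prod_range_succ, Finset.prod_range_succ]
  ring

def R2W (σ : TeamStrategy M) (γ : AdvStrategy M IS.C) (t : ℕ) (ω : Traj M) : ℝ :=
  M.init0 (X0v ω 0) * M.init1 (X1v ω 0) *
  (∏ s ∈ Finset.range (t+1), stepF1 σ s ω * stepC IS γ s ω) *
  ∏ s ∈ Finset.range t, tr0 s ω * tr1 s ω

lemma probT_factor2 (σ : TeamStrategy M) (γ : AdvStrategy M IS.C) (t : ℕ) (ω : Traj M) :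
    probT IS σ γ t ω = B2W σ t ω * R2W IS σ γ t ω := by
  unfold probT R2W
  rw [B2W_eq]
  unfold A2W
  have e1 : (∏ s ∈ Finset.range (t+1), stepF1 σ s ω * stepF2 σ s ω * stepC IS γ s ω)
      = (∏ s ∈ Finset.range (t+1), stepF2 σ s ω) *
        ∏ s ∈ Finset.range (t+1), stepF1 σ s ω * stepC IS γ s ω := by
    rw [← Finset.prod_mul_distrib]
    exact Finset.prod_congr rfl fun s _ => by ring
  have e2 : (∏ s ∈ Finset.range t, tr0 s ω * tr1 s ω * tr2 s ω)
      = (∏ s ∈ Finset.range t, tr2 s ω) * ∏ s ∈ Finset.range t, tr0 s ω * tr1 s ω := by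
    rw [← Finset.prod_mul_distrib]
    exact Finset.prod_congr rfl fun s _ => by ring
  rw [e1, e2, Finset.prod_range_succ (fun s => stepF2 σ s ω) t]
  ring

lemma infoCp_asm2 (p q : Om2 M) (ρ : Rest2 M) (s : ℕ) :
    IS.infoCp s (asm2 p ρ) = IS.infoCp s (asm2 q ρ) :=
  ((IS.cdp_team s (asm2 p ρ) (asm2 q ρ)).mpr rfl).1

lemma stepC_asm2 (γ : AdvStrategy M IS.C) (p q : Om2 M) (ρ : Rest2 M) (s : ℕ) :
    stepC IS γ s (asm2 p ρ) = stepC IS γ s (asm2 q ρ) := by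
  unfold stepC
  rw [infoCp_asm2 IS p q ρ s]
  rfl

lemma R2W_asm2 (σ : TeamStrategy M) (γ : AdvStrategy M IS.C) (t : ℕ)
    (p q : Om2 M) (ρ : Rest2 M) :
    R2W IS σ γ t (asm2 p ρ) = R2W IS σ γ t (asm2 q ρ) := by
  unfold R2W
  have h : ∀ s ∈ Finset.range (t+1),
      stepF1 σ s (asm2 p ρ) * stepC IS γ s (asm2 p ρ)
        = stepF1 σ s (asm2 q ρ) * stepC IS γ s (asm2 q ρ) := fun s _ => by
    rw [stepC_asm2 IS γ p q ρ s]
    rfl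
  rw [Finset.prod_congr rfl h]
  rfl

lemma info2_det {ω ω' : Traj M} {t : ℕ} (h : teamCom t ω = teamCom t ω')
    (hx : ∀ s < t+1, X2v ω s = X2v ω' s) (hu : ∀ s < t, U2v ω s = U2v ω' s) :
    info2 t ω = info2 t ω' :=
  info2_congr (teamCom_x0 h) hx hu (teamCom_m h)
    (teamCom_z h) (teamCom_ua h) (teamCom_y h)

lemma info2p_det {ω ω' : Traj M} {t : ℕ} (h : teamComP t ω = teamComP t ω')
    (hx : ∀ s < t+1, X2v ω s = X2v ω' s) (hu : ∀ s < t, U2v ω s = U2v ω' s) :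
    info2p t ω = info2p t ω' :=
  info2p_congr (teamComP_x0 h) hx hu (teamComP_m h)
    (teamComP_z h) (teamComP_ua h) (teamComP_y h)

lemma A2W_det (σ : TeamStrategy M) {ω ω' : Traj M} {t : ℕ}
    (h : teamCom t ω = teamCom t ω')
    (hx : ∀ s < t+1, X2v ω s = X2v ω' s) (hu : ∀ s < t, U2v ω s = U2v ω' s) :
    A2W σ t ω = A2W σ t ω' := by
  unfold A2W
  rw [hx 0 (by omega)]
  have hs1 : ∀ s ∈ Finset.range t, stepF2 σ s ω = stepF2 σ s ω' := by
    intro s hs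
    rw [Finset.mem_range] at hs
    unfold stepF2
    have hteam : teamCom s ω = teamCom s ω' :=
      teamCom_congr (fun s' hs' => teamCom_x0 h s' (by omega))
        (fun s' hs' => teamCom_m h s' (by omega)) (fun s' hs' => teamCom_z h s' (by omega))
        (fun s' hs' => teamCom_ua h s' (by omega)) (fun s' hs' => teamCom_y h s' (by omega))
    have hinfo : info2 s ω = info2 s ω' :=
      info2_det hteam (fun s' hs' => hx s' (by omega)) (fun s' hs' => hu s' (by omega))
    have hinfop : info2p s ω = info2p s ω' :=
      info2p_congr (fun s' hs' => teamCom_x0 h s' (by omega)) (fun s' hs' => hx s' (by omega))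
        (fun s' hs' => hu s' (by omega)) (fun s' hs' => teamCom_m h s' (by omega))
        (fun s' hs' => teamCom_z h s' (by omega)) (fun s' hs' => teamCom_ua h s' (by omega))
        (fun s' hs' => teamCom_y h s' (by omega))
    rw [hinfo, hinfop, hx s (by omega), hu s (by omega), M2v_of_Mv (teamCom_m h s hs),
      teamCom_m h s hs, teamCom_z h s hs]
  have hs2 : ∀ s ∈ Finset.range t, tr2 s ω = tr2 s ω' := by
    intro s hs
    rw [Finset.mem_range] at hs
    unfold tr2
    rw [teamCom_x0 h s (by omega), hx s (by omega), hu s (by omega), hx (s+1) (by omega)]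
  rw [Finset.prod_congr rfl hs1, Finset.prod_congr rfl hs2]

lemma A2pW_det (σ : TeamStrategy M) {ω ω' : Traj M} {t : ℕ}
    (h : teamComP t ω = teamComP t ω')
    (hx : ∀ s < t+1, X2v ω s = X2v ω' s) (hu : ∀ s < t, U2v ω s = U2v ω' s) :
    A2pW σ t ω = A2pW σ t ω' := by
  unfold A2pW
  have hm : Mv ω t = Mv ω' t := teamComP_m h t (by omega)
  rw [A2W_det σ (teamCom_of_teamComP h) hx hu, info2_det (teamCom_of_teamComP h) hx hu,
    M2v_of_Mv hm, hm, teamComP_z h t (by omega), hx t (by omega)]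

lemma B2W_det (σ : TeamStrategy M) {ω ω' : Traj M} {t : ℕ}
    (h : teamComP t ω = teamComP t ω')
    (hx : ∀ s < t+1, X2v ω s = X2v ω' s) (hu : ∀ s < t+1, U2v ω s = U2v ω' s) :
    B2W σ t ω = B2W σ t ω' := by
  unfold B2W
  rw [A2pW_det σ h hx (fun s hs => hu s (by omega)),
    info2p_det h hx (fun s hs => hu s (by omega)), hu t (by omega)]

-- nonnegativity
lemma stepF2_nonneg (σ : TeamStrategy M) (t : ℕ) (ω : Traj M) : 0 ≤ stepF2 σ t ω :=
  mul_nonneg (mul_nonneg (σ.f2_nonneg _ _ _) (zeta2_nonneg _ _ _)) (σ.g2_nonneg _ _ _)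

lemma A2W_nonneg (σ : TeamStrategy M) (t : ℕ) (ω : Traj M) : 0 ≤ A2W σ t ω :=
  mul_nonneg (mul_nonneg (M.init2_nonneg _)
    (Finset.prod_nonneg fun s _ => stepF2_nonneg σ s ω))
    (Finset.prod_nonneg fun s _ => M.trans2_nonneg _ _ _ _)

lemma A2pW_nonneg (σ : TeamStrategy M) (t : ℕ) (ω : Traj M) : 0 ≤ A2pW σ t ω :=
  mul_nonneg (mul_nonneg (A2W_nonneg σ t ω) (σ.f2_nonneg _ _ _)) (zeta2_nonneg _ _ _)

lemma B2W_nonneg (σ : TeamStrategy M) (t : ℕ) (ω : Traj M) : 0 ≤ B2W σ t ω :=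
  mul_nonneg (A2pW_nonneg σ t ω) (σ.g2_nonneg _ _ _)


/-- Multiplicity of a common-statistic class. -/
def N2 {β : Type} (κ : ℕ → Traj M → β) (t : ℕ) (ω₀ : Traj M) : ℝ :=
  ∑ ρ : Rest2 M, ind (κ t (asm2 (om2Of ω₀) ρ) = κ t ω₀)

lemma N2_pos {β : Type} (κ : ℕ → Traj M → β) (t : ℕ) (ω₀ : Traj M) :
    0 < N2 κ t ω₀ := by
  unfold N2
  have h1 : ind (κ t (asm2 (om2Of ω₀) (rest2Of ω₀)) = κ t ω₀) = 1 := ind_of _ rfl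
  have h2 : (1:ℝ) ≤ ∑ ρ : Rest2 M, ind (κ t (asm2 (om2Of ω₀) ρ) = κ t ω₀) := by
    rw [← h1]
    exact Finset.single_le_sum
      (f := fun ρ : Rest2 M => ind (κ t (asm2 (om2Of ω₀) ρ) = κ t ω₀))
      (fun ρ _ => ind_nonneg _) (Finset.mem_univ (rest2Of ω₀))
  linarith

lemma collapse2 {β : Type} (κ : ℕ → Traj M → β)
    (hκ : ∀ (t : ℕ) (p q : Om2 M) (ρ : Rest2 M), κ t (asm2 p ρ) = κ t (asm2 q ρ))
    (t : ℕ) (ω₀ : Traj M) (x : M.X2) (G : Traj M → ℝ)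
    (hG : ∀ ω ω', κ t ω = κ t ω' → (∀ s, X2v ω s = X2v ω' s) →
      (∀ s, U2v ω s = U2v ω' s) → G ω = G ω') :
    (∑ ω : Traj M, ind (κ t ω = κ t ω₀ ∧ X2v ω t = x) * G ω)
      = N2 κ t ω₀ * ∑ p : Om2 M, ind ((p (idx M t)).1 = x) * G (subst2 ω₀ p) := by
  rw [sum_traj2 (fun ω => ind (κ t ω = κ t ω₀ ∧ X2v ω t = x) * G ω)]
  have key : ∀ (ρ : Rest2 M) (p : Om2 M),
      ind (κ t (asm2 p ρ) = κ t ω₀ ∧ X2v (asm2 p ρ) t = x) * G (asm2 p ρ)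
        = ind (κ t (asm2 (om2Of ω₀) ρ) = κ t ω₀) *
          (ind ((p (idx M t)).1 = x) * G (subst2 ω₀ p)) := by
    intro ρ p
    have hsub : κ t (subst2 ω₀ p) = κ t ω₀ := hκ t p (om2Of ω₀) (rest2Of ω₀)
    have egt : ind (κ t (asm2 p ρ) = κ t ω₀ ∧ X2v (asm2 p ρ) t = x) * G (asm2 p ρ)
        = ind (κ t (asm2 p ρ) = κ t ω₀ ∧ X2v (asm2 p ρ) t = x) * G (subst2 ω₀ p) :=
      ind_mul_congr (fun h => hG _ _ (h.1.trans hsub.symm) (fun _ => rfl) (fun _ => rfl))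
    rw [egt, ind_and]
    have e1 : ind (κ t (asm2 p ρ) = κ t ω₀) = ind (κ t (asm2 (om2Of ω₀) ρ) = κ t ω₀) :=
      ind_congr (by rw [hκ t p (om2Of ω₀) ρ])
    have e2 : ind (X2v (asm2 p ρ) t = x) = ind ((p (idx M t)).1 = x) := rfl
    rw [e1, e2, mul_assoc]
  rw [Finset.sum_congr rfl fun ρ _ => Finset.sum_congr rfl fun p _ => key ρ p]
  have e3 : ∀ ρ : Rest2 M,
      (∑ p : Om2 M, ind (κ t (asm2 (om2Of ω₀) ρ) = κ t ω₀) *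
        (ind ((p (idx M t)).1 = x) * G (subst2 ω₀ p)))
      = ind (κ t (asm2 (om2Of ω₀) ρ) = κ t ω₀) *
        ∑ p : Om2 M, ind ((p (idx M t)).1 = x) * G (subst2 ω₀ p) :=
    fun ρ => (Finset.mul_sum _ _ _).symm
  rw [Finset.sum_congr rfl fun ρ _ => e3 ρ, ← Finset.sum_mul]
  rfl


def x2of (M : Model) (t : ℕ) (h : Hist2 M) : M.X2 := h.2.1.getD t (Classical.arbitrary M.X2)
def ccOf2 (h : Hist2 M) : HistC M :=
  (h.1, h.2.2.2.1, h.2.2.2.2.1, h.2.2.2.2.2.1, h.2.2.2.2.2.2)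

lemma x2of_info2 (t : ℕ) (ω : Traj M) : x2of M t (info2 t ω) = X2v ω t := by
  unfold x2of info2
  exact pre_getD (X2v ω) (t+1) t (by omega) _

lemma x2of_info2p (t : ℕ) (ω : Traj M) : x2of M t (info2p t ω) = X2v ω t := by
  unfold x2of info2p
  exact pre_getD (X2v ω) (t+1) t (by omega) _

lemma ccOf2_info2 (t : ℕ) (ω : Traj M) : ccOf2 (info2 t ω) = teamCom t ω := rfl
lemma ccOf2_info2p (t : ℕ) (ω : Traj M) : ccOf2 (info2p t ω) = teamComP t ω := rfl

def den2 (σ : TeamStrategy M) (t : ℕ) (x : M.X2) (cc : HistC M) : ℝ :=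
  ∑ ω : Traj M, ind (teamCom t ω = cc ∧ X2v ω t = x) * A2W σ t ω
def num2 (σ : TeamStrategy M) (t : ℕ) (x : M.X2) (cc : HistC M) (m : Bool) : ℝ :=
  ∑ ω : Traj M, ind (teamCom t ω = cc ∧ X2v ω t = x) * (A2W σ t ω * σ.f2 t (info2 t ω) m)
def F2c (σ : TeamStrategy M) (t : ℕ) (x : M.X2) (cc : HistC M) (m : Bool) : ℝ :=
  if den2 σ t x cc = 0 then (2:ℝ)⁻¹ else num2 σ t x cc m / den2 σ t x cc

def den2p (σ : TeamStrategy M) (t : ℕ) (x : M.X2) (cc : HistC M) : ℝ :=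
  ∑ ω : Traj M, ind (teamComP t ω = cc ∧ X2v ω t = x) * A2pW σ t ω
def num2p (σ : TeamStrategy M) (t : ℕ) (x : M.X2) (cc : HistC M) (u : M.U2) : ℝ :=
  ∑ ω : Traj M, ind (teamComP t ω = cc ∧ X2v ω t = x) * (A2pW σ t ω * σ.g2 t (info2p t ω) u)
def G2c (σ : TeamStrategy M) (t : ℕ) (x : M.X2) (cc : HistC M) (u : M.U2) : ℝ :=
  if den2p σ t x cc = 0 then (Fintype.card M.U2 : ℝ)⁻¹ else num2p σ t x cc u / den2p σ t x cc

def f2pol (σ : TeamStrategy M) : ℕ → Hist2 M → Bool → ℝ :=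
  fun t h m => F2c σ t (x2of M t h) (ccOf2 h) m
def g2pol (σ : TeamStrategy M) : ℕ → Hist2 M → M.U2 → ℝ :=
  fun t h u => G2c σ t (x2of M t h) (ccOf2 h) u

lemma den2_nonneg (σ : TeamStrategy M) (t x cc) : 0 ≤ den2 σ t x cc :=
  Finset.sum_nonneg fun ω _ => mul_nonneg (ind_nonneg _) (A2W_nonneg σ t ω)
lemma num2_nonneg (σ : TeamStrategy M) (t x cc m) : 0 ≤ num2 σ t x cc m :=
  Finset.sum_nonneg fun ω _ => mul_nonneg (ind_nonneg _)
    (mul_nonneg (A2W_nonneg σ t ω) (σ.f2_nonneg _ _ _))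
lemma den2p_nonneg (σ : TeamStrategy M) (t x cc) : 0 ≤ den2p σ t x cc :=
  Finset.sum_nonneg fun ω _ => mul_nonneg (ind_nonneg _) (A2pW_nonneg σ t ω)
lemma num2p_nonneg (σ : TeamStrategy M) (t x cc u) : 0 ≤ num2p σ t x cc u :=
  Finset.sum_nonneg fun ω _ => mul_nonneg (ind_nonneg _)
    (mul_nonneg (A2pW_nonneg σ t ω) (σ.g2_nonneg _ _ _))

lemma F2c_nonneg (σ : TeamStrategy M) (t x cc m) : 0 ≤ F2c σ t x cc m := by
  unfold F2c
  split
  · norm_num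
  · exact div_nonneg (num2_nonneg σ t x cc m) (den2_nonneg σ t x cc)

lemma G2c_nonneg (σ : TeamStrategy M) (t x cc u) : 0 ≤ G2c σ t x cc u := by
  unfold G2c
  split
  · positivity
  · exact div_nonneg (num2p_nonneg σ t x cc u) (den2p_nonneg σ t x cc)

lemma num2_total (σ : TeamStrategy M) (t x cc) : ∑ m, num2 σ t x cc m = den2 σ t x cc := by
  unfold num2 den2
  rw [Finset.sum_comm]
  refine Finset.sum_congr rfl fun ω _ => ?_
  have h : ∀ m : Bool, ind (teamCom t ω = cc ∧ X2v ω t = x) * (A2W σ t ω * σ.f2 t (info2 t ω) m)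
      = ind (teamCom t ω = cc ∧ X2v ω t = x) * A2W σ t ω * σ.f2 t (info2 t ω) m := by
    intro m; ring
  rw [Finset.sum_congr rfl fun m _ => h m, ← Finset.mul_sum, σ.f2_sum, mul_one]

lemma num2p_total (σ : TeamStrategy M) (t x cc) : ∑ u, num2p σ t x cc u = den2p σ t x cc := by
  unfold num2p den2p
  rw [Finset.sum_comm]
  refine Finset.sum_congr rfl fun ω _ => ?_
  have h : ∀ u, ind (teamComP t ω = cc ∧ X2v ω t = x) * (A2pW σ t ω * σ.g2 t (info2p t ω) u)
      = ind (teamComP t ω = cc ∧ X2v ω t = x) * A2pW σ t ω * σ.g2 t (info2p t ω) u := by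
    intro u; ring
  rw [Finset.sum_congr rfl fun u _ => h u, ← Finset.mul_sum, σ.g2_sum, mul_one]

lemma F2c_sum (σ : TeamStrategy M) (t x cc) : ∑ m, F2c σ t x cc m = 1 := by
  unfold F2c
  by_cases h : den2 σ t x cc = 0
  · simp [h]
  · simp only [h, if_false]
    rw [← Finset.sum_div, num2_total, div_self h]

lemma G2c_sum (σ : TeamStrategy M) (t x cc) : ∑ u, G2c σ t x cc u = 1 := by
  unfold G2c
  by_cases h : den2p σ t x cc = 0
  · simp only [h, if_true, Finset.sum_const, Finset.card_univ, nsmul_eq_mul]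
    have : (0:ℝ) < (Fintype.card M.U2 : ℝ) := by
      have : 0 < Fintype.card M.U2 := Fintype.card_pos
      exact_mod_cast this
    field_simp
  · simp only [h, if_false]
    rw [← Finset.sum_div, num2p_total, div_self h]

-- marginals for agent 1 with truncated weights, common trajectory fixed
def S2x (σ : TeamStrategy M) (t : ℕ) (ω : Traj M) (x : M.X2) : ℝ :=
  ∑ p : Om2 M, ind ((p (idx M t)).1 = x) * A2W σ t (subst2 ω p)
def S2xm (σ : TeamStrategy M) (t : ℕ) (ω : Traj M) (x : M.X2) (m : Bool) : ℝ :=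
  ∑ p : Om2 M, ind ((p (idx M t)).1 = x) *
    (A2W σ t (subst2 ω p) * σ.f2 t (info2 t (subst2 ω p)) m)
def S2xp (σ : TeamStrategy M) (t : ℕ) (ω : Traj M) (x : M.X2) : ℝ :=
  ∑ p : Om2 M, ind ((p (idx M t)).1 = x) * A2pW σ t (subst2 ω p)
def S2xg (σ : TeamStrategy M) (t : ℕ) (ω : Traj M) (x : M.X2) (u : M.U2) : ℝ :=
  ∑ p : Om2 M, ind ((p (idx M t)).1 = x) *
    (A2pW σ t (subst2 ω p) * σ.g2 t (info2p t (subst2 ω p)) u)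
def S2xu (σ : TeamStrategy M) (t : ℕ) (ω : Traj M) (x : M.X2) (u : M.U2) : ℝ :=
  ∑ p : Om2 M, ind (p (idx M t) = (x, u)) * B2W σ t (subst2 ω p)

lemma den2_eq (σ : TeamStrategy M) (t : ℕ) (ω : Traj M) (x : M.X2) :
    den2 σ t x (teamCom t ω) = N2 teamCom t ω * S2x σ t ω x :=
  collapse2 teamCom (fun _ _ _ _ => rfl) t ω x (A2W σ t)
    (fun ω₁ ω₂ h hx hu => A2W_det σ h (fun s _ => hx s) (fun s _ => hu s))

lemma num2_eq (σ : TeamStrategy M) (t : ℕ) (ω : Traj M) (x : M.X2) (m : Bool) :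
    num2 σ t x (teamCom t ω) m = N2 teamCom t ω * S2xm σ t ω x m :=
  collapse2 teamCom (fun _ _ _ _ => rfl) t ω x
    (fun ω' => A2W σ t ω' * σ.f2 t (info2 t ω') m)
    (fun ω₁ ω₂ h hx hu => by
      rw [A2W_det σ h (fun s _ => hx s) (fun s _ => hu s),
        info2_det h (fun s _ => hx s) (fun s _ => hu s)])

lemma den2p_eq (σ : TeamStrategy M) (t : ℕ) (ω : Traj M) (x : M.X2) :
    den2p σ t x (teamComP t ω) = N2 teamComP t ω * S2xp σ t ω x :=
  collapse2 teamComP (fun _ _ _ _ => rfl) t ω x (A2pW σ t)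
    (fun ω₁ ω₂ h hx hu => A2pW_det σ h (fun s _ => hx s) (fun s _ => hu s))

lemma num2p_eq (σ : TeamStrategy M) (t : ℕ) (ω : Traj M) (x : M.X2) (u : M.U2) :
    num2p σ t x (teamComP t ω) u = N2 teamComP t ω * S2xg σ t ω x u :=
  collapse2 teamComP (fun _ _ _ _ => rfl) t ω x
    (fun ω' => A2pW σ t ω' * σ.g2 t (info2p t ω') u)
    (fun ω₁ ω₂ h hx hu => by
      rw [A2pW_det σ h (fun s _ => hx s) (fun s _ => hu s),
        info2p_det h (fun s _ => hx s) (fun s _ => hu s)])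

lemma S2x_nonneg (σ : TeamStrategy M) (t ω x) : 0 ≤ S2x σ t ω x :=
  Finset.sum_nonneg fun p _ => mul_nonneg (ind_nonneg _) (A2W_nonneg σ t _)
lemma S2xm_nonneg (σ : TeamStrategy M) (t ω x m) : 0 ≤ S2xm σ t ω x m :=
  Finset.sum_nonneg fun p _ => mul_nonneg (ind_nonneg _)
    (mul_nonneg (A2W_nonneg σ t _) (σ.f2_nonneg _ _ _))
lemma S2xp_nonneg (σ : TeamStrategy M) (t ω x) : 0 ≤ S2xp σ t ω x :=
  Finset.sum_nonneg fun p _ => mul_nonneg (ind_nonneg _) (A2pW_nonneg σ t _)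
lemma S2xg_nonneg (σ : TeamStrategy M) (t ω x u) : 0 ≤ S2xg σ t ω x u :=
  Finset.sum_nonneg fun p _ => mul_nonneg (ind_nonneg _)
    (mul_nonneg (A2pW_nonneg σ t _) (σ.g2_nonneg _ _ _))

lemma S2xm_le_S2x (σ : TeamStrategy M) (t ω x m) : S2xm σ t ω x m ≤ S2x σ t ω x := by
  refine Finset.sum_le_sum fun p _ => ?_
  refine mul_le_mul_of_nonneg_left ?_ (ind_nonneg _)
  calc A2W σ t (subst2 ω p) * σ.f2 t (info2 t (subst2 ω p)) m
      ≤ A2W σ t (subst2 ω p) * 1 :=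
        mul_le_mul_of_nonneg_left (f2_le_one σ _ _ _) (A2W_nonneg σ t _)
    _ = A2W σ t (subst2 ω p) := mul_one _

lemma S2xg_le_S2xp (σ : TeamStrategy M) (t ω x u) : S2xg σ t ω x u ≤ S2xp σ t ω x := by
  refine Finset.sum_le_sum fun p _ => ?_
  refine mul_le_mul_of_nonneg_left ?_ (ind_nonneg _)
  calc A2pW σ t (subst2 ω p) * σ.g2 t (info2p t (subst2 ω p)) u
      ≤ A2pW σ t (subst2 ω p) * 1 :=
        mul_le_mul_of_nonneg_left (g2_le_one σ _ _ _) (A2pW_nonneg σ t _)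
    _ = A2pW σ t (subst2 ω p) := mul_one _

lemma S2xm_bridge (σ : TeamStrategy M) (t : ℕ) (ω : Traj M) (x : M.X2) (m : Bool) :
    S2xm σ t ω x m = S2x σ t ω x * F2c σ t x (teamCom t ω) m := by
  have hN : 0 < N2 teamCom t ω := N2_pos teamCom t ω
  have hN' : N2 teamCom t ω ≠ 0 := ne_of_gt hN
  unfold F2c
  by_cases h : den2 σ t x (teamCom t ω) = 0
  · rw [if_pos h]
    have hS2x : S2x σ t ω x = 0 := by
      have h2 : N2 teamCom t ω * S2x σ t ω x = 0 := by rw [← den2_eq]; exact h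
      rcases mul_eq_zero.mp h2 with h3 | h3
      · exact absurd h3 hN'
      · exact h3
    have hS2xm : S2xm σ t ω x m = 0 :=
      le_antisymm (by rw [← hS2x]; exact S2xm_le_S2x σ t ω x m) (S2xm_nonneg σ t ω x m)
    rw [hS2x, hS2xm, zero_mul]
  · rw [if_neg h]
    have e1 : num2 σ t x (teamCom t ω) m = N2 teamCom t ω * S2xm σ t ω x m := num2_eq σ t ω x m
    have e2 : den2 σ t x (teamCom t ω) = N2 teamCom t ω * S2x σ t ω x := den2_eq σ t ω x
    have hS2x : S2x σ t ω x ≠ 0 := by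
      intro h0
      apply h
      rw [e2, h0, mul_zero]
    rw [e1, e2]
    field_simp

lemma S2xg_bridge (σ : TeamStrategy M) (t : ℕ) (ω : Traj M) (x : M.X2) (u : M.U2) :
    S2xg σ t ω x u = S2xp σ t ω x * G2c σ t x (teamComP t ω) u := by
  have hN : 0 < N2 teamComP t ω := N2_pos teamComP t ω
  have hN' : N2 teamComP t ω ≠ 0 := ne_of_gt hN
  unfold G2c
  by_cases h : den2p σ t x (teamComP t ω) = 0
  · rw [if_pos h]
    have hS2x : S2xp σ t ω x = 0 := by
      have h2 : N2 teamComP t ω * S2xp σ t ω x = 0 := by rw [← den2p_eq]; exact h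
      rcases mul_eq_zero.mp h2 with h3 | h3
      · exact absurd h3 hN'
      · exact h3
    have hS2xg : S2xg σ t ω x u = 0 :=
      le_antisymm (by rw [← hS2x]; exact S2xg_le_S2xp σ t ω x u) (S2xg_nonneg σ t ω x u)
    rw [hS2x, hS2xg, zero_mul]
  · rw [if_neg h]
    have e1 : num2p σ t x (teamComP t ω) u = N2 teamComP t ω * S2xg σ t ω x u := num2p_eq σ t ω x u
    have e2 : den2p σ t x (teamComP t ω) = N2 teamComP t ω * S2xp σ t ω x := den2p_eq σ t ω x
    have hS2x : S2xp σ t ω x ≠ 0 := by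
      intro h0
      apply h
      rw [e2, h0, mul_zero]
    rw [e1, e2]
    field_simp


lemma S2xm_bridge' (τ σ : TeamStrategy M) (hf : τ.f2 = f2pol σ) (t : ℕ) (ω : Traj M)
    (x : M.X2) (m : Bool) :
    S2xm τ t ω x m = S2x τ t ω x * F2c σ t x (teamCom t ω) m := by
  unfold S2xm S2x
  rw [Finset.sum_mul]
  refine Finset.sum_congr rfl fun p _ => ?_
  have e : τ.f2 t (info2 t (subst2 ω p)) m
      = F2c σ t ((p (idx M t)).1) (teamCom t ω) m := by
    rw [hf]
    unfold f2pol
    rw [x2of_info2, ccOf2_info2]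
    rfl
  rw [e]
  by_cases hp : (p (idx M t)).1 = x
  · rw [hp]; ring
  · rw [ind_of_not _ hp]; ring

lemma S2xg_bridge' (τ σ : TeamStrategy M) (hg : τ.g2 = g2pol σ) (t : ℕ) (ω : Traj M)
    (x : M.X2) (u : M.U2) :
    S2xg τ t ω x u = S2xp τ t ω x * G2c σ t x (teamComP t ω) u := by
  unfold S2xg S2xp
  rw [Finset.sum_mul]
  refine Finset.sum_congr rfl fun p _ => ?_
  have e : τ.g2 t (info2p t (subst2 ω p)) u
      = G2c σ t ((p (idx M t)).1) (teamComP t ω) u := by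
    rw [hg]
    unfold g2pol
    rw [x2of_info2p, ccOf2_info2p]
    rfl
  rw [e]
  by_cases hp : (p (idx M t)).1 = x
  · rw [hp]; ring
  · rw [ind_of_not _ hp]; ring

lemma S2xp_eq (σ : TeamStrategy M) (t : ℕ) (ω : Traj M) (x : M.X2) :
    S2xp σ t ω x = S2xm σ t ω x (M2v ω t) * zeta2 M (Zv ω t) (Mv ω t) x := by
  unfold S2xp S2xm
  rw [Finset.sum_mul]
  refine Finset.sum_congr rfl fun p _ => ?_
  unfold A2pW
  rw [show M2v (subst2 ω p) t = M2v ω t from rfl, show Zv (subst2 ω p) t = Zv ω t from rfl,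
    show Mv (subst2 ω p) t = Mv ω t from rfl]
  by_cases hp : (p (idx M t)).1 = x
  · rw [show X2v (subst2 ω p) t = (p (idx M t)).1 from rfl, hp]
    ring
  · rw [ind_of_not _ hp]
    ring

lemma S2xu_eq (σ : TeamStrategy M) (t : ℕ) (ht : t < M.T) (ω : Traj M) (x : M.X2) (u : M.U2) :
    S2xu σ t ω x u = (Fintype.card M.U2 : ℝ)⁻¹ * S2xg σ t ω x u := by
  unfold S2xu
  have e : ∀ p : Om2 M, ind (p (idx M t) = (x,u)) * B2W σ t (subst2 ω p)
      = ind (p (idx M t) = (x,u)) *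
        (A2pW σ t (subst2 ω p) * σ.g2 t (info2p t (subst2 ω p)) u) := by
    intro p
    refine ind_mul_congr fun hp => ?_
    unfold B2W
    rw [show U2v (subst2 ω p) t = (p (idx M t)).2 from rfl, hp]
  rw [Finset.sum_congr rfl fun p _ => e p]
  have hG : ∀ (p : Om2 M) (b : M.U2),
      (fun p => A2pW σ t (subst2 ω p) * σ.g2 t (info2p t (subst2 ω p)) u)
        (Function.update p (idx M t) ((p (idx M t)).1, b))
      = A2pW σ t (subst2 ω p) * σ.g2 t (info2p t (subst2 ω p)) u := by
    intro p b
    dsimp only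
    set p' := Function.update p (idx M t) ((p (idx M t)).1, b) with hp'
    have hx : ∀ s < t+1, X2v (subst2 ω p') s = X2v (subst2 ω p) s := by
      intro s hs
      show (p' (idx M s)).1 = (p (idx M s)).1
      by_cases h : idx M s = idx M t
      · rw [h, hp', Function.update_self]
      · rw [hp', Function.update_of_ne h]
    have hu : ∀ s < t, U2v (subst2 ω p') s = U2v (subst2 ω p) s := by
      intro s hs
      show (p' (idx M s)).2 = (p (idx M s)).2
      have h : idx M s ≠ idx M t := idx_ne s t (by omega) ht (by omega)
      rw [hp', Function.update_of_ne h]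
    have hcp : teamComP t (subst2 ω p') = teamComP t (subst2 ω p) := rfl
    rw [A2pW_det σ hcp hx hu, info2p_det hcp hx hu]
  exact sum_pin_snd (fun p => A2pW σ t (subst2 ω p) * σ.g2 t (info2p t (subst2 ω p)) u)
    (idx M t) hG x u

lemma A2W_zero (σ : TeamStrategy M) (ω : Traj M) : A2W σ 0 ω = M.init2 (X2v ω 0) := by
  unfold A2W
  simp

lemma S2x_succ (σ : TeamStrategy M) (t : ℕ) (ht : t + 1 < M.T) (ω : Traj M) (x' : M.X2) :
    S2x σ (t+1) ω x' = ∑ v : M.X2 × M.U2,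
      M.trans2 (X0v ω t) v.1 v.2 x' * ((Fintype.card M.X2 : ℝ)⁻¹ * S2xu σ t ω v.1 v.2) := by
  unfold S2x
  rw [sum_fiber_split
    (fun p : Om2 M => ind ((p (idx M (t+1))).1 = x') * A2W σ (t+1) (subst2 ω p)) (idx M t)]
  refine Finset.sum_congr rfl fun v _ => ?_
  have key : ∀ p : Om2 M,
      ind (p (idx M t) = v) * (ind ((p (idx M (t+1))).1 = x') * A2W σ (t+1) (subst2 ω p))
      = M.trans2 (X0v ω t) v.1 v.2 x' *
        (ind ((p (idx M (t+1))).1 = x') * (ind (p (idx M t) = v) * B2W σ t (subst2 ω p))) := by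
    intro p
    by_cases h1 : p (idx M t) = v
    · by_cases h2 : (p (idx M (t+1))).1 = x'
      · rw [ind_of _ h1, ind_of _ h2, A2W_succ]
        have e : tr2 t (subst2 ω p) = M.trans2 (X0v ω t) v.1 v.2 x' := by
          show M.trans2 (X0v (subst2 ω p) t) (X2v (subst2 ω p) t) (U2v (subst2 ω p) t)
            (X2v (subst2 ω p) (t+1)) = _
          rw [show X2v (subst2 ω p) t = (p (idx M t)).1 from rfl,
            show U2v (subst2 ω p) t = (p (idx M t)).2 from rfl,
            show X2v (subst2 ω p) (t+1) = (p (idx M (t+1))).1 from rfl, h1, h2]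
          rfl
        rw [e]
        ring
      · rw [ind_of_not _ h2]; ring
    · rw [ind_of_not _ h1]; ring
  rw [Finset.sum_congr rfl fun p _ => key p, ← Finset.mul_sum]
  congr 1
  have hne : idx M t ≠ idx M (t+1) := idx_ne t (t+1) (by omega) ht (by omega)
  have hG : ∀ (p : Om2 M) (w : M.X2 × M.U2),
      (fun p => ind (p (idx M t) = v) * B2W σ t (subst2 ω p))
        (Function.update p (idx M (t+1)) w)
      = ind (p (idx M t) = v) * B2W σ t (subst2 ω p) := by
    intro p w
    dsimp only
    rw [Function.update_of_ne hne]
    congr 1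
    set p' := Function.update p (idx M (t+1)) w with hp'
    have hx : ∀ s < t+1, X2v (subst2 ω p') s = X2v (subst2 ω p) s := by
      intro s hs
      show (p' (idx M s)).1 = (p (idx M s)).1
      have h : idx M s ≠ idx M (t+1) := idx_ne s (t+1) (by omega) ht (by omega)
      rw [hp', Function.update_of_ne h]
    have hu : ∀ s < t+1, U2v (subst2 ω p') s = U2v (subst2 ω p) s := by
      intro s hs
      show (p' (idx M s)).2 = (p (idx M s)).2
      have h : idx M s ≠ idx M (t+1) := idx_ne s (t+1) (by omega) ht (by omega)
      rw [hp', Function.update_of_ne h]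
    exact B2W_det σ rfl hx hu
  have hpin := sum_pin_fst (fun p : Om2 M => ind (p (idx M t) = v) * B2W σ t (subst2 ω p))
    (idx M (t+1)) hG x'
  rw [hpin]
  rfl

lemma S2xu_match_of_S2x (σ τ : TeamStrategy M) (hf : τ.f2 = f2pol σ) (hg : τ.g2 = g2pol σ)
    (t : ℕ) (ht : t < M.T) (hS2x : ∀ ω x, S2x τ t ω x = S2x σ t ω x) :
    ∀ ω x u, S2xu τ t ω x u = S2xu σ t ω x u := by
  have hS2xm : ∀ ω x m, S2xm τ t ω x m = S2xm σ t ω x m := fun ω x m => by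
    rw [S2xm_bridge' τ σ hf t ω x m, S2xm_bridge σ t ω x m, hS2x]
  have hS2xp : ∀ ω x, S2xp τ t ω x = S2xp σ t ω x := fun ω x => by
    rw [S2xp_eq, S2xp_eq, hS2xm]
  have hS2xg : ∀ ω x u, S2xg τ t ω x u = S2xg σ t ω x u := fun ω x u => by
    rw [S2xg_bridge' τ σ hg t ω x u, S2xg_bridge σ t ω x u, hS2xp]
  intro ω x u
  rw [S2xu_eq τ t ht, S2xu_eq σ t ht, hS2xg]

lemma S2x_match (σ τ : TeamStrategy M) (hf : τ.f2 = f2pol σ) (hg : τ.g2 = g2pol σ) :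
    ∀ t, t < M.T → ∀ ω x, S2x τ t ω x = S2x σ t ω x := by
  intro t
  induction t with
  | zero =>
    intro _ ω x
    unfold S2x
    exact Finset.sum_congr rfl fun p _ => by rw [A2W_zero, A2W_zero]
  | succ t ih =>
    intro ht ω x'
    have ht' : t < M.T := by omega
    have hS2xu := S2xu_match_of_S2x σ τ hf hg t ht' (ih ht')
    rw [S2x_succ τ t ht, S2x_succ σ t ht]
    exact Finset.sum_congr rfl fun v _ => by rw [hS2xu]

lemma S2xu_match (σ τ : TeamStrategy M) (hf : τ.f2 = f2pol σ) (hg : τ.g2 = g2pol σ)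
    (t : ℕ) (ht : t < M.T) : ∀ ω x u, S2xu τ t ω x u = S2xu σ t ω x u :=
  S2xu_match_of_S2x σ τ hf hg t ht (S2x_match σ τ hf hg t ht)


end Agent2
end TA


namespace TA
noncomputable section Tel1
variable {M : Model} (IS : InfoStructure M)

lemma infoCp_det {ω ω' : Traj M} {t : ℕ} (h : teamComP t ω = teamComP t ω') :
    IS.infoCp t ω = IS.infoCp t ω' :=
  ((IS.cdp_team t ω ω').mpr h).1

lemma probT_congr (σ : TeamStrategy M) (γ : AdvStrategy M IS.C) {t : ℕ} {ω ω' : Traj M}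
    (h0 : ∀ r < t+1, X0v ω r = X0v ω' r) (h1 : ∀ r < t+1, X1v ω r = X1v ω' r)
    (h2 : ∀ r < t+1, X2v ω r = X2v ω' r) (hm : ∀ r < t+1, Mv ω r = Mv ω' r)
    (hz : ∀ r < t+1, Zv ω r = Zv ω' r) (hy : ∀ r < t+1, Yv ω r = Yv ω' r)
    (hu1 : ∀ r < t+1, U1v ω r = U1v ω' r) (hu2 : ∀ r < t+1, U2v ω r = U2v ω' r)
    (ha : ∀ r < t+1, UAv ω r = UAv ω' r) :
    probT IS σ γ t ω = probT IS σ γ t ω' := by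
  unfold probT
  rw [h0 0 (by omega), h1 0 (by omega), h2 0 (by omega)]
  have hstep : ∀ r ∈ Finset.range (t+1),
      stepF1 σ r ω * stepF2 σ r ω * stepC IS γ r ω
        = stepF1 σ r ω' * stepF2 σ r ω' * stepC IS γ r ω' := by
    intro r hr
    rw [Finset.mem_range] at hr
    have e1 : info1 r ω = info1 r ω' :=
      info1_congr (fun q hq => h0 q (by omega)) (fun q hq => h1 q (by omega))
        (fun q hq => hu1 q (by omega)) (fun q hq => hm q (by omega))
        (fun q hq => hz q (by omega)) (fun q hq => ha q (by omega))
        (fun q hq => hy q (by omega))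
    have e1p : info1p r ω = info1p r ω' :=
      info1p_congr (fun q hq => h0 q (by omega)) (fun q hq => h1 q (by omega))
        (fun q hq => hu1 q (by omega)) (fun q hq => hm q (by omega))
        (fun q hq => hz q (by omega)) (fun q hq => ha q (by omega))
        (fun q hq => hy q (by omega))
    have e2 : info2 r ω = info2 r ω' :=
      info2_congr (fun q hq => h0 q (by omega)) (fun q hq => h2 q (by omega))
        (fun q hq => hu2 q (by omega)) (fun q hq => hm q (by omega))
        (fun q hq => hz q (by omega)) (fun q hq => ha q (by omega))
        (fun q hq => hy q (by omega))
    have e2p : info2p r ω = info2p r ω' :=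
      info2p_congr (fun q hq => h0 q (by omega)) (fun q hq => h2 q (by omega))
        (fun q hq => hu2 q (by omega)) (fun q hq => hm q (by omega))
        (fun q hq => hz q (by omega)) (fun q hq => ha q (by omega))
        (fun q hq => hy q (by omega))
    have ecp : IS.infoCp r ω = IS.infoCp r ω' :=
      infoCp_det IS (teamComP_congr (fun q hq => h0 q (by omega)) (fun q hq => hm q (by omega))
        (fun q hq => hz q (by omega)) (fun q hq => ha q (by omega)) (fun q hq => hy q (by omega)))
    unfold stepF1 stepF2 stepC
    rw [e1, e1p, e2, e2p, ecp, M1v_of_Mv (hm r (by omega)), M2v_of_Mv (hm r (by omega)),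
      hm r (by omega), hz r (by omega), h0 r (by omega), h1 r (by omega), h2 r (by omega),
      hu1 r (by omega), hu2 r (by omega), hy r (by omega), ha r (by omega)]
  have htr : ∀ r ∈ Finset.range t,
      tr0 r ω * tr1 r ω * tr2 r ω = tr0 r ω' * tr1 r ω' * tr2 r ω' := by
    intro r hr
    rw [Finset.mem_range] at hr
    unfold tr0 tr1 tr2
    rw [h0 r (by omega), h0 (r+1) (by omega), h1 r (by omega), h1 (r+1) (by omega),
      h2 r (by omega), h2 (r+1) (by omega), hu1 r (by omega), hu2 r (by omega),
      ha r (by omega)]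
  rw [Finset.prod_congr rfl hstep, Finset.prod_congr rfl htr]

lemma probT_succ (σ : TeamStrategy M) (γ : AdvStrategy M IS.C) (s : ℕ) (ω : Traj M) :
    probT IS σ γ (s+1) ω = probT IS σ γ s ω *
      (tr0 s ω * tr1 s ω * tr2 s ω *
        (stepF1 σ (s+1) ω * stepF2 σ (s+1) ω * stepC IS γ (s+1) ω)) := by
  unfold probT
  rw [Finset.prod_range_succ (fun r => stepF1 σ r ω * stepF2 σ r ω * stepC IS γ r ω) (s+1),
    Finset.prod_range_succ (fun r => tr0 r ω * tr1 r ω * tr2 r ω) s]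
  ring

end Tel1
end TA


namespace TA
noncomputable section Kernel
variable {M : Model} (IS : InfoStructure M)

lemma kernel_sum (σ : TeamStrategy M) (γ : AdvStrategy M IS.C) (s : ℕ) (hs : s + 1 < M.T)
    (G : Fin M.T → Sl M) :
    (∑ v : Sl M,
      tr0 s (ofSl (Function.update G (idx M (s+1)) v)) *
      tr1 s (ofSl (Function.update G (idx M (s+1)) v)) *
      tr2 s (ofSl (Function.update G (idx M (s+1)) v)) *
      (stepF1 σ (s+1) (ofSl (Function.update G (idx M (s+1)) v)) *
       stepF2 σ (s+1) (ofSl (Function.update G (idx M (s+1)) v)) *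
       stepC IS γ (s+1) (ofSl (Function.update G (idx M (s+1)) v)))) = 1 := by
  classical
  set bA : M.X1 := Classical.arbitrary _ with hbA
  set cA : M.X2 := Classical.arbitrary _ with hcA
  set yA : M.Y := Classical.arbitrary _ with hyA
  set uA : M.U1 := Classical.arbitrary _ with huA
  set vA : M.U2 := Classical.arbitrary _ with hvA
  set wA : M.Ua := Classical.arbitrary _ with hwA
  have hne' : ∀ r : ℕ, r ≤ s → idx M r ≠ idx M (s+1) :=
    fun r hr => idx_ne r (s+1) (by omega) hs (by omega)
  have hbase : ∀ (v : Sl M) (r : ℕ), r ≤ s →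
      (Function.update G (idx M (s+1)) v) (idx M r) = G (idx M r) :=
    fun v r hr => Function.update_of_ne (hne' r hr) _ _
  have hown : ∀ v : Sl M, (Function.update G (idx M (s+1)) v) (idx M (s+1)) = v :=
    fun v => Function.update_self _ _ _
  -- generic slice congruences
  have hax0 : ∀ (v v' : Sl M), v.1 = v'.1 → ∀ r < s+2,
      X0v (ofSl (Function.update G (idx M (s+1)) v)) r
        = X0v (ofSl (Function.update G (idx M (s+1)) v')) r := by
    intro v v' h r hr
    by_cases h' : r ≤ s
    · show ((Function.update G (idx M (s+1)) v) (idx M r)).1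
        = ((Function.update G (idx M (s+1)) v') (idx M r)).1
      rw [hbase v r h', hbase v' r h']
    · have : r = s+1 := by omega
      subst this
      show ((Function.update G (idx M (s+1)) v) (idx M (s+1))).1
        = ((Function.update G (idx M (s+1)) v') (idx M (s+1))).1
      rw [hown, hown, h]
  have hax1 : ∀ (v v' : Sl M), v.2.1 = v'.2.1 → ∀ r < s+2,
      X1v (ofSl (Function.update G (idx M (s+1)) v)) r
        = X1v (ofSl (Function.update G (idx M (s+1)) v')) r := by
    intro v v' h r hr
    by_cases h' : r ≤ s
    · show ((Function.update G (idx M (s+1)) v) (idx M r)).2.1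
        = ((Function.update G (idx M (s+1)) v') (idx M r)).2.1
      rw [hbase v r h', hbase v' r h']
    · have : r = s+1 := by omega
      subst this
      show ((Function.update G (idx M (s+1)) v) (idx M (s+1))).2.1
        = ((Function.update G (idx M (s+1)) v') (idx M (s+1))).2.1
      rw [hown, hown, h]
  have hax2 : ∀ (v v' : Sl M), v.2.2.1 = v'.2.2.1 → ∀ r < s+2,
      X2v (ofSl (Function.update G (idx M (s+1)) v)) r
        = X2v (ofSl (Function.update G (idx M (s+1)) v')) r := by
    intro v v' h r hr
    by_cases h' : r ≤ s
    · show ((Function.update G (idx M (s+1)) v) (idx M r)).2.2.1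
        = ((Function.update G (idx M (s+1)) v') (idx M r)).2.2.1
      rw [hbase v r h', hbase v' r h']
    · have : r = s+1 := by omega
      subst this
      show ((Function.update G (idx M (s+1)) v) (idx M (s+1))).2.2.1
        = ((Function.update G (idx M (s+1)) v') (idx M (s+1))).2.2.1
      rw [hown, hown, h]
  have ham : ∀ (v v' : Sl M), v.2.2.2.1 = v'.2.2.2.1 → v.2.2.2.2.1 = v'.2.2.2.2.1 →
      ∀ r < s+2,
      Mv (ofSl (Function.update G (idx M (s+1)) v)) r
        = Mv (ofSl (Function.update G (idx M (s+1)) v')) r := by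
    intro v v' h h2 r hr
    by_cases h' : r ≤ s
    · show (((Function.update G (idx M (s+1)) v) (idx M r)).2.2.2.1,
        ((Function.update G (idx M (s+1)) v) (idx M r)).2.2.2.2.1)
        = (((Function.update G (idx M (s+1)) v') (idx M r)).2.2.2.1,
        ((Function.update G (idx M (s+1)) v') (idx M r)).2.2.2.2.1)
      rw [hbase v r h', hbase v' r h']
    · have : r = s+1 := by omega
      subst this
      show (((Function.update G (idx M (s+1)) v) (idx M (s+1))).2.2.2.1,
        ((Function.update G (idx M (s+1)) v) (idx M (s+1))).2.2.2.2.1)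
        = (((Function.update G (idx M (s+1)) v') (idx M (s+1))).2.2.2.1,
        ((Function.update G (idx M (s+1)) v') (idx M (s+1))).2.2.2.2.1)
      rw [hown, hown, h, h2]
  have haz : ∀ (v v' : Sl M), v.2.2.2.2.2.1 = v'.2.2.2.2.2.1 → ∀ r < s+2,
      Zv (ofSl (Function.update G (idx M (s+1)) v)) r
        = Zv (ofSl (Function.update G (idx M (s+1)) v')) r := by
    intro v v' h r hr
    by_cases h' : r ≤ s
    · show ((Function.update G (idx M (s+1)) v) (idx M r)).2.2.2.2.2.1
        = ((Function.update G (idx M (s+1)) v') (idx M r)).2.2.2.2.2.1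
      rw [hbase v r h', hbase v' r h']
    · have : r = s+1 := by omega
      subst this
      show ((Function.update G (idx M (s+1)) v) (idx M (s+1))).2.2.2.2.2.1
        = ((Function.update G (idx M (s+1)) v') (idx M (s+1))).2.2.2.2.2.1
      rw [hown, hown, h]
  have hay : ∀ (v v' : Sl M), v.2.2.2.2.2.2.1 = v'.2.2.2.2.2.2.1 → ∀ r < s+2,
      Yv (ofSl (Function.update G (idx M (s+1)) v)) r
        = Yv (ofSl (Function.update G (idx M (s+1)) v')) r := by
    intro v v' h r hr
    by_cases h' : r ≤ s
    · show ((Function.update G (idx M (s+1)) v) (idx M r)).2.2.2.2.2.2.1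
        = ((Function.update G (idx M (s+1)) v') (idx M r)).2.2.2.2.2.2.1
      rw [hbase v r h', hbase v' r h']
    · have : r = s+1 := by omega
      subst this
      show ((Function.update G (idx M (s+1)) v) (idx M (s+1))).2.2.2.2.2.2.1
        = ((Function.update G (idx M (s+1)) v') (idx M (s+1))).2.2.2.2.2.2.1
      rw [hown, hown, h]
  have hau1 : ∀ (v v' : Sl M), ∀ r < s+1,
      U1v (ofSl (Function.update G (idx M (s+1)) v)) r
        = U1v (ofSl (Function.update G (idx M (s+1)) v')) r := by
    intro v v' r hr
    show ((Function.update G (idx M (s+1)) v) (idx M r)).2.2.2.2.2.2.2.1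
      = ((Function.update G (idx M (s+1)) v') (idx M r)).2.2.2.2.2.2.2.1
    rw [hbase v r (by omega), hbase v' r (by omega)]
  have hau2 : ∀ (v v' : Sl M), ∀ r < s+1,
      U2v (ofSl (Function.update G (idx M (s+1)) v)) r
        = U2v (ofSl (Function.update G (idx M (s+1)) v')) r := by
    intro v v' r hr
    show ((Function.update G (idx M (s+1)) v) (idx M r)).2.2.2.2.2.2.2.2.1
      = ((Function.update G (idx M (s+1)) v') (idx M r)).2.2.2.2.2.2.2.2.1
    rw [hbase v r (by omega), hbase v' r (by omega)]
  have haua : ∀ (v v' : Sl M), ∀ r < s+1,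
      UAv (ofSl (Function.update G (idx M (s+1)) v)) r
        = UAv (ofSl (Function.update G (idx M (s+1)) v')) r := by
    intro v v' r hr
    show ((Function.update G (idx M (s+1)) v) (idx M r)).2.2.2.2.2.2.2.2.2
      = ((Function.update G (idx M (s+1)) v') (idx M r)).2.2.2.2.2.2.2.2.2
    rw [hbase v r (by omega), hbase v' r (by omega)]
  have hamB : ∀ (v v' : Sl M), ∀ r < s+1,
      Mv (ofSl (Function.update G (idx M (s+1)) v)) r
        = Mv (ofSl (Function.update G (idx M (s+1)) v')) r := by
    intro v v' r hr
    show (((Function.update G (idx M (s+1)) v) (idx M r)).2.2.2.1,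
      ((Function.update G (idx M (s+1)) v) (idx M r)).2.2.2.2.1)
      = (((Function.update G (idx M (s+1)) v') (idx M r)).2.2.2.1,
      ((Function.update G (idx M (s+1)) v') (idx M r)).2.2.2.2.1)
    rw [hbase v r (by omega), hbase v' r (by omega)]
  have hazB : ∀ (v v' : Sl M), ∀ r < s+1,
      Zv (ofSl (Function.update G (idx M (s+1)) v)) r
        = Zv (ofSl (Function.update G (idx M (s+1)) v')) r := by
    intro v v' r hr
    show ((Function.update G (idx M (s+1)) v) (idx M r)).2.2.2.2.2.1
      = ((Function.update G (idx M (s+1)) v') (idx M r)).2.2.2.2.2.1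
    rw [hbase v r (by omega), hbase v' r (by omega)]
  have hayB : ∀ (v v' : Sl M), ∀ r < s+1,
      Yv (ofSl (Function.update G (idx M (s+1)) v)) r
        = Yv (ofSl (Function.update G (idx M (s+1)) v')) r := by
    intro v v' r hr
    show ((Function.update G (idx M (s+1)) v) (idx M r)).2.2.2.2.2.2.1
      = ((Function.update G (idx M (s+1)) v') (idx M r)).2.2.2.2.2.2.1
    rw [hbase v r (by omega), hbase v' r (by omega)]
  have master : ∀ v : Sl M,
      tr0 s (ofSl (Function.update G (idx M (s+1)) v)) *
      tr1 s (ofSl (Function.update G (idx M (s+1)) v)) *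
      tr2 s (ofSl (Function.update G (idx M (s+1)) v)) *
      (stepF1 σ (s+1) (ofSl (Function.update G (idx M (s+1)) v)) *
       stepF2 σ (s+1) (ofSl (Function.update G (idx M (s+1)) v)) *
       stepC IS γ (s+1) (ofSl (Function.update G (idx M (s+1)) v)))
      = M.trans0 (X0v (ofSl G) s) (UAv (ofSl G) s) v.1 *
        (M.trans1 (X0v (ofSl G) s) (X1v (ofSl G) s) (U1v (ofSl G) s) v.2.1 *
        (M.trans2 (X0v (ofSl G) s) (X2v (ofSl G) s) (U2v (ofSl G) s) v.2.2.1 *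
        (σ.f1 (s+1) (info1 (s+1) (ofSl (Function.update G (idx M (s+1))
            (v.1, v.2.1, v.2.2.1, false, false, none, yA, uA, vA, wA)))) v.2.2.2.1 *
        (σ.f2 (s+1) (info2 (s+1) (ofSl (Function.update G (idx M (s+1))
            (v.1, v.2.1, v.2.2.1, false, false, none, yA, uA, vA, wA)))) v.2.2.2.2.1 *
        (zKer M v.1 (v.2.2.2.1, v.2.2.2.2.1) (v.2.1, v.2.2.1) v.2.2.2.2.2.1 *
        (M.obs v.2.2.2.2.2.1 (v.2.2.2.1, v.2.2.2.2.1) v.1 v.2.2.2.2.2.2.1 *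
        (σ.g1 (s+1) (info1p (s+1) (ofSl (Function.update G (idx M (s+1))
            (v.1, v.2.1, v.2.2.1, v.2.2.2.1, v.2.2.2.2.1, v.2.2.2.2.2.1, v.2.2.2.2.2.2.1,
              uA, vA, wA)))) v.2.2.2.2.2.2.2.1 *
        (σ.g2 (s+1) (info2p (s+1) (ofSl (Function.update G (idx M (s+1))
            (v.1, v.2.1, v.2.2.1, v.2.2.2.1, v.2.2.2.2.1, v.2.2.2.2.2.1, v.2.2.2.2.2.2.1,
              uA, vA, wA)))) v.2.2.2.2.2.2.2.2.1 *
        γ.ga (s+1) (IS.infoCp (s+1) (ofSl (Function.update G (idx M (s+1))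
            (v.1, v.2.1, v.2.2.1, v.2.2.2.1, v.2.2.2.2.1, v.2.2.2.2.2.1, v.2.2.2.2.2.2.1,
              uA, vA, wA)))) v.2.2.2.2.2.2.2.2.2)))))))) := by
    intro v
    obtain ⟨a, b, c, d, e, z, y, u1, u2, ua⟩ := v
    set V : Sl M := (a, b, c, d, e, z, y, u1, u2, ua) with hV
    set K : Sl M := (a, b, c, d, e, z, y, uA, vA, wA) with hK
    set F : Sl M := (a, b, c, false, false, none, yA, uA, vA, wA) with hF
    unfold tr0 tr1 tr2 stepF1 stepF2 stepC
    rw [show X0v (ofSl (Function.update G (idx M (s+1)) V)) s = X0v (ofSl G) s from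
        congrArg (fun w : Sl M => w.1) (hbase V s le_rfl),
      show X1v (ofSl (Function.update G (idx M (s+1)) V)) s = X1v (ofSl G) s from
        congrArg (fun w : Sl M => w.2.1) (hbase V s le_rfl),
      show X2v (ofSl (Function.update G (idx M (s+1)) V)) s = X2v (ofSl G) s from
        congrArg (fun w : Sl M => w.2.2.1) (hbase V s le_rfl),
      show U1v (ofSl (Function.update G (idx M (s+1)) V)) s = U1v (ofSl G) s from
        congrArg (fun w : Sl M => w.2.2.2.2.2.2.2.1) (hbase V s le_rfl),
      show U2v (ofSl (Function.update G (idx M (s+1)) V)) s = U2v (ofSl G) s from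
        congrArg (fun w : Sl M => w.2.2.2.2.2.2.2.2.1) (hbase V s le_rfl),
      show UAv (ofSl (Function.update G (idx M (s+1)) V)) s = UAv (ofSl G) s from
        congrArg (fun w : Sl M => w.2.2.2.2.2.2.2.2.2) (hbase V s le_rfl)]
    rw [show X0v (ofSl (Function.update G (idx M (s+1)) V)) (s+1) = a from
        congrArg (fun w : Sl M => w.1) (hown V),
      show X1v (ofSl (Function.update G (idx M (s+1)) V)) (s+1) = b from
        congrArg (fun w : Sl M => w.2.1) (hown V),
      show X2v (ofSl (Function.update G (idx M (s+1)) V)) (s+1) = c from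
        congrArg (fun w : Sl M => w.2.2.1) (hown V),
      show M1v (ofSl (Function.update G (idx M (s+1)) V)) (s+1) = d from
        congrArg (fun w : Sl M => w.2.2.2.1) (hown V),
      show M2v (ofSl (Function.update G (idx M (s+1)) V)) (s+1) = e from
        congrArg (fun w : Sl M => w.2.2.2.2.1) (hown V),
      show Mv (ofSl (Function.update G (idx M (s+1)) V)) (s+1) = (d, e) from
        congrArg (fun w : Sl M => (w.2.2.2.1, w.2.2.2.2.1)) (hown V),
      show Zv (ofSl (Function.update G (idx M (s+1)) V)) (s+1) = z from
        congrArg (fun w : Sl M => w.2.2.2.2.2.1) (hown V),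
      show Yv (ofSl (Function.update G (idx M (s+1)) V)) (s+1) = y from
        congrArg (fun w : Sl M => w.2.2.2.2.2.2.1) (hown V),
      show U1v (ofSl (Function.update G (idx M (s+1)) V)) (s+1) = u1 from
        congrArg (fun w : Sl M => w.2.2.2.2.2.2.2.1) (hown V),
      show U2v (ofSl (Function.update G (idx M (s+1)) V)) (s+1) = u2 from
        congrArg (fun w : Sl M => w.2.2.2.2.2.2.2.2.1) (hown V),
      show UAv (ofSl (Function.update G (idx M (s+1)) V)) (s+1) = ua from
        congrArg (fun w : Sl M => w.2.2.2.2.2.2.2.2.2) (hown V)]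
    have e1 : info1 (s+1) (ofSl (Function.update G (idx M (s+1)) V))
        = info1 (s+1) (ofSl (Function.update G (idx M (s+1)) F)) :=
      info1_congr (hax0 V F rfl) (hax1 V F rfl) (fun r hr => hau1 V F r (by omega))
        (fun r hr => hamB V F r (by omega)) (fun r hr => hazB V F r (by omega))
        (fun r hr => haua V F r (by omega)) (fun r hr => hayB V F r (by omega))
    have e2 : info2 (s+1) (ofSl (Function.update G (idx M (s+1)) V))
        = info2 (s+1) (ofSl (Function.update G (idx M (s+1)) F)) :=
      info2_congr (hax0 V F rfl) (hax2 V F rfl) (fun r hr => hau2 V F r (by omega))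
        (fun r hr => hamB V F r (by omega)) (fun r hr => hazB V F r (by omega))
        (fun r hr => haua V F r (by omega)) (fun r hr => hayB V F r (by omega))
    have e1p : info1p (s+1) (ofSl (Function.update G (idx M (s+1)) V))
        = info1p (s+1) (ofSl (Function.update G (idx M (s+1)) K)) :=
      info1p_congr (hax0 V K rfl) (hax1 V K rfl) (fun r hr => hau1 V K r (by omega))
        (ham V K rfl rfl) (haz V K rfl) (fun r hr => haua V K r (by omega)) (hay V K rfl)
    have e2p : info2p (s+1) (ofSl (Function.update G (idx M (s+1)) V))
        = info2p (s+1) (ofSl (Function.update G (idx M (s+1)) K)) :=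
      info2p_congr (hax0 V K rfl) (hax2 V K rfl) (fun r hr => hau2 V K r (by omega))
        (ham V K rfl rfl) (haz V K rfl) (fun r hr => haua V K r (by omega)) (hay V K rfl)
    have ecp : IS.infoCp (s+1) (ofSl (Function.update G (idx M (s+1)) V))
        = IS.infoCp (s+1) (ofSl (Function.update G (idx M (s+1)) K)) :=
      infoCp_det IS (teamComP_congr (hax0 V K rfl) (ham V K rfl rfl) (haz V K rfl)
        (fun r hr => haua V K r (by omega)) (hay V K rfl))
    rw [e1, e2, e1p, e2p, ecp, zKer_split]
    dsimp only
    ring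
  rw [Finset.sum_congr rfl fun v _ => master v]
  simp only [Fintype.sum_prod_type]
  simp only [← Finset.mul_sum]
  simp only [γ.ga_sum, σ.g2_sum, σ.g1_sum, M.obs_sum, zKer_sum, σ.f2_sum, σ.f1_sum,
    M.trans2_sum, M.trans1_sum, M.trans0_sum, mul_one]

end Kernel
end TA


namespace TA
noncomputable section Peel
variable {M : Model} (IS : InfoStructure M)

lemma probT_theta_slice_inv (σ : TeamStrategy M) (γ : AdvStrategy M IS.C) {s t : ℕ}
    (hs : s + 1 < M.T) (hts : t ≤ s) (F : Fin M.T → Sl M) (v : Sl M) :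
    probT IS σ γ s (ofSl (Function.update F (idx M (s+1)) v)) *
      theta t (ofSl (Function.update F (idx M (s+1)) v))
    = probT IS σ γ s (ofSl F) * theta t (ofSl F) := by
  have hbase : ∀ r : ℕ, r ≤ s →
      (Function.update F (idx M (s+1)) v) (idx M r) = F (idx M r) :=
    fun r hr => Function.update_of_ne (idx_ne r (s+1) (by omega) hs (by omega)) _ _
  have h0 : ∀ r < s+1, X0v (ofSl (Function.update F (idx M (s+1)) v)) r = X0v (ofSl F) r :=
    fun r hr => congrArg (fun w : Sl M => w.1) (hbase r (by omega))
  have h1 : ∀ r < s+1, X1v (ofSl (Function.update F (idx M (s+1)) v)) r = X1v (ofSl F) r :=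
    fun r hr => congrArg (fun w : Sl M => w.2.1) (hbase r (by omega))
  have h2 : ∀ r < s+1, X2v (ofSl (Function.update F (idx M (s+1)) v)) r = X2v (ofSl F) r :=
    fun r hr => congrArg (fun w : Sl M => w.2.2.1) (hbase r (by omega))
  have hm : ∀ r < s+1, Mv (ofSl (Function.update F (idx M (s+1)) v)) r = Mv (ofSl F) r :=
    fun r hr => congrArg (fun w : Sl M => (w.2.2.2.1, w.2.2.2.2.1)) (hbase r (by omega))
  have hz : ∀ r < s+1, Zv (ofSl (Function.update F (idx M (s+1)) v)) r = Zv (ofSl F) r :=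
    fun r hr => congrArg (fun w : Sl M => w.2.2.2.2.2.1) (hbase r (by omega))
  have hy : ∀ r < s+1, Yv (ofSl (Function.update F (idx M (s+1)) v)) r = Yv (ofSl F) r :=
    fun r hr => congrArg (fun w : Sl M => w.2.2.2.2.2.2.1) (hbase r (by omega))
  have hu1 : ∀ r < s+1, U1v (ofSl (Function.update F (idx M (s+1)) v)) r = U1v (ofSl F) r :=
    fun r hr => congrArg (fun w : Sl M => w.2.2.2.2.2.2.2.1) (hbase r (by omega))
  have hu2 : ∀ r < s+1, U2v (ofSl (Function.update F (idx M (s+1)) v)) r = U2v (ofSl F) r :=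
    fun r hr => congrArg (fun w : Sl M => w.2.2.2.2.2.2.2.2.1) (hbase r (by omega))
  have ha : ∀ r < s+1, UAv (ofSl (Function.update F (idx M (s+1)) v)) r = UAv (ofSl F) r :=
    fun r hr => congrArg (fun w : Sl M => w.2.2.2.2.2.2.2.2.2) (hbase r (by omega))
  rw [probT_congr IS σ γ h0 h1 h2 hm hz hy hu1 hu2 ha,
    theta_congr t (h0 t (by omega)) (h1 t (by omega)) (h2 t (by omega)) (hu1 t (by omega))
      (hu2 t (by omega)) (M1v_of_Mv (hm t (by omega))) (M2v_of_Mv (hm t (by omega)))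
      (ha t (by omega))]

lemma peel (σ : TeamStrategy M) (γ : AdvStrategy M IS.C) (t s : ℕ) (hts : t ≤ s)
    (hs : s + 1 < M.T) :
    (∑ ω : Traj M, probT IS σ γ (s+1) ω * theta t ω)
      = (Fintype.card (Sl M) : ℝ)⁻¹ * ∑ ω : Traj M, probT IS σ γ s ω * theta t ω := by
  rw [sum_traj_sl (fun ω => probT IS σ γ (s+1) ω * theta t ω),
    sum_traj_sl (fun ω => probT IS σ γ s ω * theta t ω)]
  have e : ∀ F : Fin M.T → Sl M,
      probT IS σ γ (s+1) (ofSl F) * theta t (ofSl F)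
        = (probT IS σ γ s (ofSl F) * theta t (ofSl F)) *
          (tr0 s (ofSl F) * tr1 s (ofSl F) * tr2 s (ofSl F) *
            (stepF1 σ (s+1) (ofSl F) * stepF2 σ (s+1) (ofSl F) * stepC IS γ (s+1) (ofSl F))) := by
    intro F
    rw [probT_succ]
    ring
  rw [Finset.sum_congr rfl fun F _ => e F]
  exact sum_peel _ _ (idx M (s+1))
    (fun F v => probT_theta_slice_inv IS σ γ hs hts F v)
    (fun F => kernel_sum IS σ γ s hs F)

lemma tel (σ : TeamStrategy M) (γ : AdvStrategy M IS.C) (t : ℕ) (ht : t < M.T) :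
    (∑ ω : Traj M, prob σ γ IS.infoCp ω * theta t ω)
      = ((Fintype.card (Sl M) : ℝ)⁻¹)^(M.T - 1 - t) *
        ∑ ω : Traj M, probT IS σ γ t ω * theta t ω := by
  have key : ∀ k : ℕ, t + k ≤ M.T - 1 →
      (∑ ω : Traj M, probT IS σ γ (t+k) ω * theta t ω)
        = ((Fintype.card (Sl M) : ℝ)⁻¹)^k * ∑ ω : Traj M, probT IS σ γ t ω * theta t ω := by
    intro k
    induction k with
    | zero => intro _; simp
    | succ k ih =>
      intro hk
      have hk' : t + k ≤ M.T - 1 := by omega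
      have hs : (t+k) + 1 < M.T := by omega
      rw [show t + (k+1) = (t+k)+1 from rfl, peel IS σ γ t (t+k) (by omega) hs, ih hk',
        pow_succ]
      ring
  have hTt : t + (M.T - 1 - t) = M.T - 1 := by omega
  have h2 := key (M.T - 1 - t) (by omega)
  rw [hTt] at h2
  rw [Finset.sum_congr rfl fun ω _ => by rw [prob_eq_probT IS σ γ ω]]
  exact h2

end Peel
end TA


namespace TA
noncomputable section Lift
variable {M : Model} (IS : InfoStructure M)

def lift (σ : TeamStrategy M) : TeamStrategy M where
  f1 := f1pol σ
  f2 := f2pol σ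
  g1 := g1pol σ
  g2 := g2pol σ
  f1_nonneg := fun t h m => F1c_nonneg σ t _ _ m
  f2_nonneg := fun t h m => F2c_nonneg σ t _ _ m
  g1_nonneg := fun t h u => G1c_nonneg σ t _ _ u
  g2_nonneg := fun t h u => G2c_nonneg σ t _ _ u
  f1_sum := fun t h => F1c_sum σ t _ _
  f2_sum := fun t h => F2c_sum σ t _ _
  g1_sum := fun t h => G1c_sum σ t _ _
  g2_sum := fun t h => G2c_sum σ t _ _

def mid (σ : TeamStrategy M) : TeamStrategy M where
  f1 := f1pol σ
  f2 := σ.f2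
  g1 := g1pol σ
  g2 := σ.g2
  f1_nonneg := fun t h m => F1c_nonneg σ t _ _ m
  f2_nonneg := σ.f2_nonneg
  g1_nonneg := fun t h u => G1c_nonneg σ t _ _ u
  g2_nonneg := σ.g2_nonneg
  f1_sum := fun t h => F1c_sum σ t _ _
  f2_sum := σ.f2_sum
  g1_sum := fun t h => G1c_sum σ t _ _
  g2_sum := σ.g2_sum

lemma lift_simplified (σ : TeamStrategy M) : Simplified IS (lift σ) := by
  refine ⟨?_, ?_, ?_, ?_⟩
  · intro t ω ω' hx hC hD
    have hteam : teamCom t ω = teamCom t ω' := (IS.cd_team t ω ω').mp ⟨hC, hD⟩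
    funext m
    show f1pol σ t (info1 t ω) m = f1pol σ t (info1 t ω') m
    unfold f1pol
    rw [x1of_info1, x1of_info1, ccOf1_info1, ccOf1_info1, hx, hteam]
  · intro t ω ω' hx hC hD
    have hteam : teamCom t ω = teamCom t ω' := (IS.cd_team t ω ω').mp ⟨hC, hD⟩
    funext m
    show f2pol σ t (info2 t ω) m = f2pol σ t (info2 t ω') m
    unfold f2pol
    rw [x2of_info2, x2of_info2, ccOf2_info2, ccOf2_info2, hx, hteam]
  · intro t ω ω' hx hC hD
    have hteam : teamComP t ω = teamComP t ω' := (IS.cdp_team t ω ω').mp ⟨hC, hD⟩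
    funext u
    show g1pol σ t (info1p t ω) u = g1pol σ t (info1p t ω') u
    unfold g1pol
    rw [x1of_info1p, x1of_info1p, ccOf1_info1p, ccOf1_info1p, hx, hteam]
  · intro t ω ω' hx hC hD
    have hteam : teamComP t ω = teamComP t ω' := (IS.cdp_team t ω ω').mp ⟨hC, hD⟩
    funext u
    show g2pol σ t (info2p t ω) u = g2pol σ t (info2p t ω') u
    unfold g2pol
    rw [x2of_info2p, x2of_info2p, ccOf2_info2p, ccOf2_info2p, hx, hteam]

def pD1 (M : Model) : Om1 M := fun _ => Classical.arbitrary _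
def pD2 (M : Model) : Om2 M := fun _ => Classical.arbitrary _

lemma repr1 (υ : TeamStrategy M) (γ : AdvStrategy M IS.C) (t : ℕ) (ρ : Rest1 M) :
    (∑ p : Om1 M, probT IS υ γ t (asm1 p ρ) * theta t (asm1 p ρ))
      = ∑ v : M.X1 × M.U1,
          (R1W IS υ γ t (asm1 (pD1 M) ρ) * theta t (asm1 (fun _ => v) ρ)) *
            Sxu υ t (asm1 (pD1 M) ρ) v.1 v.2 := by
  have e0 : ∀ p : Om1 M, probT IS υ γ t (asm1 p ρ) * theta t (asm1 p ρ)
      = B1W υ t (asm1 p ρ) * R1W IS υ γ t (asm1 (pD1 M) ρ) * theta t (asm1 p ρ) := by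
    intro p
    rw [probT_factor1 IS υ γ t (asm1 p ρ), R1W_asm1 IS υ γ t p (pD1 M) ρ]
  rw [Finset.sum_congr rfl fun p _ => e0 p]
  rw [sum_fiber_split (fun p : Om1 M =>
    B1W υ t (asm1 p ρ) * R1W IS υ γ t (asm1 (pD1 M) ρ) * theta t (asm1 p ρ)) (idx M t)]
  refine Finset.sum_congr rfl fun v _ => ?_
  have key : ∀ p : Om1 M,
      ind (p (idx M t) = v) *
        (B1W υ t (asm1 p ρ) * R1W IS υ γ t (asm1 (pD1 M) ρ) * theta t (asm1 p ρ))
      = (R1W IS υ γ t (asm1 (pD1 M) ρ) * theta t (asm1 (fun _ => v) ρ)) *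
        (ind (p (idx M t) = v) * B1W υ t (asm1 p ρ)) := by
    intro p
    by_cases hp : p (idx M t) = v
    · have hθ : theta t (asm1 p ρ) = theta t (asm1 (fun _ => v) ρ) := by
        refine theta_congr t rfl ?_ rfl ?_ rfl rfl rfl rfl
        · show (p (idx M t)).1 = v.1
          rw [hp]
        · show (p (idx M t)).2 = v.2
          rw [hp]
      rw [hθ]
      ring
    · rw [ind_of_not _ hp]
      ring
  rw [Finset.sum_congr rfl fun p _ => key p, ← Finset.mul_sum]
  congr 1

lemma repr2 (υ : TeamStrategy M) (γ : AdvStrategy M IS.C) (t : ℕ) (ρ : Rest2 M) :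
    (∑ p : Om2 M, probT IS υ γ t (asm2 p ρ) * theta t (asm2 p ρ))
      = ∑ v : M.X2 × M.U2,
          (R2W IS υ γ t (asm2 (pD2 M) ρ) * theta t (asm2 (fun _ => v) ρ)) *
            S2xu υ t (asm2 (pD2 M) ρ) v.1 v.2 := by
  have e0 : ∀ p : Om2 M, probT IS υ γ t (asm2 p ρ) * theta t (asm2 p ρ)
      = B2W υ t (asm2 p ρ) * R2W IS υ γ t (asm2 (pD2 M) ρ) * theta t (asm2 p ρ) := by
    intro p
    rw [probT_factor2 IS υ γ t (asm2 p ρ), R2W_asm2 IS υ γ t p (pD2 M) ρ]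
  rw [Finset.sum_congr rfl fun p _ => e0 p]
  rw [sum_fiber_split (fun p : Om2 M =>
    B2W υ t (asm2 p ρ) * R2W IS υ γ t (asm2 (pD2 M) ρ) * theta t (asm2 p ρ)) (idx M t)]
  refine Finset.sum_congr rfl fun v _ => ?_
  have key : ∀ p : Om2 M,
      ind (p (idx M t) = v) *
        (B2W υ t (asm2 p ρ) * R2W IS υ γ t (asm2 (pD2 M) ρ) * theta t (asm2 p ρ))
      = (R2W IS υ γ t (asm2 (pD2 M) ρ) * theta t (asm2 (fun _ => v) ρ)) *
        (ind (p (idx M t) = v) * B2W υ t (asm2 p ρ)) := by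
    intro p
    by_cases hp : p (idx M t) = v
    · have hθ : theta t (asm2 p ρ) = theta t (asm2 (fun _ => v) ρ) := by
        refine theta_congr t rfl rfl ?_ rfl ?_ rfl rfl rfl
        · show (p (idx M t)).1 = v.1
          rw [hp]
        · show (p (idx M t)).2 = v.2
          rw [hp]
      rw [hθ]
      ring
    · rw [ind_of_not _ hp]
      ring
  rw [Finset.sum_congr rfl fun p _ => key p, ← Finset.mul_sum]
  congr 1

lemma R1W_strat {σ τ : TeamStrategy M} (hf2 : τ.f2 = σ.f2) (hg2 : τ.g2 = σ.g2)
    (γ : AdvStrategy M IS.C) (t : ℕ) (ω : Traj M) : R1W IS τ γ t ω = R1W IS σ γ t ω := by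
  unfold R1W stepF2
  rw [hf2, hg2]

lemma R2W_strat {σ τ : TeamStrategy M} (hf1 : τ.f1 = σ.f1) (hg1 : τ.g1 = σ.g1)
    (γ : AdvStrategy M IS.C) (t : ℕ) (ω : Traj M) : R2W IS τ γ t ω = R2W IS σ γ t ω := by
  unfold R2W stepF1
  rw [hf1, hg1]

lemma assembly1 (σ τ : TeamStrategy M) (hf1 : τ.f1 = f1pol σ) (hg1 : τ.g1 = g1pol σ)
    (hf2 : τ.f2 = σ.f2) (hg2 : τ.g2 = σ.g2) (γ : AdvStrategy M IS.C) (t : ℕ) (ht : t < M.T) :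
    (∑ ω : Traj M, probT IS τ γ t ω * theta t ω)
      = ∑ ω : Traj M, probT IS σ γ t ω * theta t ω := by
  rw [sum_traj1 (fun ω => probT IS τ γ t ω * theta t ω),
    sum_traj1 (fun ω => probT IS σ γ t ω * theta t ω)]
  refine Finset.sum_congr rfl fun ρ _ => ?_
  rw [repr1 IS τ γ t ρ, repr1 IS σ γ t ρ]
  refine Finset.sum_congr rfl fun v _ => ?_
  rw [Sxu_match σ τ hf1 hg1 t ht, R1W_strat IS hf2 hg2]

lemma assembly2 (σ τ : TeamStrategy M) (hf2 : τ.f2 = f2pol σ) (hg2 : τ.g2 = g2pol σ)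
    (hf1 : τ.f1 = σ.f1) (hg1 : τ.g1 = σ.g1) (γ : AdvStrategy M IS.C) (t : ℕ) (ht : t < M.T) :
    (∑ ω : Traj M, probT IS τ γ t ω * theta t ω)
      = ∑ ω : Traj M, probT IS σ γ t ω * theta t ω := by
  rw [sum_traj2 (fun ω => probT IS τ γ t ω * theta t ω),
    sum_traj2 (fun ω => probT IS σ γ t ω * theta t ω)]
  refine Finset.sum_congr rfl fun ρ _ => ?_
  rw [repr2 IS τ γ t ρ, repr2 IS σ γ t ρ]
  refine Finset.sum_congr rfl fun v _ => ?_
  rw [S2xu_match σ τ hf2 hg2 t ht, R2W_strat IS hf1 hg1]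

lemma probT_theta_lift (σ : TeamStrategy M) (γ : AdvStrategy M IS.C) (t : ℕ) (ht : t < M.T) :
    (∑ ω : Traj M, probT IS (lift σ) γ t ω * theta t ω)
      = ∑ ω : Traj M, probT IS σ γ t ω * theta t ω := by
  have h1 : (∑ ω : Traj M, probT IS (mid σ) γ t ω * theta t ω)
      = ∑ ω : Traj M, probT IS σ γ t ω * theta t ω :=
    assembly1 IS σ (mid σ) rfl rfl rfl rfl γ t ht
  have h2 : (∑ ω : Traj M, probT IS (lift σ) γ t ω * theta t ω)
      = ∑ ω : Traj M, probT IS (mid σ) γ t ω * theta t ω :=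
    assembly2 IS (mid σ) (lift σ) rfl rfl rfl rfl γ t ht
  rw [h2, h1]

lemma J_lift (σ : TeamStrategy M) (γ : AdvStrategy M IS.C) :
    J (lift σ) γ IS.infoCp = J σ γ IS.infoCp := by
  unfold J
  have e : ∀ υ : TeamStrategy M,
      (∑ ω : Traj M, prob υ γ IS.infoCp ω * totalCost ω)
        = ∑ t ∈ Finset.range M.T, ∑ ω : Traj M, prob υ γ IS.infoCp ω * theta t ω := by
    intro υ
    rw [Finset.sum_congr rfl fun ω (_ : ω ∈ Finset.univ) => by
      rw [totalCost_eq ω, Finset.mul_sum]]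
    exact Finset.sum_comm
  rw [e, e]
  refine Finset.sum_congr rfl fun t ht => ?_
  rw [Finset.mem_range] at ht
  rw [tel IS (lift σ) γ t ht, tel IS σ γ t ht, probT_theta_lift IS σ γ t ht]

end Lift
end TA


namespace TA
noncomputable section Final
variable {M : Model} (IS : InfoStructure M)

lemma mul01 {a b : ℝ} (ha0 : 0 ≤ a) (ha1 : a ≤ 1) (hb0 : 0 ≤ b) (hb1 : b ≤ 1) :
    0 ≤ a * b ∧ a * b ≤ 1 :=
  ⟨mul_nonneg ha0 hb0, by nlinarith⟩

lemma prob_nonneg {A : Type _} (σ : TeamStrategy M) (γ : AdvStrategy M A)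
    (iap : ℕ → Traj M → A) (ω : Traj M) : 0 ≤ prob σ γ iap ω := by
  unfold prob
  have hp1 : (0:ℝ) ≤ ∏ s ∈ Finset.range M.T,
      (σ.f1 s (info1 s ω) (M1v ω s) * σ.f2 s (info2 s ω) (M2v ω s) *
        zKer M (X0v ω s) (Mv ω s) (X1v ω s, X2v ω s) (Zv ω s) *
        M.obs (Zv ω s) (Mv ω s) (X0v ω s) (Yv ω s) *
        σ.g1 s (info1p s ω) (U1v ω s) * σ.g2 s (info2p s ω) (U2v ω s) *
        γ.ga s (iap s ω) (UAv ω s)) := by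
    refine Finset.prod_nonneg fun s _ => ?_
    exact mul_nonneg (mul_nonneg (mul_nonneg (mul_nonneg (mul_nonneg (mul_nonneg
      (σ.f1_nonneg _ _ _) (σ.f2_nonneg _ _ _)) (zKer_nonneg' _ _ _ _))
      (M.obs_nonneg _ _ _ _)) (σ.g1_nonneg _ _ _)) (σ.g2_nonneg _ _ _)) (γ.ga_nonneg _ _ _)
  have hp2 : (0:ℝ) ≤ ∏ s ∈ Finset.range (M.T - 1),
      (M.trans0 (X0v ω s) (UAv ω s) (X0v ω (s+1)) *
        M.trans1 (X0v ω s) (X1v ω s) (U1v ω s) (X1v ω (s+1)) *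
        M.trans2 (X0v ω s) (X2v ω s) (U2v ω s) (X2v ω (s+1))) :=
    Finset.prod_nonneg fun s _ => mul_nonneg (mul_nonneg (M.trans0_nonneg _ _ _)
      (M.trans1_nonneg _ _ _ _)) (M.trans2_nonneg _ _ _ _)
  exact mul_nonneg (mul_nonneg (mul_nonneg (mul_nonneg (M.init0_nonneg _)
    (M.init1_nonneg _)) (M.init2_nonneg _)) hp1) hp2

lemma prob_le_one {A : Type _} (σ : TeamStrategy M) (γ : AdvStrategy M A)
    (iap : ℕ → Traj M → A) (ω : Traj M) : prob σ γ iap ω ≤ 1 := by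
  unfold prob
  have hstep : ∀ s, (0:ℝ) ≤ σ.f1 s (info1 s ω) (M1v ω s) * σ.f2 s (info2 s ω) (M2v ω s) *
        zKer M (X0v ω s) (Mv ω s) (X1v ω s, X2v ω s) (Zv ω s) *
        M.obs (Zv ω s) (Mv ω s) (X0v ω s) (Yv ω s) *
        σ.g1 s (info1p s ω) (U1v ω s) * σ.g2 s (info2p s ω) (U2v ω s) *
        γ.ga s (iap s ω) (UAv ω s) ∧
      σ.f1 s (info1 s ω) (M1v ω s) * σ.f2 s (info2 s ω) (M2v ω s) *
        zKer M (X0v ω s) (Mv ω s) (X1v ω s, X2v ω s) (Zv ω s) *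
        M.obs (Zv ω s) (Mv ω s) (X0v ω s) (Yv ω s) *
        σ.g1 s (info1p s ω) (U1v ω s) * σ.g2 s (info2p s ω) (U2v ω s) *
        γ.ga s (iap s ω) (UAv ω s) ≤ 1 := by
    intro s
    have h1 := mul01 (σ.f1_nonneg s (info1 s ω) (M1v ω s)) (f1_le_one σ s (info1 s ω) (M1v ω s))
      (σ.f2_nonneg s (info2 s ω) (M2v ω s)) (f2_le_one σ s (info2 s ω) (M2v ω s))
    have h2 := mul01 h1.1 h1.2
      (zKer_nonneg' (X0v ω s) (Mv ω s) (X1v ω s, X2v ω s) (Zv ω s))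
      (zKer_le_one (X0v ω s) (Mv ω s) (X1v ω s, X2v ω s) (Zv ω s))
    have h3 := mul01 h2.1 h2.2 (M.obs_nonneg (Zv ω s) (Mv ω s) (X0v ω s) (Yv ω s))
      (obs_le_one (Zv ω s) (Mv ω s) (X0v ω s) (Yv ω s))
    have h4 := mul01 h3.1 h3.2 (σ.g1_nonneg s (info1p s ω) (U1v ω s))
      (g1_le_one σ s (info1p s ω) (U1v ω s))
    have h5 := mul01 h4.1 h4.2 (σ.g2_nonneg s (info2p s ω) (U2v ω s))
      (g2_le_one σ s (info2p s ω) (U2v ω s))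
    exact mul01 h5.1 h5.2 (γ.ga_nonneg s (iap s ω) (UAv ω s)) (ga_le_one γ s (iap s ω) (UAv ω s))
  have htr : ∀ s, (0:ℝ) ≤ M.trans0 (X0v ω s) (UAv ω s) (X0v ω (s+1)) *
        M.trans1 (X0v ω s) (X1v ω s) (U1v ω s) (X1v ω (s+1)) *
        M.trans2 (X0v ω s) (X2v ω s) (U2v ω s) (X2v ω (s+1)) ∧
      M.trans0 (X0v ω s) (UAv ω s) (X0v ω (s+1)) *
        M.trans1 (X0v ω s) (X1v ω s) (U1v ω s) (X1v ω (s+1)) *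
        M.trans2 (X0v ω s) (X2v ω s) (U2v ω s) (X2v ω (s+1)) ≤ 1 := by
    intro s
    have h1 := mul01 (M.trans0_nonneg (X0v ω s) (UAv ω s) (X0v ω (s+1)))
      (trans0_le_one (X0v ω s) (UAv ω s) (X0v ω (s+1)))
      (M.trans1_nonneg (X0v ω s) (X1v ω s) (U1v ω s) (X1v ω (s+1)))
      (trans1_le_one (X0v ω s) (X1v ω s) (U1v ω s) (X1v ω (s+1)))
    exact mul01 h1.1 h1.2 (M.trans2_nonneg (X0v ω s) (X2v ω s) (U2v ω s) (X2v ω (s+1)))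
      (trans2_le_one (X0v ω s) (X2v ω s) (U2v ω s) (X2v ω (s+1)))
  have hp1pos := Finset.prod_nonneg (s := Finset.range M.T) (fun s _ => (hstep s).1)
  have hp1le := Finset.prod_le_one (s := Finset.range M.T) (fun s _ => (hstep s).1)
    (fun s _ => (hstep s).2)
  have hp2pos := Finset.prod_nonneg (s := Finset.range (M.T - 1)) (fun s _ => (htr s).1)
  have hp2le := Finset.prod_le_one (s := Finset.range (M.T - 1)) (fun s _ => (htr s).1)
    (fun s _ => (htr s).2)
  have hi := mul01 (M.init0_nonneg (X0v ω 0)) (init0_le_one _) (M.init1_nonneg (X1v ω 0))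
    (init1_le_one _)
  have hi2 := mul01 hi.1 hi.2 (M.init2_nonneg (X2v ω 0)) (init2_le_one _)
  have h3 := mul01 hi2.1 hi2.2 hp1pos hp1le
  exact (mul01 h3.1 h3.2 hp2pos hp2le).2

/-- Uniform bound on the expected cost. -/
def Bd (M : Model) : ℝ := ∑ ω : Traj M, |totalCost ω|

lemma J_abs_le {A : Type _} (σ : TeamStrategy M) (γ : AdvStrategy M A)
    (iap : ℕ → Traj M → A) : |J σ γ iap| ≤ Bd M := by
  unfold J Bd
  calc |∑ ω : Traj M, prob σ γ iap ω * totalCost ω|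
      ≤ ∑ ω : Traj M, |prob σ γ iap ω * totalCost ω| := Finset.abs_sum_le_sum_abs _ _
    _ ≤ ∑ ω : Traj M, |totalCost ω| := by
        refine Finset.sum_le_sum fun ω _ => ?_
        rw [abs_mul, abs_of_nonneg (prob_nonneg σ γ iap ω)]
        calc prob σ γ iap ω * |totalCost ω| ≤ 1 * |totalCost ω| :=
              mul_le_mul_of_nonneg_right (prob_le_one σ γ iap ω) (abs_nonneg _)
          _ = |totalCost ω| := one_mul _

/-- The uniform adversary strategy. -/
def advU (M : Model) (A : Type _) : AdvStrategy M A where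
  ga := fun _ _ _ => (Fintype.card M.Ua : ℝ)⁻¹
  ga_nonneg := fun _ _ _ => by positivity
  ga_sum := fun _ _ => by
    rw [Finset.sum_const, Finset.card_univ, nsmul_eq_mul]
    have : (0:ℝ) < (Fintype.card M.Ua : ℝ) := by
      have : 0 < Fintype.card M.Ua := Fintype.card_pos
      exact_mod_cast this
    field_simp

instance (A : Type _) : Nonempty (AdvStrategy M A) := ⟨advU M A⟩

/-- The uniform team strategy. -/
def teamU (M : Model) : TeamStrategy M where
  f1 := fun _ _ _ => (2:ℝ)⁻¹
  f2 := fun _ _ _ => (2:ℝ)⁻¹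
  g1 := fun _ _ _ => (Fintype.card M.U1 : ℝ)⁻¹
  g2 := fun _ _ _ => (Fintype.card M.U2 : ℝ)⁻¹
  f1_nonneg := fun _ _ _ => by norm_num
  f2_nonneg := fun _ _ _ => by norm_num
  g1_nonneg := fun _ _ _ => by positivity
  g2_nonneg := fun _ _ _ => by positivity
  f1_sum := fun _ _ => by simp
  f2_sum := fun _ _ => by simp
  g1_sum := fun _ _ => by
    rw [Finset.sum_const, Finset.card_univ, nsmul_eq_mul]
    have : (0:ℝ) < (Fintype.card M.U1 : ℝ) := by
      have : 0 < Fintype.card M.U1 := Fintype.card_pos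
      exact_mod_cast this
    field_simp
  g2_sum := fun _ _ => by
    rw [Finset.sum_const, Finset.card_univ, nsmul_eq_mul]
    have : (0:ℝ) < (Fintype.card M.U2 : ℝ) := by
      have : 0 < Fintype.card M.U2 := Fintype.card_pos
      exact_mod_cast this
    field_simp

instance : Nonempty (TeamStrategy M) := ⟨teamU M⟩

instance : Nonempty {σ : TeamStrategy M // Simplified IS σ} :=
  ⟨⟨lift (teamU M), lift_simplified IS (teamU M)⟩⟩

lemma supJ_bddAbove (σ : TeamStrategy M) :
    BddAbove (Set.range fun γ : AdvStrategy M IS.C => J σ γ IS.infoCp) := by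
  refine ⟨Bd M, ?_⟩
  rintro x ⟨γ, rfl⟩
  exact le_trans (le_abs_self _) (J_abs_le σ γ IS.infoCp)

lemma supJ_le (σ : TeamStrategy M) :
    (⨆ γ : AdvStrategy M IS.C, J σ γ IS.infoCp) ≤ Bd M :=
  ciSup_le fun γ => le_trans (le_abs_self _) (J_abs_le σ γ IS.infoCp)

lemma supJ_ge (σ : TeamStrategy M) :
    -(Bd M) ≤ ⨆ γ : AdvStrategy M IS.C, J σ γ IS.infoCp := by
  refine le_trans ?_ (le_ciSup (supJ_bddAbove IS σ) (advU M IS.C))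
  have := J_abs_le σ (advU M IS.C) IS.infoCp
  have h2 := neg_abs_le (J σ (advU M IS.C) IS.infoCp)
  linarith

lemma supJ_lift (σ : TeamStrategy M) :
    (⨆ γ : AdvStrategy M IS.C, J (lift σ) γ IS.infoCp)
      = ⨆ γ : AdvStrategy M IS.C, J σ γ IS.infoCp :=
  iSup_congr fun γ => J_lift IS σ γ

lemma SuG_eq_SuGs : SuG M IS = SuGs M IS := by
  have hbb : BddBelow (Set.range fun σ : TeamStrategy M =>
      ⨆ γ : AdvStrategy M IS.C, J σ γ IS.infoCp) := by
    refine ⟨-(Bd M), ?_⟩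
    rintro x ⟨σ, rfl⟩
    exact supJ_ge IS σ
  have hbbs : BddBelow (Set.range fun σ : {σ : TeamStrategy M // Simplified IS σ} =>
      ⨆ γ : AdvStrategy M IS.C, J σ.1 γ IS.infoCp) := by
    refine ⟨-(Bd M), ?_⟩
    rintro x ⟨σ, rfl⟩
    exact supJ_ge IS σ.1
  apply le_antisymm
  · unfold SuG SuGs
    refine le_ciInf fun σ' => ?_
    exact ciInf_le hbb σ'.1
  · unfold SuG SuGs
    refine le_ciInf fun σ => ?_
    have h1 : (⨅ σ' : {σ : TeamStrategy M // Simplified IS σ},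
        ⨆ γ : AdvStrategy M IS.C, J σ'.1 γ IS.infoCp)
        ≤ ⨆ γ : AdvStrategy M IS.C, J (lift σ) γ IS.infoCp :=
      ciInf_le hbbs ⟨lift σ, lift_simplified IS σ⟩
    rwa [supJ_lift IS σ] at h1

end Final
end TA


namespace TA

/-- Corollary 1 of the paper: if `(f*,g*)` is a min-max strategy for the
team in the simplified game `G_s`, then it is a min-max strategy in the original game `G`,
and the min-max values of `G` and `G_s` coincide. -/
theorem corollary1 (M : Model) (IS : InfoStructure M)
    (σs : TeamStrategy M) (hσs : Simplified IS σs)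
    (hmin : (⨆ γ : AdvStrategy M IS.C, J σs γ IS.infoCp) = SuGs M IS) :
    (⨆ γ : AdvStrategy M IS.C, J σs γ IS.infoCp) = SuG M IS ∧
    SuG M IS = SuGs M IS := by
  have heq : SuG M IS = SuGs M IS := SuG_eq_SuGs IS
  exact ⟨hmin.trans heq.symm, heq⟩

end TA
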